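/- arXiv:2203.04216 — 14 statements merged into one kernel-verified Lean document; each statement's English description precedes it below -/
import Mathlib

section
/- For positive integers i and j, gcd(2^i + 1, 2^j + 1) = 1 if and only if the 2-adic valuations of i and j are different. -/
lemma lemA (n k : ℕ) (hk : 0 < k) (h1 : n ∣ 2 * k) (h2 : ¬ n ∣ k) :
    padicValNat 2 n = padicValNat 2 k + 1 := by
  obtain ⟨t, ht⟩ := h1
  have hn0 : n ≠ 0 := by rintro rfl; simp at ht; omega
  have ht0 : t ≠ 0 := by rintro rfl; simp at ht; omega
  have htodd : ¬ 2 ∣ t := by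
    rintro ⟨s, rfl⟩
    refine h2 ⟨s, ?_⟩
    rw [show n * (2 * s) = 2 * (n * s) by ring] at ht
    omega
  have hvt : padicValNat 2 t = 0 := padicValNat.eq_zero_of_not_dvd htodd
  have h := congrArg (padicValNat 2) ht
  rw [padicValNat.mul (by norm_num) hk.ne', padicValNat.mul hn0 ht0, hvt,
    padicValNat.self one_lt_two] at h
  omega

theorem stmt_0 (i j : ℕ) (hi : 0 < i) (hj : 0 < j) :
    Nat.gcd (2 ^ i + 1) (2 ^ j + 1) = 1 ↔ padicValNat 2 i ≠ padicValNat 2 j := by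
  constructor
  · intro h heq
    set d := Nat.gcd i j with hd
    have hd0 : 0 < d := Nat.gcd_pos_of_pos_left j hi
    have hvd : padicValNat 2 d = padicValNat 2 i := by
      have h1 : padicValNat 2 d ≤ padicValNat 2 i :=
        (padicValNat_dvd_iff_le hi.ne').mp (pow_padicValNat_dvd.trans (Nat.gcd_dvd_left i j))
      have h2 : padicValNat 2 i ≤ padicValNat 2 d := by
        refine (padicValNat_dvd_iff_le hd0.ne').mp (Nat.dvd_gcd pow_padicValNat_dvd ?_)
        rw [heq]; exact pow_padicValNat_dvd
      omega
    have key : ∀ m : ℕ, 0 < m → padicValNat 2 m = padicValNat 2 i → d ∣ m →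
        (2 ^ d + 1) ∣ (2 ^ m + 1) := by
      intro m hm hv hdm
      obtain ⟨c, hc⟩ := hdm
      have hc0 : c ≠ 0 := by rintro rfl; omega
      have hvc : padicValNat 2 c = 0 := by
        have := congrArg (padicValNat 2) hc
        rw [padicValNat.mul hd0.ne' hc0] at this
        omega
      have hcodd : Odd c := by
        rcases Nat.even_or_odd c with he | ho
        · exfalso
          obtain ⟨s, rfl⟩ := he
          have : (1:ℕ) ≤ padicValNat 2 (s + s) :=
            one_le_padicValNat_of_dvd (by omega) ⟨s, by ring⟩
          omega
        · exact ho
      have hmod : ((2:ℤ) ^ d) ≡ -1 [ZMOD ((2:ℤ)^d + 1)] :=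
        Int.ModEq.symm (Int.modEq_iff_dvd.mpr ⟨1, by ring⟩)
      have hpow := hmod.pow c
      rw [hcodd.neg_one_pow, ← pow_mul, ← hc] at hpow
      have hdvd : ((2:ℤ)^d + 1) ∣ ((2:ℤ)^m + 1) := by
        have := (hpow.add_right 1)
        simpa using (Int.ModEq.dvd this.symm)
      have hcast : ((2^d+1 : ℕ) : ℤ) ∣ ((2^m+1 : ℕ) : ℤ) := by push_cast; exact hdvd
      exact_mod_cast hcast
    have h1 := key i hi rfl (Nat.gcd_dvd_left i j)
    have h2 := key j hj heq.symm (Nat.gcd_dvd_right i j)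
    have hdg : (2 ^ d + 1) ∣ Nat.gcd (2 ^ i + 1) (2 ^ j + 1) := Nat.dvd_gcd h1 h2
    rw [h] at hdg
    have := Nat.le_of_dvd one_pos hdg
    have : 2 ≤ 2 ^ d := Nat.one_lt_two_pow_iff.mpr hd0.ne'
    omega
  · intro h
    by_contra hg
    have pp : Nat.Prime ((Nat.gcd (2 ^ i + 1) (2 ^ j + 1)).minFac) := Nat.minFac_prime hg
    set p := (Nat.gcd (2 ^ i + 1) (2 ^ j + 1)).minFac with hp
    have hpi : p ∣ 2 ^ i + 1 := (Nat.minFac_dvd _).trans (Nat.gcd_dvd_left _ _)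
    have hpj : p ∣ 2 ^ j + 1 := (Nat.minFac_dvd _).trans (Nat.gcd_dvd_right _ _)
    have hp2 : p ≠ 2 := by
      intro hpe
      rw [hpe] at hpi
      obtain ⟨s, hs⟩ := hpi
      have : 2 ∣ 2 ^ i := dvd_pow_self 2 hi.ne'
      omega
    haveI := Fact.mk pp
    have hord : ∀ m : ℕ, 0 < m → p ∣ 2 ^ m + 1 →
        padicValNat 2 (orderOf (2 : ZMod p)) = padicValNat 2 m + 1 := by
      intro m hm hpm
      have hzero : ((2:ZMod p) ^ m + 1) = 0 := by
        have := (ZMod.natCast_eq_zero_iff (2 ^ m + 1) p).mpr hpm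
        push_cast at this
        exact this
      have hneg : (2:ZMod p) ^ m = -1 := by linear_combination hzero
      apply lemA _ _ hm
      · apply orderOf_dvd_of_pow_eq_one
        rw [mul_comm, pow_mul, hneg]
        ring
      · intro hdvd
        have h1 : (2:ZMod p) ^ m = 1 := orderOf_dvd_iff_pow_eq_one.mp hdvd
        rw [hneg] at h1
        have h2 : (2 : ZMod p) = 0 := by linear_combination -h1
        rw [show ((2:ZMod p)) = ((2:ℕ):ZMod p) by push_cast; ring,
          ZMod.natCast_eq_zero_iff] at h2
        exact hp2 ((Nat.prime_dvd_prime_iff_eq pp Nat.prime_two).mp h2)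
    have e1 := hord i hi hpi
    have e2 := hord j hj hpj
    exact h (by omega)
end

section
/- For positive integers i and j, gcd(2^i - 1, 2^j + 1) = 1 if and only if the 2-adic valuation of i is at most the 2-adic valuation of j. -/
theorem stmt_1 (i j : ℕ) (hi : 0 < i) (hj : 0 < j) :
    Nat.gcd (2 ^ i - 1) (2 ^ j + 1) = 1 ↔ padicValNat 2 i ≤ padicValNat 2 j := by
  have h2 : Fact (Nat.Prime 2) := ⟨Nat.prime_two⟩
  constructor
  · -- contrapositive: if v2 j < v2 i then some m > 1 divides both
    intro hgcd
    by_contra hle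
    push_neg at hle
    set e := padicValNat 2 j with he
    have h2e : (2:ℕ) ^ e ∣ j := pow_padicValNat_dvd
    have hqodd : Odd (j / 2 ^ e) := by
      rcases Nat.even_or_odd (j / 2 ^ e) with hev | hod
      · exfalso
        obtain ⟨c, hc⟩ := hev
        have : (2:ℕ) ^ (e+1) ∣ j := by
          obtain ⟨q, hq⟩ := h2e
          have hq' : j / 2 ^ e = q := by
            rw [hq]; exact Nat.mul_div_cancel_left q (by positivity)
          refine ⟨c, ?_⟩
          rw [hq, (by omega : q = c + c)]; ring
        have := (padicValNat_dvd_iff_le (p := 2) (by omega)).mp this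
        omega
      · exact hod
    have hji : j = 2 ^ e * (j / 2 ^ e) := (Nat.mul_div_cancel' h2e).symm
    set m := 2 ^ 2 ^ e + 1 with hm
    have hmj : m ∣ 2 ^ j + 1 := by
      have := hqodd.nat_add_dvd_pow_add_pow (2 ^ 2 ^ e) 1
      simpa [← pow_mul, ← hji] using this
    have hmi : m ∣ 2 ^ i - 1 := by
      have h1 : (2:ℕ) ^ (e+1) ∣ i := (padicValNat_dvd_iff_le (by omega)).mpr (by omega)
      obtain ⟨t, ht⟩ := h1
      have h3 : m ∣ 2 ^ 2 ^ (e+1) - 1 := by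
        have hcast : ((2 ^ 2 ^ (e+1) - 1 : ℕ) : ℤ) = (2:ℤ) ^ 2 ^ (e+1) - 1 := by
          rw [Nat.cast_sub Nat.one_le_two_pow]; push_cast; ring
        have hdvd : (m:ℤ) ∣ ((2 ^ 2 ^ (e+1) - 1 : ℕ) : ℤ) := by
          rw [hcast]
          refine ⟨2 ^ 2 ^ e - 1, ?_⟩
          have hexp : (2:ℤ) ^ 2 ^ (e+1) = ((2:ℤ) ^ 2 ^ e) ^ 2 := by
            rw [← pow_mul, pow_succ]
          rw [hexp, hm]
          push_cast
          ring
        exact_mod_cast hdvd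
      have h5 : (2:ℕ) ^ 2 ^ (e+1) - 1 ∣ 2 ^ i - 1 := by
        have := Nat.sub_dvd_pow_sub_pow (2 ^ 2 ^ (e+1)) 1 t
        simpa [← pow_mul, ← ht] using this
      exact h3.trans h5
    have hdg : m ∣ Nat.gcd (2 ^ i - 1) (2 ^ j + 1) := Nat.dvd_gcd hmi hmj
    rw [hgcd] at hdg
    have h6 : m ≤ 1 := Nat.le_of_dvd one_pos hdg
    have : (2:ℕ) ≤ 2 ^ 2 ^ e := Nat.one_lt_two_pow_iff.mpr (by positivity)
    omega
  · -- if v2 i ≤ v2 j then no common prime divisor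
    intro hle
    by_contra hgcd
    set g := Nat.gcd (2 ^ i - 1) (2 ^ j + 1) with hg
    have hg0 : 0 < g := Nat.gcd_pos_of_pos_right _ (by positivity)
    have hp : g.minFac.Prime := Nat.minFac_prime hgcd
    set p := g.minFac with hpdef
    have hpi : p ∣ 2 ^ i - 1 := (Nat.minFac_dvd g).trans (Nat.gcd_dvd_left _ _)
    have hpj : p ∣ 2 ^ j + 1 := (Nat.minFac_dvd g).trans (Nat.gcd_dvd_right _ _)
    have hpodd : p ≠ 2 := by
      intro h
      rw [h] at hpj
      have h1 : (2:ℕ) ∣ 2 ^ j := dvd_pow_self 2 hj.ne'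
      omega
    have hfp : Fact p.Prime := ⟨hp⟩
    have h2i : (2 : ZMod p) ^ i = 1 := by
      have h1 : (1:ℕ) ≤ 2 ^ i := Nat.one_le_two_pow
      have hcast : ((2 ^ i - 1 : ℕ) : ZMod p) = 0 := (ZMod.natCast_eq_zero_iff _ _).mpr hpi
      rw [Nat.cast_sub h1] at hcast
      push_cast at hcast
      linear_combination hcast
    have h2j : (2 : ZMod p) ^ j = -1 := by
      have hcast : ((2 ^ j + 1 : ℕ) : ZMod p) = 0 := (ZMod.natCast_eq_zero_iff _ _).mpr hpj
      push_cast at hcast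
      linear_combination hcast
    set d := orderOf (2 : ZMod p) with hd
    have hdi : d ∣ i := orderOf_dvd_of_pow_eq_one h2i
    have hd2j : d ∣ 2 * j :=
      orderOf_dvd_of_pow_eq_one (by rw [mul_comm, pow_mul, h2j, neg_one_sq])
    have hdj : ¬ d ∣ j := by
      intro h
      have h1 : (2 : ZMod p) ^ j = 1 := orderOf_dvd_iff_pow_eq_one.mp h
      rw [h2j] at h1
      haveI : Fact (2 < p) := ⟨lt_of_le_of_ne hp.two_le (Ne.symm hpodd)⟩
      exact ZMod.neg_one_ne_one h1
    have hd0 : d ≠ 0 := by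
      have hfin : IsOfFinOrder (2 : ZMod p) :=
        isOfFinOrder_iff_pow_eq_one.mpr ⟨i, hi, h2i⟩
      exact hfin.orderOf_pos.ne'
    have hvdi : padicValNat 2 d ≤ padicValNat 2 i := by
      rw [← padicValNat_dvd_iff_le hi.ne']
      exact (pow_padicValNat_dvd).trans hdi
    apply hdj
    set a := padicValNat 2 d with ha
    have h2a : (2:ℕ) ^ a ∣ d := pow_padicValNat_dvd
    have hdodd : ¬ 2 ∣ (d / 2 ^ a) := by
      intro h
      have h7 : (2:ℕ) ^ (a+1) ∣ d := by
        obtain ⟨c, hc⟩ := h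
        obtain ⟨q, hq⟩ := h2a
        have hq' : d / 2 ^ a = q := by
          rw [hq]; exact Nat.mul_div_cancel_left q (by positivity)
        exact ⟨c, by rw [hq, (by omega : q = 2 * c)]; ring⟩
      have := (padicValNat_dvd_iff_le (p := 2) hd0).mp h7
      omega
    have hcop : Nat.Coprime 2 (d / 2 ^ a) := Nat.prime_two.coprime_iff_not_dvd.mpr hdodd
    have hdd : d = 2 ^ a * (d / 2 ^ a) := (Nat.mul_div_cancel' h2a).symm
    have hodd_dvd : (d / 2 ^ a) ∣ j := by
      have h1 : (d / 2 ^ a) ∣ j * 2 := by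
        rw [mul_comm]; exact dvd_trans (Dvd.intro_left _ hdd.symm) hd2j
      exact (Nat.Coprime.dvd_of_dvd_mul_right (Nat.coprime_comm.mp hcop) h1)
    have hpow_dvd : (2:ℕ) ^ a ∣ j :=
      (pow_dvd_pow 2 (le_trans hvdi hle)).trans pow_padicValNat_dvd
    rw [hdd]
    exact Nat.Coprime.mul_dvd_of_dvd_of_dvd
      (Nat.Coprime.pow_left _ hcop) hpow_dvd hodd_dvd
end

section
/- Let q be an even prime power, let α ∈ F_{q^2} and β ∈ F_q^*, and set A(X) = αX^2 + βX + α^q. Then the following are equivalent: (1) A has at least one root γ with γ^{q+1} = 1; (2) A has two distinct roots γ with γ^{q+1} = 1; (3) Tr_{F_q/F_2}(α^{q+1}/β^2) = 1. -/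
lemma tele_aux {F : Type} [Field F] [CharP F 2] (y : F) (m : ℕ) :
    ∑ i ∈ Finset.range m, (y ^ 2 + y) ^ 2 ^ i = y ^ 2 ^ m + y := by
  induction m with
  | zero => simp [CharTwo.add_self_eq_zero]
  | succ m ih =>
    rw [Finset.sum_range_succ, ih]
    have h1 : (y ^ 2 + y) ^ 2 ^ m = (y ^ 2) ^ 2 ^ m + y ^ 2 ^ m := add_pow_char_pow ..
    have h2 : (y ^ 2) ^ 2 ^ m = y ^ 2 ^ (m + 1) := by
      rw [← pow_mul, pow_succ, mul_comm]
    have h3 := CharTwo.add_self_eq_zero (y ^ 2 ^ m)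
    linear_combination h1 + h2 + h3

lemma AS_exists {F : Type} [Field F] [Fintype F] [CharP F 2] {k : ℕ} (hk : 0 < k)
    (hcard : Fintype.card F = 2 ^ (2 * k)) (c : F) (hc : c ^ 2 ^ k = c) :
    ∃ y : F, y ^ 2 + y = c := by
  classical
  have htwo : (2 : F) = 0 := by exact_mod_cast CharP.cast_eq_zero F 2
  set ψ : F → F := fun x => ∑ i ∈ Finset.range (2 * k), x ^ 2 ^ i with hψ
  have hψc : ψ c = 0 := by
    have hsh : ∀ i : ℕ, c ^ 2 ^ (k + i) = c ^ 2 ^ i := by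
      intro i; rw [pow_add, pow_mul, hc]
    have : ψ c = (∑ i ∈ Finset.range k, c ^ 2 ^ i) + ∑ i ∈ Finset.range k, c ^ 2 ^ (k + i) := by
      rw [hψ]; simp only [two_mul, Finset.sum_range_add]
    rw [this, Finset.sum_congr rfl (fun i _ => hsh i)]
    exact CharTwo.add_self_eq_zero _
  have hψadd : ∀ a b : F, ψ (a + b) = ψ a + ψ b := by
    intro a b
    simp only [hψ]
    rw [← Finset.sum_add_distrib]
    exact Finset.sum_congr rfl fun i _ => add_pow_char_pow ..
  have hφker : ∀ x : F, ψ (x ^ 2 + x) = 0 := by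
    intro x
    rw [hψ]
    simp only []
    rw [tele_aux]
    have : x ^ 2 ^ (2 * k) = x := by rw [← hcard]; exact FiniteField.pow_card x
    rw [this]; exact CharTwo.add_self_eq_zero x
  have hc₀ : ∃ c₀ : F, ψ c₀ ≠ 0 := by
    by_contra h
    push_neg at h
    set P : Polynomial F := ∑ i ∈ Finset.range (2 * k), Polynomial.X ^ 2 ^ i with hP
    have hev : ∀ x : F, P.eval x = 0 := by
      intro x
      have := h x
      simpa [hP, Polynomial.eval_finset_sum, hψ] using this
    have hdeg : P.natDegree < Fintype.card F := by
      have h1 : P.natDegree ≤ 2 ^ (2 * k - 1) := by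
        apply Polynomial.natDegree_sum_le_of_forall_le
        intro i hi
        rw [Polynomial.natDegree_X_pow]
        exact Nat.pow_le_pow_right (by norm_num) (by
          have := Finset.mem_range.mp hi; omega)
      rw [hcard]
      calc P.natDegree ≤ 2 ^ (2 * k - 1) := h1
        _ < 2 ^ (2 * k) := Nat.pow_lt_pow_right (by norm_num) (by omega)
    have hP0 : P = 0 :=
      Polynomial.eq_zero_of_natDegree_lt_card_of_eval_eq_zero' P Finset.univ
        (fun i _ => hev i) (by simpa [Finset.card_univ] using hdeg)
    have hco : P.coeff 1 = 1 := by
      rw [hP, Polynomial.finset_sum_coeff]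
      simp only [Polynomial.coeff_X_pow]
      rw [Finset.sum_eq_single 0]
      · norm_num
      · intro i hi hne
        have : 2 ^ i ≠ 1 := (Nat.one_lt_two_pow_iff.mpr hne).ne'
        simp only [this, if_neg (fun h : (1:ℕ) = 2 ^ i => this h.symm)]
      · intro h0
        exact absurd (Finset.mem_range.mpr (by omega)) h0
    rw [hP0] at hco
    simp at hco
  obtain ⟨c₀, hc₀⟩ := hc₀
  set S := Finset.univ.image (fun x : F => x ^ 2 + x) with hS
  set T := Finset.univ.filter (fun x : F => ψ x = 0) with hT
  have hST : S ⊆ T := by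
    intro a ha
    rw [hS, Finset.mem_image] at ha
    obtain ⟨x, _, rfl⟩ := ha
    rw [hT, Finset.mem_filter]
    exact ⟨Finset.mem_univ _, hφker x⟩
  have hT2 : 2 * T.card ≤ Fintype.card F := by
    have hinj : T.card ≤ (Finset.univ.filter (fun x : F => ¬ ψ x = 0)).card := by
      apply Finset.card_le_card_of_injOn (fun x => x + c₀)
      · intro x hx
        rw [hT, Finset.mem_coe, Finset.mem_filter] at hx
        rw [Finset.mem_coe, Finset.mem_filter]
        refine ⟨Finset.mem_univ _, ?_⟩
        rw [hψadd, hx.2, zero_add]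
        exact hc₀
      · intro a _ b _ hab
        exact add_right_cancel hab
    have hsplit := Finset.card_filter_add_card_filter_not
      (s := (Finset.univ : Finset F)) (p := fun x : F => ψ x = 0)
    rw [Finset.card_univ, ← hT] at hsplit
    omega
  have hS2 : Fintype.card F ≤ 2 * S.card := by
    have := Finset.card_le_mul_card_image (f := fun x : F => x ^ 2 + x) Finset.univ 2 ?_
    · simpa [Finset.card_univ] using this
    · intro b _
      rcases Finset.eq_empty_or_nonempty {a ∈ Finset.univ | a ^ 2 + a = b} with he | ⟨x₀, hx₀⟩
      · simp [he]
      · have hsub : {a ∈ (Finset.univ : Finset F) | a ^ 2 + a = b} ⊆ {x₀, x₀ + 1} := by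
          intro x hx
          rw [Finset.mem_filter] at hx hx₀
          have hd : (x + x₀) ^ 2 = x + x₀ := by
            rw [CharTwo.add_sq]
            linear_combination -hx.2 + hx₀.2 + (x ^ 2 - x₀) * htwo
          have : (x + x₀) * ((x + x₀) + 1) = 0 := by
            linear_combination hd + (x + x₀) * htwo
          rcases mul_eq_zero.mp this with h0 | h1
          · have : x = x₀ := by linear_combination h0 - x₀ * htwo
            simp [this]
          · have : x = x₀ + 1 := by linear_combination h1 - (x₀ + 1) * htwo
            simp [this]
        calc {a ∈ (Finset.univ : Finset F) | a ^ 2 + a = b}.card ≤ ({x₀, x₀ + 1} : Finset F).card :=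
              Finset.card_le_card hsub
          _ ≤ 2 := Finset.card_insert_le _ _ |>.trans (by simp)
  have hTS : S = T := Finset.eq_of_subset_of_card_le hST (by omega)
  have hcT : c ∈ T := by
    rw [hT, Finset.mem_filter]; exact ⟨Finset.mem_univ _, hψc⟩
  rw [← hTS, hS, Finset.mem_image] at hcT
  obtain ⟨y, _, hy⟩ := hcT
  exact ⟨y, hy⟩

/-- Lemma 2.3: for `q` even, `A(X) = αX² + βX + α^q` with `β ∈ F_q^*`, the following are
equivalent: (1) `A` has a root in `μ_{q+1}`, (2) `A` has two distinct roots in `μ_{q+1}`,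
(3) `Tr_{F_q/F_2}(α^{q+1}/β²) = 1`. -/
theorem stmt_3 (k : ℕ) (hk : 0 < k) (q : ℕ) (hq : q = 2 ^ k)
    (F : Type) [Field F] [Fintype F] (hF : Fintype.card F = q ^ 2)
    (α β : F) (hβ0 : β ≠ 0) (hβq : β ^ q = β) :
    ((∃ γ : F, α * γ ^ 2 + β * γ + α ^ q = 0 ∧ γ ^ (q + 1) = 1) ↔
      ∑ i ∈ Finset.range k, (α ^ (q + 1) / β ^ 2) ^ 2 ^ i = 1) ∧
    ((∃ γ₁ γ₂ : F, γ₁ ≠ γ₂ ∧ (α * γ₁ ^ 2 + β * γ₁ + α ^ q = 0 ∧ γ₁ ^ (q + 1) = 1) ∧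
        (α * γ₂ ^ 2 + β * γ₂ + α ^ q = 0 ∧ γ₂ ^ (q + 1) = 1)) ↔
      ∑ i ∈ Finset.range k, (α ^ (q + 1) / β ^ 2) ^ 2 ^ i = 1) := by
  have hq0 : 0 < q := by rw [hq]; positivity
  have hF2 : Fintype.card F = 2 ^ (2 * k) := by rw [hF, hq, ← pow_mul, mul_comm]
  obtain ⟨p, hp⟩ := CharP.exists F
  haveI := hp
  have hp2 : p = 2 := by
    obtain ⟨n, hpn, hcard⟩ := FiniteField.card F p
    have h1 : p ∣ 2 ^ (2 * k) := by
      rw [← hF2, hcard]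
      exact dvd_pow_self p n.pos.ne'
    exact (Nat.prime_dvd_prime_iff_eq hpn Nat.prime_two).mp (hpn.dvd_of_dvd_pow h1)
  subst hp2
  haveI : CharP F 2 := hp
  have htwo : (2 : F) = 0 := by exact_mod_cast CharP.cast_eq_zero F 2
  have hβ2 : β ^ 2 ≠ 0 := pow_ne_zero _ hβ0
  have hps : α ^ (q + 1) = α ^ q * α := pow_succ α q
  have key13 : (∃ γ : F, α * γ ^ 2 + β * γ + α ^ q = 0 ∧ γ ^ (q + 1) = 1) →
      ∑ i ∈ Finset.range k, (α ^ (q + 1) / β ^ 2) ^ 2 ^ i = 1 := by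
    rintro ⟨γ, hroot, hγ⟩
    have hγ0 : γ ≠ 0 := by
      rintro rfl
      rw [zero_pow (by omega)] at hγ
      exact one_ne_zero hγ.symm
    have hα : α ≠ 0 := by
      rintro rfl
      rw [zero_pow hq0.ne'] at hroot
      have hbg : β * γ = 0 := by linear_combination hroot
      rcases mul_eq_zero.mp hbg with h | h
      · exact hβ0 h
      · exact hγ0 h
    have hroot' : α * γ ^ 2 + β * γ = α ^ q := by
      linear_combination hroot - α ^ q * htwo
    have hγq : γ ^ q * γ = 1 := by rw [← pow_succ]; exact hγ
    set y := α * γ / β with hy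
    have hy2 : y ^ 2 + y = α ^ (q + 1) / β ^ 2 := by
      rw [hy, div_pow, div_add_div _ _ hβ2 hβ0, div_eq_div_iff (mul_ne_zero hβ2 hβ0) hβ2]
      linear_combination β ^ 3 * α * hroot' - β ^ 3 * hps
    have hyq : y ^ q = y + 1 := by
      have h2 : y ^ q * (β * γ) = (y + 1) * (β * γ) := by
        rw [hy, div_pow, mul_pow, hβq]
        field_simp
        have h3 : α ^ q * γ ^ q * γ = (α * γ + β) * γ := by
          linear_combination α ^ q * hγq - hroot'
        exact mul_right_cancel₀ hγ0 (by linear_combination h3)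
      exact mul_right_cancel₀ (mul_ne_zero hβ0 hγ0) h2
    calc ∑ i ∈ Finset.range k, (α ^ (q + 1) / β ^ 2) ^ 2 ^ i
        = ∑ i ∈ Finset.range k, (y ^ 2 + y) ^ 2 ^ i := by rw [hy2]
      _ = y ^ 2 ^ k + y := tele_aux y k
      _ = 1 := by rw [← hq, hyq]; linear_combination y * htwo
  have key32 : (∑ i ∈ Finset.range k, (α ^ (q + 1) / β ^ 2) ^ 2 ^ i = 1) →
      ∃ γ₁ γ₂ : F, γ₁ ≠ γ₂ ∧ (α * γ₁ ^ 2 + β * γ₁ + α ^ q = 0 ∧ γ₁ ^ (q + 1) = 1) ∧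
        (α * γ₂ ^ 2 + β * γ₂ + α ^ q = 0 ∧ γ₂ ^ (q + 1) = 1) := by
    intro htr
    have hα : α ≠ 0 := by
      rintro rfl
      rw [zero_pow (by omega : q + 1 ≠ 0), zero_div] at htr
      rw [Finset.sum_eq_zero (fun i _ => zero_pow (pow_ne_zero i two_ne_zero))] at htr
      exact zero_ne_one htr
    have hαq2 : α ^ (q * q) = α := by
      have hqq : q * q = 2 ^ (2 * k) := by rw [hq, ← pow_add, two_mul]
      rw [hqq, ← hF2]
      exact FiniteField.pow_card α
    have hc : (α ^ (q + 1) / β ^ 2) ^ 2 ^ k = α ^ (q + 1) / β ^ 2 := by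
      rw [← hq, div_pow, ← pow_mul, ← pow_mul]
      congr 1
      · rw [show (q + 1) * q = q * q + q by ring, pow_add, hαq2]
        rw [hps, mul_comm]
      · rw [mul_comm, pow_mul, hβq]
    obtain ⟨y, hy⟩ := AS_exists hk hF2 _ hc
    have hfr : (y ^ q) ^ 2 + y ^ q = y ^ 2 + y := by
      have h1 : (y ^ 2 + y) ^ 2 ^ k = y ^ 2 + y := by rw [hy, hc]
      have h2 : (y ^ 2 + y) ^ 2 ^ k = (y ^ 2) ^ 2 ^ k + y ^ 2 ^ k := add_pow_char_pow ..
      have h3 : (y ^ 2) ^ 2 ^ k = (y ^ 2 ^ k) ^ 2 := by rw [← pow_mul, ← pow_mul, mul_comm]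
      rw [← hq] at h1 h2 h3
      linear_combination h1 - h2 - h3
    have hu : (y ^ q + y) * (y ^ q + y + 1) = 0 := by
      linear_combination hfr + (y ^ q * y + y ^ 2 + y) * htwo
    have hyq : y ^ q = y + 1 := by
      rcases mul_eq_zero.mp hu with h0 | h1
      · exfalso
        rw [← hy] at htr
        rw [tele_aux, ← hq] at htr
        rw [show y ^ q + y = 0 from h0] at htr
        exact zero_ne_one htr
      · linear_combination h1 - (y + 1) * htwo
    have main : ∀ z : F, z ^ 2 + z = α ^ (q + 1) / β ^ 2 → z ^ q = z + 1 →
        α * (β * z / α) ^ 2 + β * (β * z / α) + α ^ q = 0 ∧ (β * z / α) ^ (q + 1) = 1 := by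
      intro z hz2 hzq
      have hz2' : β ^ 2 * (z ^ 2 + z) = α ^ (q + 1) := by
        rw [hz2]; field_simp
      constructor
      · field_simp
        linear_combination hz2' + hps + α * α ^ q * htwo
      · rw [pow_succ, div_pow, mul_pow, hβq, hzq]
        field_simp
        linear_combination hz2' + hps
    have hz2' : (y + 1) ^ 2 + (y + 1) = α ^ (q + 1) / β ^ 2 := by
      linear_combination hy + (y + 1) * htwo
    have hzq' : (y + 1) ^ q = (y + 1) + 1 := by
      have : (y + 1) ^ q = y ^ q + 1 := by
        rw [hq]
        rw [add_pow_char_pow, one_pow]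
      rw [this, hyq]
    have hne : β * y / α ≠ β * (y + 1) / α := by
      intro h
      field_simp at h
      exact one_ne_zero (by linear_combination h.symm : (1 : F) = 0)
    exact ⟨β * y / α, β * (y + 1) / α, hne, main y hy hyq, main (y + 1) hz2' hzq'⟩
  refine ⟨⟨key13, fun h => ?_⟩, ⟨fun ⟨γ₁, γ₂, _, h₁, _⟩ => key13 ⟨γ₁, h₁⟩, key32⟩⟩
  obtain ⟨γ₁, γ₂, _, h₁, _⟩ := key32 h
  exact ⟨γ₁, h₁⟩
end

section
/- Let q be a prime power, r a positive integer, and A(X) ∈ F_{q^2}[X]. Then the polynomial f(X) = X^r · A(X^{q-1}) permutes F_{q^2} if and only if gcd(r, q-1) = 1 and g_0(X) = X^r · A(X)^{q-1} permutes the set μ_{q+1} of (q+1)-th roots of unity in F_{q^2}. -/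
/-- Lemma 2.7: `X^r A(X^{q-1})` permutes `F_{q²}` iff `gcd(r, q-1) = 1` and
`X^r A(X)^{q-1}` permutes the `(q+1)`-th roots of unity. -/
theorem stmt_4 (p n : ℕ) (hp : p.Prime) (hn : 0 < n) (q : ℕ) (hq : q = p ^ n)
    (F : Type) [Field F] [Fintype F] (hF : Fintype.card F = q ^ 2)
    (r : ℕ) (hr : 0 < r) (A : Polynomial F) :
    Function.Bijective (fun x : F => x ^ r * A.eval (x ^ (q - 1))) ↔
      (Nat.gcd r (q - 1) = 1 ∧
        Set.BijOn (fun x : F => x ^ r * (A.eval x) ^ (q - 1))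
          {x : F | x ^ (q + 1) = 1} {x : F | x ^ (q + 1) = 1}) := by
  have hq2 : 2 ≤ q := by
    subst hq
    calc 2 ≤ p := hp.two_le
    _ ≤ p ^ n := Nat.le_self_pow hn.ne' p
  have hN : (q - 1) * (q + 1) = q ^ 2 - 1 := by
    rw [show q ^ 2 - 1 = q ^ 2 - 1 ^ 2 by norm_num, Nat.sq_sub_sq, mul_comm]
  have hNpos : 0 < q ^ 2 - 1 :=
    Nat.sub_pos_of_lt (Nat.one_lt_pow two_ne_zero (by omega))
  classical
  have hcardu : Fintype.card Fˣ = q ^ 2 - 1 := by rw [Fintype.card_units, hF]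
  have hpow : ∀ x : F, x ≠ 0 → x ^ (q ^ 2 - 1) = 1 := by
    intro x hx
    have := FiniteField.pow_card_sub_one_eq_one x hx
    rwa [hF] at this
  have hmem : ∀ x : F, x ≠ 0 → (x ^ (q - 1)) ^ (q + 1) = 1 := by
    intro x hx
    rw [← pow_mul, hN]
    exact hpow x hx
  have hkey : ∀ x : F, (x ^ r * A.eval (x ^ (q - 1))) ^ (q - 1) =
      (x ^ (q - 1)) ^ r * (A.eval (x ^ (q - 1))) ^ (q - 1) := by
    intro x
    rw [mul_pow, ← pow_mul, ← pow_mul, mul_comm r (q - 1)]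
  -- a generator of the unit group
  obtain ⟨ζ, hζ⟩ := IsCyclic.exists_generator (α := Fˣ)
  have hord : orderOf ζ = q ^ 2 - 1 := by
    have := orderOf_eq_card_of_forall_mem_zpowers hζ
    rwa [Nat.card_eq_fintype_card, hcardu] at this
  -- surjectivity of the (q-1)-power map onto μ_{q+1}
  have hsurj : ∀ y : F, y ^ (q + 1) = 1 → ∃ x : F, x ≠ 0 ∧ x ^ (q - 1) = y := by
    intro y hy
    have hy0 : y ≠ 0 := by
      intro h
      rw [h, zero_pow (by omega : q + 1 ≠ 0)] at hy
      exact zero_ne_one hy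
    obtain ⟨k, hk0⟩ := hζ (Units.mk0 y hy0)
    have hk : ζ ^ k = Units.mk0 y hy0 := hk0
    have hu : ζ ^ (k * (q + 1 : ℕ)) = 1 := by
      rw [zpow_mul, hk, zpow_natCast]
      ext
      push_cast
      exact hy
    have hdvd : ((q ^ 2 - 1 : ℕ) : ℤ) ∣ k * (q + 1 : ℕ) := by
      rw [← hord]
      exact orderOf_dvd_iff_zpow_eq_one.mpr hu
    rw [← hN] at hdvd
    push_cast at hdvd
    have hdvd2 : ((q - 1 : ℕ) : ℤ) ∣ k := by
      have hne : ((q : ℤ) + 1) ≠ 0 := by positivity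
      exact (mul_dvd_mul_iff_right hne).mp hdvd
    obtain ⟨m, hm⟩ := hdvd2
    refine ⟨((ζ ^ m : Fˣ) : F), Units.ne_zero _, ?_⟩
    have : (ζ ^ m) ^ ((q - 1 : ℕ) : ℤ) = Units.mk0 y hy0 := by
      rw [← zpow_mul, mul_comm, ← hm, hk]
    have h2 : (ζ ^ m) ^ (q - 1) = Units.mk0 y hy0 := by
      rwa [zpow_natCast] at this
    calc ((ζ ^ m : Fˣ) : F) ^ (q - 1) = (((ζ ^ m) ^ (q - 1) : Fˣ) : F) := by
          rw [Units.val_pow_eq_pow_val]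
    _ = y := by rw [h2]; rfl
  constructor
  · -- forward direction
    intro hf
    have f0 : (fun x : F => x ^ r * A.eval (x ^ (q - 1))) 0 = 0 := by
      simp [zero_pow hr.ne']
    have hnz : ∀ x : F, x ≠ 0 → x ^ r * A.eval (x ^ (q - 1)) ≠ 0 := by
      intro x hx h
      exact hx (hf.injective (h.trans f0.symm))
    have hgcd : Nat.gcd r (q - 1) = 1 := by
      by_contra hne
      set d := Nat.gcd r (q - 1) with hd
      have hdr : d ∣ r := Nat.gcd_dvd_left _ _
      have hdq : d ∣ q - 1 := Nat.gcd_dvd_right _ _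
      have hd1 : 1 < d := by
        have hd0 : d ≠ 0 := by
          intro h
          exact absurd (Nat.eq_zero_of_gcd_eq_zero_left (hd ▸ h)) hr.ne'
        omega
      have hdN : d ∣ q ^ 2 - 1 := hdq.trans ⟨q + 1, hN.symm⟩
      set c : Fˣ := ζ ^ ((q ^ 2 - 1) / d) with hc
      have hcne : c ≠ 1 := by
        intro h
        have h' : ζ ^ ((q ^ 2 - 1) / d) = 1 := by rw [← hc, h]
        have := orderOf_dvd_of_pow_eq_one h'
        rw [hord] at this
        have hlt : (q ^ 2 - 1) / d < q ^ 2 - 1 := Nat.div_lt_self hNpos hd1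
        have hpos : 0 < (q ^ 2 - 1) / d := Nat.div_pos (Nat.le_of_dvd hNpos hdN) (by omega)
        exact absurd (Nat.le_of_dvd hpos this) (by omega)
      have hpow1 : ∀ s : ℕ, d ∣ s → c ^ s = 1 := by
        intro s hs
        obtain ⟨e, rfl⟩ := hs
        rw [hc, ← pow_mul]
        have he : (q ^ 2 - 1) / d * (d * e) = (q ^ 2 - 1) * e := by
          rw [← mul_assoc, Nat.div_mul_cancel hdN]
        rw [he, pow_mul, ← hord, pow_orderOf_eq_one, one_pow]
      have hcr : ((c : F)) ^ r = 1 := by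
        rw [← Units.val_pow_eq_pow_val, hpow1 r hdr, Units.val_one]
      have hcq : ((c : F)) ^ (q - 1) = 1 := by
        rw [← Units.val_pow_eq_pow_val, hpow1 _ hdq, Units.val_one]
      have : (c : F) ^ r * A.eval ((c : F) ^ (q - 1)) =
          (1 : F) ^ r * A.eval ((1 : F) ^ (q - 1)) := by
        rw [hcr, hcq, one_pow, one_pow]
      have := hf.injective this
      exact hcne (Units.ext (by rwa [Units.val_one]))
    refine ⟨hgcd, ?_⟩
    have hmapsTo : Set.MapsTo (fun x : F => x ^ r * (A.eval x) ^ (q - 1))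
        {x : F | x ^ (q + 1) = 1} {x : F | x ^ (q + 1) = 1} := by
      intro y hy
      obtain ⟨x, hx0, rfl⟩ := hsurj y hy
      show ((x ^ (q - 1)) ^ r * (A.eval (x ^ (q - 1))) ^ (q - 1)) ^ (q + 1) = 1
      rw [← hkey]
      exact hmem _ (hnz x hx0)
    have hsurjOn : Set.SurjOn (fun x : F => x ^ r * (A.eval x) ^ (q - 1))
        {x : F | x ^ (q + 1) = 1} {x : F | x ^ (q + 1) = 1} := by
      intro z hz
      obtain ⟨w, hw0, rfl⟩ := hsurj z hz
      obtain ⟨x, hx1⟩ := hf.surjective w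
      have hx : x ^ r * A.eval (x ^ (q - 1)) = w := hx1
      have hx0 : x ≠ 0 := by
        intro h
        rw [h] at hx
        rw [zero_pow hr.ne', zero_mul] at hx
        exact hw0 hx.symm
      refine ⟨x ^ (q - 1), hmem x hx0, ?_⟩
      show (x ^ (q - 1)) ^ r * (A.eval (x ^ (q - 1))) ^ (q - 1) = w ^ (q - 1)
      rw [← hkey, hx]
    exact ((Set.toFinite _).surjOn_iff_bijOn_of_mapsTo hmapsTo).mp hsurjOn
  · -- backward direction
    rintro ⟨hgcd, hbij⟩
    have hAne : ∀ y : F, y ^ (q + 1) = 1 → A.eval y ≠ 0 := by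
      intro y hy hA
      have hmem0 : (y ^ r * (A.eval y) ^ (q - 1)) ^ (q + 1) = 1 := hbij.mapsTo hy
      rw [hA, zero_pow (by omega : q - 1 ≠ 0), mul_zero,
        zero_pow (by omega : q + 1 ≠ 0)] at hmem0
      exact zero_ne_one hmem0
    have hnz : ∀ x : F, x ≠ 0 → x ^ r * A.eval (x ^ (q - 1)) ≠ 0 :=
      fun x hx => mul_ne_zero (pow_ne_zero r hx) (hAne _ (hmem x hx))
    rw [← Finite.injective_iff_bijective]
    intro x y hxy
    simp only at hxy
    rcases eq_or_ne x 0 with rfl | hx0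
    · rcases eq_or_ne y 0 with rfl | hy0
      · rfl
      · exfalso
        apply hnz y hy0
        rw [← hxy, zero_pow hr.ne', zero_mul]
    · rcases eq_or_ne y 0 with rfl | hy0
      · exfalso
        apply hnz x hx0
        rw [hxy, zero_pow hr.ne', zero_mul]
      · -- both nonzero
        have h1 : x ^ (q - 1) = y ^ (q - 1) := by
          apply hbij.injOn (hmem x hx0) (hmem y hy0)
          show (x ^ (q - 1)) ^ r * (A.eval (x ^ (q - 1))) ^ (q - 1) =
            (y ^ (q - 1)) ^ r * (A.eval (y ^ (q - 1))) ^ (q - 1)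
          rw [← hkey, ← hkey, hxy]
        have h2 : A.eval (x ^ (q - 1)) ≠ 0 := hAne _ (hmem x hx0)
        have h3 : x ^ r = y ^ r := by
          rw [h1] at hxy h2
          exact mul_right_cancel₀ h2 hxy
        have hcr : (x / y) ^ r = 1 := by
          rw [div_pow, h3, div_self (pow_ne_zero r hy0)]
        have hcq : (x / y) ^ (q - 1) = 1 := by
          rw [div_pow, h1, div_self (pow_ne_zero _ hy0)]
        have : orderOf (x / y) ∣ 1 := by
          rw [← hgcd]
          exact Nat.dvd_gcd (orderOf_dvd_of_pow_eq_one hcr) (orderOf_dvd_of_pow_eq_one hcq)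
        have : x / y = 1 := orderOf_eq_one_iff.mp (Nat.dvd_one.mp this)
        exact (div_eq_one_iff_eq hy0).mp this
end

section
/- A degree-one rational function ρ(X) ∈ F_{q^2}(X) permutes μ_{q+1} if and only if ρ(X) = (β^q X + α^q)/(α X + β) for some α, β ∈ F_{q^2} with α^{q+1} ≠ β^{q+1}. -/
lemma quad3 {K : Type} [Field K] {A B C x y z : K} (hxy : x ≠ y) (hxz : x ≠ z)
    (hyz : y ≠ z) (h1 : A*x^2 + B*x + C = 0) (h2 : A*y^2 + B*y + C = 0)
    (h3 : A*z^2 + B*z + C = 0) : A = 0 ∧ B = 0 ∧ C = 0 := by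
  have e1 : (x - y) * (A*(x+y) + B) = 0 := by linear_combination h1 - h2
  have f1 : A*(x+y) + B = 0 :=
    (mul_eq_zero.mp e1).resolve_left (sub_ne_zero.mpr hxy)
  have e2 : (x - z) * (A*(x+z) + B) = 0 := by linear_combination h1 - h3
  have f2 : A*(x+z) + B = 0 :=
    (mul_eq_zero.mp e2).resolve_left (sub_ne_zero.mpr hxz)
  have e3 : A * (y - z) = 0 := by linear_combination f1 - f2
  have hA : A = 0 := (mul_eq_zero.mp e3).resolve_right (sub_ne_zero.mpr hyz)
  have hB : B = 0 := by linear_combination f1 - (x+y) * hA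
  refine ⟨hA, hB, ?_⟩
  linear_combination h1 - x^2 * hA - x * hB

lemma sq_sub_one (q : ℕ) (hq1 : 2 ≤ q) : q^2 - 1 = (q-1)*(q+1) := by
  obtain ⟨m, rfl⟩ : ∃ m, q = m + 2 := ⟨q - 2, by omega⟩
  refine Nat.sub_eq_of_eq_add ?_
  show (m+2)^2 = (m+1)*(m+3) + 1
  ring

lemma three_mu (q : ℕ) (hq1 : 2 ≤ q) (F : Type) [Field F] [Fintype F]
    (hF : Fintype.card F = q^2) :
    ∃ x y z : F, x^(q+1)=1 ∧ y^(q+1)=1 ∧ z^(q+1)=1 ∧ x ≠ y ∧ x ≠ z ∧ y ≠ z := by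
  classical
  obtain ⟨g, hg⟩ := IsCyclic.exists_generator (α := Fˣ)
  have hord : orderOf g = q^2 - 1 := by
    rw [orderOf_eq_card_of_forall_mem_zpowers hg, Nat.card_eq_fintype_card, Fintype.card_units, hF]
  have hdvd : (q-1) ∣ (q^2-1) := ⟨q+1, sq_sub_one q hq1⟩
  have hζord : orderOf (g ^ (q-1)) = q + 1 := by
    rw [orderOf_pow, hord, Nat.gcd_eq_right hdvd, sq_sub_one q hq1,
      Nat.mul_div_cancel_left _ (by omega : 0 < q - 1)]
  set ζ : Fˣ := g ^ (q-1) with hζ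
  have hζ1 : ζ ^ (q+1) = 1 := by rw [← hζord]; exact pow_orderOf_eq_one ζ
  have hζne1 : ζ ≠ 1 := by
    intro h
    rw [h, orderOf_one] at hζord; omega
  have hζ2ne1 : ζ^2 ≠ 1 := by
    intro h
    have := orderOf_dvd_of_pow_eq_one h
    rw [hζord] at this
    have := Nat.le_of_dvd (by norm_num) this; omega
  have hζζ2 : ζ ≠ ζ^2 := by
    intro h
    apply hζne1
    have : ζ * 1 = ζ * ζ := by rw [mul_one, ← sq, ← h]
    exact (mul_left_cancel this).symm
  refine ⟨1, (ζ : F), ((ζ:F))^2, by simp, ?_, ?_, ?_, ?_, ?_⟩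
  · rw [← Units.val_pow_eq_pow_val, hζ1, Units.val_one]
  · rw [← pow_mul, mul_comm, pow_mul, ← Units.val_pow_eq_pow_val,
      ← Units.val_pow_eq_pow_val, hζ1, one_pow, Units.val_one]
  · intro h; exact hζne1 (Units.ext h.symm)
  · intro h
    apply hζ2ne1
    apply Units.ext
    rw [Units.val_pow_eq_pow_val, ← h, Units.val_one]
  · intro h
    apply hζζ2
    apply Units.ext
    rw [Units.val_pow_eq_pow_val]; exact h

lemma exists_l (q : ℕ) (hq1 : 2 ≤ q) (F : Type) [Field F] [Fintype F]
    (hF : Fintype.card F = q^2) (m : F) (hm : m ≠ 0) (h1 : m^(q+1) = 1) :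
    ∃ l : F, l ≠ 0 ∧ l^(q-1) = m := by
  classical
  obtain ⟨g, hg⟩ := IsCyclic.exists_generator (α := Fˣ)
  have hord : orderOf g = q^2 - 1 := by
    rw [orderOf_eq_card_of_forall_mem_zpowers hg, Nat.card_eq_fintype_card, Fintype.card_units, hF]
  set mu : Fˣ := Units.mk0 m hm with hmu
  obtain ⟨k, hk⟩ := hg mu
  replace hk : g ^ k = mu := hk
  have hmu1 : mu ^ ((q:ℤ)+1) = 1 := by
    apply Units.ext
    push_cast [Units.val_zpow_eq_zpow_val]
    rw [show ((q:ℤ)+1) = ((q+1 : ℕ) : ℤ) by push_cast; ring, zpow_natCast]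
    exact h1
  have hdvd : ((q^2-1 : ℕ) : ℤ) ∣ k * ((q:ℤ)+1) := by
    rw [← hord]
    apply orderOf_dvd_iff_zpow_eq_one.mpr
    rw [zpow_mul, hk]
    exact hmu1
  have hcast : ((q^2-1:ℕ):ℤ) = ((q-1:ℕ):ℤ) * ((q:ℤ)+1) := by
    rw [sq_sub_one q hq1]
    push_cast [Nat.sub_one, Nat.succ_pred_eq_of_pos (by omega : 0 < q)]
    ring
  have hdvd2 : ((q-1:ℕ):ℤ) ∣ k := by
    rw [hcast] at hdvd
    have hne : ((q:ℤ)+1) ≠ 0 := by positivity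
    exact (mul_dvd_mul_iff_right hne).mp (by rwa [mul_comm ((q-1:ℕ):ℤ)] at hdvd ⊢)
  obtain ⟨j, hj⟩ := hdvd2
  refine ⟨((g ^ j : Fˣ) : F), Units.ne_zero _, ?_⟩
  rw [← Units.val_pow_eq_pow_val]
  have : (g ^ j) ^ (q-1) = mu := by
    rw [← zpow_natCast (g^j), ← zpow_mul, mul_comm j, ← hj, hk]
  rw [this]
  simp [hmu]

/-- Lemma 2.5: a degree-one rational function `(aX+b)/(cX+d)` over `F_{q²}` permutes
`μ_{q+1}` iff it equals `(β^q X + α^q)/(αX + β)` for some `α, β` with `α^{q+1} ≠ β^{q+1}`. -/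
theorem stmt_5 (p n : ℕ) (hp : p.Prime) (hn : 0 < n) (q : ℕ) (hq : q = p ^ n)
    (F : Type) [Field F] [Fintype F] (hF : Fintype.card F = q ^ 2)
    (a b c d : F) (hdet : a * d - b * c ≠ 0) :
    ((∀ x : F, x ^ (q + 1) = 1 → c * x + d ≠ 0) ∧
      Set.BijOn (fun x : F => (a * x + b) / (c * x + d))
        {x : F | x ^ (q + 1) = 1} {x : F | x ^ (q + 1) = 1}) ↔
    (∃ α β : F, α ^ (q + 1) ≠ β ^ (q + 1) ∧
      ∃ l : F, l ≠ 0 ∧ a = l * β ^ q ∧ b = l * α ^ q ∧ c = l * α ∧ d = l * β) := by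
  have hq1 : 2 ≤ q := by
    rw [hq]; exact Nat.one_lt_pow (by omega) hp.one_lt
  -- characteristic
  haveI : Fact p.Prime := ⟨hp⟩
  haveI hcharF : CharP F p := by
    have hch : CharP F (ringChar F) := ringChar.charP F
    obtain ⟨n', hp', hc⟩ := FiniteField.card F (ringChar F)
    have hrp : ringChar F = p := by
      have h1 : ringChar F ∣ Fintype.card F := hc ▸ dvd_pow_self _ n'.pos.ne'
      rw [hF, hq, ← pow_mul] at h1
      have h2 := hp'.dvd_of_dvd_pow h1
      exact (Nat.prime_dvd_prime_iff_eq hp' hp).mp h2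
    rwa [hrp] at hch
  have frob : ∀ x y : F, (x + y)^q = x^q + y^q := by
    intro x y; rw [hq]; exact add_pow_char_pow x y p n
  have powcard : ∀ x : F, (x^q)^q = x := by
    intro x
    rw [← pow_mul, ← sq, ← hF]
    exact FiniteField.pow_card x
  have hnegone : (-1 : F)^(q+1) = 1 := by
    rw [pow_succ, hq, neg_one_pow_char_pow, neg_mul, one_mul, neg_neg]
  constructor
  · rintro ⟨hnz, hbij⟩
    have hq0 : q ≠ 0 := by omega
    have hq' : q - 1 + 1 = q := by omega
    have hnormfix : ∀ x : F, (x ^ (q+1)) ^ q = x ^ (q+1) := by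
      intro x
      have e : (x^(q+1))^q = (x^q)^q * x^q := by rw [pow_succ, mul_pow]
      rw [e, powcard, pow_succ, mul_comm]
    have key : ∀ x : F, x^(q+1) = 1 →
        (a*b^q - c*d^q)*x^2 + ((a^(q+1)+b^(q+1)) - (c^(q+1)+d^(q+1)))*x
          + (a^q*b - c^q*d) = 0 := by
      intro x hx
      have hcd := hnz x hx
      have hy : ((a*x+b)/(c*x+d))^(q+1) = 1 := hbij.mapsTo hx
      have hab : a*x+b ≠ 0 := by
        intro h
        rw [h, zero_div, zero_pow (by omega : q+1 ≠ 0)] at hy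
        exact zero_ne_one hy
      have h2 : (a*x+b)^(q+1) = (c*x+d)^(q+1) := by
        rw [div_pow, div_eq_one_iff_eq (pow_ne_zero _ hcd)] at hy
        exact hy
      have h3 : (a^q*x^q + b^q)*(a*x+b) = (c^q*x^q + d^q)*(c*x+d) := by
        have e1 : (a*x+b)^(q+1) = (a^q*x^q+b^q)*(a*x+b) := by
          rw [pow_succ, frob, mul_pow]
        have e2 : (c*x+d)^(q+1) = (c^q*x^q+d^q)*(c*x+d) := by
          rw [pow_succ, frob, mul_pow]
        rw [← e1, ← e2]; exact h2
      linear_combination x * h3 - (a^(q+1)*x + a^q*b - c^(q+1)*x - c^q*d) * hx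
    obtain ⟨x₀, x₁, x₂, h₀, h₁, h₂, h01, h02, h12⟩ := three_mu q hq1 F hF
    obtain ⟨hA2, hA1, hA0⟩ := quad3 h01 h02 h12 (key x₀ h₀) (key x₁ h₁) (key x₂ h₂)
    have eq1 : a*b^q = c*d^q := by linear_combination hA2
    have eq3 : a^q*b = c^q*d := by linear_combination hA0
    have eq2 : a^(q+1)+b^(q+1) = c^(q+1)+d^(q+1) := by linear_combination hA1
    have hstar : a^(q+1)*b^(q+1) = c^(q+1)*d^(q+1) := by
      linear_combination (a^q*b)*eq1 + (c*d^q)*eq3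
    have hroots : (a^(q+1) - c^(q+1)) * (a^(q+1) - d^(q+1)) = 0 := by
      linear_combination a^(q+1)*eq2 - hstar
    have claims : a*c^q = b*d^q ∧ a^(q+1) = d^(q+1) ∧ b^(q+1) = c^(q+1)
        ∧ c^(q+1) ≠ d^(q+1) := by
      by_cases hc : c = 0
      · have ha : a ≠ 0 := by intro h; apply hdet; rw [h, hc]; ring
        have hd : d ≠ 0 := by intro h; apply hdet; rw [h, hc]; ring
        have hb : b = 0 := by
          have h0 : a * b^q = 0 := by rw [eq1, hc, zero_mul]
          rcases mul_eq_zero.mp h0 with h | h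
          · exact absurd h ha
          · exact (pow_eq_zero_iff hq0).mp h
        have hcN : c^(q+1) = 0 := by rw [hc]; exact zero_pow (by omega)
        have hD : a^(q+1) = d^(q+1) := by
          rcases mul_eq_zero.mp hroots with h | h
          · exfalso
            rw [hcN, sub_zero] at h
            exact pow_ne_zero _ ha h
          · linear_combination h
        refine ⟨by rw [hb, hc, zero_pow hq0]; ring, hD, ?_, ?_⟩
        · rw [hb, hcN]; exact zero_pow (by omega)
        · rw [hcN]; exact (pow_ne_zero _ hd).symm
      · have hac : a^(q+1) ≠ c^(q+1) := by
          intro h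
          have h0 : c^q * (a*d - b*c) = 0 := by
            linear_combination (-a)*eq3 + b*h
          rcases mul_eq_zero.mp h0 with h' | h'
          · exact hc ((pow_eq_zero_iff hq0).mp h')
          · exact hdet h'
        have hD : a^(q+1) = d^(q+1) := by
          rcases mul_eq_zero.mp hroots with h | h
          · exact absurd (by linear_combination h) hac
          · linear_combination h
        have hB : c^(q+1) ≠ d^(q+1) := fun h => hac (hD.trans h.symm)
        have hE : b^(q+1) = c^(q+1) := by linear_combination eq2 - hD
        have hA' : a*c^q = b*d^q := by
          by_cases hd : d = 0
          · have ha0 : a = 0 := by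
              have h0 : a^(q+1) = 0 := by
                rw [hD, hd]; exact zero_pow (by omega)
              exact (pow_eq_zero_iff (by omega : q+1 ≠ 0)).mp h0
            rw [ha0, hd, zero_mul, zero_pow hq0, mul_zero]
          · have ha : a ≠ 0 := by
              intro h
              apply pow_ne_zero (q+1) hd
              rw [← hD, h]; exact zero_pow (by omega)
            have h0 : a^q * (a*c^q - b*d^q) = 0 := by
              linear_combination (-(d^q))*eq3 + c^q*hD
            rcases mul_eq_zero.mp h0 with h' | h'
            · exact absurd ((pow_eq_zero_iff hq0).mp h') ha
            · linear_combination h'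
        exact ⟨hA', hD, hE, hB⟩
    obtain ⟨hA', hD, hE, hB⟩ := claims
    have hexl : ∃ l : F, l ≠ 0 ∧ l^(q-1)*a = d^q ∧ l^(q-1)*b = c^q := by
      by_cases ha : a = 0
      · have hb : b ≠ 0 := by intro h; apply hdet; rw [ha, h]; ring
        have hd0 : d = 0 := by
          have h0 : b * d^q = 0 := by rw [← hA', ha, zero_mul]
          rcases mul_eq_zero.mp h0 with h | h
          · exact absurd h hb
          · exact (pow_eq_zero_iff hq0).mp h
        have hcne : c ≠ 0 := by
          intro h
          apply hb
          have h0 : b^(q+1) = 0 := by rw [hE, h]; exact zero_pow (by omega)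
          exact (pow_eq_zero_iff (by omega : q+1 ≠ 0)).mp h0
        have hm0 : c^q / b ≠ 0 := div_ne_zero (pow_ne_zero _ hcne) hb
        have hm1 : (c^q / b)^(q+1) = 1 := by
          rw [div_pow,
            show (c^q)^(q+1) = (c^(q+1))^q by rw [← pow_mul, ← pow_mul, Nat.mul_comm],
            hnormfix, ← hE, div_self (pow_ne_zero _ hb)]
        obtain ⟨l, hl0, hlm⟩ := exists_l q hq1 F hF _ hm0 hm1
        refine ⟨l, hl0, ?_, ?_⟩
        · rw [ha, mul_zero, hd0, zero_pow hq0]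
        · rw [hlm, div_mul_cancel₀ _ hb]
      · have hd : d ≠ 0 := by
          intro h
          apply ha
          have h0 : a^(q+1) = 0 := by rw [hD, h]; exact zero_pow (by omega)
          exact (pow_eq_zero_iff (by omega : q+1 ≠ 0)).mp h0
        have hm0 : d^q / a ≠ 0 := div_ne_zero (pow_ne_zero _ hd) ha
        have hm1 : (d^q / a)^(q+1) = 1 := by
          rw [div_pow,
            show (d^q)^(q+1) = (d^(q+1))^q by rw [← pow_mul, ← pow_mul, Nat.mul_comm],
            hnormfix, ← hD, div_self (pow_ne_zero _ ha)]
        obtain ⟨l, hl0, hlm⟩ := exists_l q hq1 F hF _ hm0 hm1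
        have hla : l^(q-1)*a = d^q := by rw [hlm, div_mul_cancel₀ _ ha]
        refine ⟨l, hl0, hla, ?_⟩
        apply mul_left_cancel₀ ha
        calc a * (l^(q-1) * b) = (l^(q-1) * a) * b := by ring
          _ = d^q * b := by rw [hla]
          _ = a * c^q := by linear_combination -hA'
    obtain ⟨l, hl0, hla, hlb⟩ := hexl
    have hlq : l^q = l^(q-1) * l := by rw [← pow_succ, hq']
    refine ⟨c/l, d/l, ?_, l, hl0, ?_, ?_, ?_, ?_⟩
    · rw [div_pow, div_pow]
      intro h
      apply hB
      rw [div_eq_div_iff (pow_ne_zero _ hl0) (pow_ne_zero _ hl0)] at h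
      exact mul_right_cancel₀ (pow_ne_zero _ hl0) h
    · rw [div_pow, eq_comm, ← mul_div_assoc, div_eq_iff (pow_ne_zero _ hl0), hlq]
      linear_combination (-l) * hla
    · rw [div_pow, eq_comm, ← mul_div_assoc, div_eq_iff (pow_ne_zero _ hl0), hlq]
      linear_combination (-l) * hlb
    · rw [mul_comm, div_mul_cancel₀ _ hl0]
    · rw [mul_comm, div_mul_cancel₀ _ hl0]
  · rintro ⟨α, β, hAB, l, hl, rfl, rfl, rfl, rfl⟩
    have hαβ : ∀ x : F, x ^ (q+1) = 1 → α * x + β ≠ 0 := by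
      intro x hx h0
      apply hAB
      have hβ : β = (-1) * (α * x) := by linear_combination h0
      rw [hβ, mul_pow, mul_pow, hnegone, hx, one_mul, mul_one]
    have hden : ∀ x : F, x ^ (q+1) = 1 → l * α * x + l * β ≠ 0 := by
      intro x hx
      have : l * α * x + l * β = l * (α * x + β) := by ring
      rw [this]
      exact mul_ne_zero hl (hαβ x hx)
    refine ⟨hden, ?_⟩
    have hmaps : Set.MapsTo (fun x : F => (l * β ^ q * x + l * α ^ q) / (l * α * x + l * β))
        {x : F | x ^ (q + 1) = 1} {x : F | x ^ (q + 1) = 1} := by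
      intro x hx
      simp only [Set.mem_setOf_eq] at hx ⊢
      have hD : α * x + β ≠ 0 := hαβ x hx
      have e1 : l * β ^ q * x + l * α ^ q = l * (β ^ q * x + α ^ q) := by ring
      have e2 : l * α * x + l * β = l * (α * x + β) := by ring
      rw [e1, e2, mul_div_mul_left _ _ hl, div_pow]
      have hNq : (β ^ q * x + α ^ q) ^ q = β * x ^ q + α := by
        rw [frob, mul_pow, powcard, powcard]
      have hDq : (α * x + β) ^ q = α ^ q * x ^ q + β ^ q := by
        rw [frob, mul_pow]
      have key : (β ^ q * x + α ^ q) ^ (q+1) = (α * x + β) ^ (q+1) := by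
        rw [pow_succ, pow_succ, hNq, hDq]
        linear_combination (β ^ (q+1) - α ^ (q+1)) * hx
      rw [key, div_self (pow_ne_zero _ hD)]
    have hinj : Set.InjOn (fun x : F => (l * β ^ q * x + l * α ^ q) / (l * α * x + l * β))
        {x : F | x ^ (q + 1) = 1} := by
      intro x hx y hy hxy
      simp only [Set.mem_setOf_eq] at hx hy
      simp only at hxy
      rw [div_eq_div_iff (hden x hx) (hden y hy)] at hxy
      have h0 : ((l * β ^ q) * (l * β) - (l * α ^ q) * (l * α)) * (x - y) = 0 := by
        linear_combination hxy
      have h1 : x - y = 0 := by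
        rcases mul_eq_zero.mp h0 with h | h
        · exfalso; exact hdet (by linear_combination h)
        · exact h
      exact sub_eq_zero.mp h1
    exact (Set.Finite.injOn_iff_bijOn_of_mapsTo (Set.toFinite _) hmaps).mp hinj
end

section
/- A degree-one rational function ρ(X) ∈ F_{q^2}(X) maps μ_{q+1} onto P^1(F_q) = F_q ∪ {∞} if and only if ρ(X) = (δX + γδ^q)/(X + γ) for some γ ∈ μ_{q+1} and some δ ∈ F_{q^2} \ F_q. -/
open Polynomial in
lemma aux_card_pow_eq_one (F : Type) [Field F] [Fintype F] [DecidableEq F] (m : ℕ) (hm : 0 < m)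
    (hdvd : m ∣ Fintype.card F - 1) : {x : F | x ^ m = 1}.ncard = m := by
  obtain ⟨g, hg⟩ := IsCyclic.exists_generator (α := Fˣ)
  have hord : orderOf g = Fintype.card F - 1 := by
    rw [orderOf_eq_card_of_forall_mem_zpowers hg, Nat.card_eq_fintype_card, Fintype.card_units]
  have hN : 0 < Fintype.card F - 1 := by
    have := Fintype.one_lt_card (α := F)
    omega
  obtain ⟨k, hk⟩ := hdvd
  have hk0 : k ≠ 0 := by rintro rfl; omega
  have hordk : orderOf (g ^ k) = m := by
    rw [orderOf_pow' g hk0, hord, hk, Nat.gcd_eq_right ⟨m, mul_comm m k⟩,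
      Nat.mul_div_cancel _ (Nat.pos_of_ne_zero hk0)]
  have hζ : IsPrimitiveRoot ((g ^ k : Fˣ) : F) m := by
    have h := IsPrimitiveRoot.orderOf ((g ^ k : Fˣ) : F)
    rwa [orderOf_units, hordk] at h
  have hcard := hζ.card_nthRootsFinset
  have hset : {x : F | x ^ m = 1} = ↑(nthRootsFinset m (1 : F)) := by
    ext x
    simp [Polynomial.mem_nthRootsFinset hm (1 : F)]
  rw [hset, Set.ncard_coe_finset, hcard]

open scoped Classical in
/-- Lemma 2.6: a degree-one rational function `(aX+b)/(cX+d)` over `F_{q²}` maps `μ_{q+1}`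
onto `P¹(F_q) = F_q ∪ {∞}` iff it equals `(δX + γδ^q)/(X + γ)` for some `γ ∈ μ_{q+1}` and
`δ ∈ F_{q²} \ F_q`.  Here the induced map takes values in `Option F`, with `none = ∞`. -/
theorem stmt_6 (p n : ℕ) (hp : p.Prime) (hn : 0 < n) (q : ℕ) (hq : q = p ^ n)
    (F : Type) [Field F] [Fintype F] (hF : Fintype.card F = q ^ 2)
    (a b c d : F) (hdet : a * d - b * c ≠ 0) :
    ((fun x : F => if c * x + d = 0 then (none : Option F)
        else some ((a * x + b) / (c * x + d))) '' {x : F | x ^ (q + 1) = 1}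
      = insert none (some '' {y : F | y ^ q = y})) ↔
    (∃ γ δ : F, γ ^ (q + 1) = 1 ∧ δ ^ q ≠ δ ∧
      ∃ l : F, l ≠ 0 ∧ a = l * δ ∧ b = l * (γ * δ ^ q) ∧ c = l ∧ d = l * γ) := by
  have hq2 : 2 ≤ q := by
    rw [hq]; exact Nat.one_lt_pow hn.ne' hp.one_lt
  have hq0 : q ≠ 0 := by omega
  haveI hfp : Fact p.Prime := ⟨hp⟩
  haveI hcharF : CharP F p := by
    obtain ⟨r, hrinst⟩ := CharP.exists F
    haveI := hrinst
    obtain ⟨m, hrp, hcard⟩ := FiniteField.card F r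
    have h1 : p ^ (2 * n) = r ^ (m : ℕ) := by
      rw [← hcard, hF, hq, ← pow_mul, mul_comm]
    have hdpd : p ∣ r ^ (m : ℕ) := h1 ▸ dvd_pow_self p (by omega)
    have : p = r := (Nat.prime_dvd_prime_iff_eq hp hrp).mp (hp.dvd_of_dvd_pow hdpd)
    rwa [this]
  have hfrob2 : ∀ x : F, (x ^ q) ^ q = x := by
    intro x
    rw [← pow_mul, ← pow_two, ← hF, FiniteField.pow_card]
  have hadd : ∀ u v : F, (u + v) ^ q = u ^ q + v ^ q := by
    intro u v; rw [hq]; exact add_pow_char_pow u v p n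
  have hneg1 : (-1 : F) ^ q = -1 := by
    have h := hadd 1 (-1)
    rw [add_neg_cancel, zero_pow hq0, one_pow] at h
    linear_combination -h
  have hfact : (q + 1) * (q - 1) = q ^ 2 - 1 := by
    obtain ⟨m, rfl⟩ := Nat.exists_eq_add_of_le (show 1 ≤ q by omega)
    have e1 : 1 + m - 1 = m := by omega
    have e2 : (1 + m) * (1 + m) = (1 + m + 1) * m + 1 := by ring
    rw [e1, pow_two]
    omega
  have hμ : {x : F | x ^ (q + 1) = 1}.ncard = q + 1 := by
    refine aux_card_pow_eq_one F _ (by omega) ?_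
    rw [hF, ← hfact]
    exact Dvd.intro _ rfl
  have hFq : {y : F | y ^ q = y}.ncard = q := by
    have h1 : {y : F | y ^ q = y} = insert (0 : F) {y : F | y ^ (q - 1) = 1} := by
      ext y
      simp only [Set.mem_setOf_eq, Set.mem_insert_iff]
      have hqq : q - 1 + 1 = q := by omega
      constructor
      · intro h
        rcases eq_or_ne y 0 with rfl | hy
        · exact Or.inl rfl
        · right
          have h2 : y ^ (q - 1) * y = 1 * y := by
            rw [← pow_succ, hqq, h, one_mul]
          exact mul_right_cancel₀ hy h2
      · rintro (rfl | h)
        · rw [zero_pow hq0]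
        · calc y ^ q = y ^ (q - 1) * y := by rw [← pow_succ, hqq]
          _ = y := by rw [h, one_mul]
    have h2 : {y : F | y ^ (q - 1) = 1}.ncard = q - 1 := by
      refine aux_card_pow_eq_one F _ (by omega) ?_
      rw [hF, ← hfact]
      exact Dvd.intro_left _ rfl
    have h0 : (0 : F) ∉ {y : F | y ^ (q - 1) = 1} := by
      simp only [Set.mem_setOf_eq]
      rw [zero_pow (by omega : q - 1 ≠ 0)]
      exact fun h => zero_ne_one h
    rw [h1, Set.ncard_insert_of_notMem h0 (Set.toFinite _), h2]
    omega
  constructor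
  · intro him
    have hnone : (none : Option F) ∈ (fun x : F => if c * x + d = 0 then (none : Option F)
        else some ((a * x + b) / (c * x + d))) '' {x : F | x ^ (q + 1) = 1} := by
      rw [him]; exact Set.mem_insert _ _
    obtain ⟨x₀, hx₀S, hx₀⟩ := hnone
    have hpole : c * x₀ + d = 0 := by
      by_contra h
      simp only [if_neg h] at hx₀
      exact (Option.some_ne_none _ hx₀).elim
    have hc : c ≠ 0 := by
      intro h0
      rw [h0, zero_mul, zero_add] at hpole
      rw [h0, hpole] at hdet
      simp at hdet
    have hx₀1 : x₀ ^ (q + 1) = 1 := hx₀S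
    set P : Polynomial F := Polynomial.C (b ^ q * c - a * d ^ q) * Polynomial.X ^ 2 +
      Polynomial.C (a ^ q * c + b ^ q * d - a * c ^ q - b * d ^ q) * Polynomial.X +
      Polynomial.C (a ^ q * d - b * c ^ q) with hPdef
    have heval : ∀ x : F, x ^ (q + 1) = 1 → P.eval x = 0 := by
      intro x hxS
      have hx1 : x ^ q * x = 1 := by rw [← pow_succ]; exact hxS
      simp only [hPdef, Polynomial.eval_add, Polynomial.eval_mul, Polynomial.eval_pow,
        Polynomial.eval_C, Polynomial.eval_X]
      by_cases hden : c * x + d = 0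
      · have hxq : d ^ q = -(c ^ q * x ^ q) := by
          have hd2 : d = -1 * (c * x) := by linear_combination hden
          rw [hd2, mul_pow, hneg1, mul_pow]
          ring
        rw [hxq]
        linear_combination (a * c ^ q * x + b * c ^ q) * hx1 + (b ^ q * x + a ^ q) * hden
      · have hmem : (if c * x + d = 0 then (none : Option F)
            else some ((a * x + b) / (c * x + d)))
            ∈ insert none (some '' {y : F | y ^ q = y}) := by
          rw [← him]; exact ⟨x, hxS, rfl⟩
        rw [if_neg hden] at hmem
        rcases Set.mem_insert_iff.mp hmem with h | ⟨y, hy, hyy⟩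
        · exact absurd h (by simp)
        · have hy2 : y = (a * x + b) / (c * x + d) := Option.some_inj.mp hyy
          rw [hy2] at hy
          simp only [Set.mem_setOf_eq] at hy
          rw [div_pow, div_eq_div_iff (pow_ne_zero _ hden) hden] at hy
          rw [hadd, hadd, mul_pow, mul_pow] at hy
          linear_combination x * hy - (a ^ q * (c * x + d) - c ^ q * (a * x + b)) * hx1
    have hSfin : {x : F | x ^ (q + 1) = 1}.Finite := Set.toFinite _
    have hcards : hSfin.toFinset.card = q + 1 := by
      rw [← Set.ncard_eq_toFinset_card _ hSfin]; exact hμ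
    have hP0 : P = 0 := by
      refine Polynomial.eq_zero_of_natDegree_lt_card_of_eval_eq_zero' P hSfin.toFinset
        (fun x hx => heval x (hSfin.mem_toFinset.mp hx)) ?_
      rw [hcards]
      calc P.natDegree ≤ 2 := Polynomial.natDegree_quadratic_le
        _ < q + 1 := by omega
    have hK' : a ^ q * d - b * c ^ q = 0 := by
      have h0 : P.eval 0 = 0 := by rw [hP0]; simp
      simp only [hPdef, Polynomial.eval_add, Polynomial.eval_mul, Polynomial.eval_pow,
        Polynomial.eval_C, Polynomial.eval_X] at h0
      linear_combination h0
    refine ⟨d / c, a / c, ?_, ?_, c, hc, ?_, ?_, rfl, ?_⟩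
    · have hdc : d / c = -1 * x₀ := by
        field_simp
        linear_combination hpole
      rw [hdc, mul_pow, pow_succ, hneg1, hx₀1]
      norm_num
    · rw [div_pow]
      intro hcontra
      rw [div_eq_div_iff (pow_ne_zero _ hc) hc] at hcontra
      have h6 : (a * d - b * c) * c ^ q = 0 := by
        linear_combination -d * hcontra + c * hK'
      exact hdet ((mul_eq_zero.mp h6).resolve_right (pow_ne_zero _ hc))
    · rw [mul_div_cancel₀ _ hc]
    · rw [div_pow]
      field_simp
      linear_combination -hK'
    · rw [mul_div_cancel₀ _ hc]
  · rintro ⟨γ, δ, hγ, hδ, l, hl, ha, hb, hc, hd⟩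
    rw [ha, hb, hc, hd]
    rw [ha, hb, hc, hd] at hdet
    have hγ1 : γ ^ q * γ = 1 := by rw [← pow_succ]; exact hγ
    have hsub : (fun x : F => if l * x + l * γ = 0 then (none : Option F)
        else some ((l * δ * x + l * (γ * δ ^ q)) / (l * x + l * γ))) '' {x : F | x ^ (q + 1) = 1}
        ⊆ insert none (some '' {y : F | y ^ q = y}) := by
      rintro _ ⟨x, hxS, rfl⟩
      by_cases hden : l * x + l * γ = 0
      · simp only [if_pos hden]
        exact Set.mem_insert _ _
      · simp only [if_neg hden]
        refine Set.mem_insert_of_mem _ ⟨_, ?_, rfl⟩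
        have hx1 : x ^ q * x = 1 := by rw [← pow_succ]; exact hxS
        show ((l * δ * x + l * (γ * δ ^ q)) / (l * x + l * γ)) ^ q
          = (l * δ * x + l * (γ * δ ^ q)) / (l * x + l * γ)
        rw [div_pow, div_eq_div_iff (pow_ne_zero _ hden) hden]
        rw [hadd, hadd, mul_pow, mul_pow, mul_pow, mul_pow, mul_pow, hfrob2 δ]
        linear_combination (l ^ q * l * (δ ^ q - δ)) * hx1 - (l ^ q * l * (δ ^ q - δ)) * hγ1
    have hinj : Set.InjOn (fun x : F => if l * x + l * γ = 0 then (none : Option F)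
        else some ((l * δ * x + l * (γ * δ ^ q)) / (l * x + l * γ))) {x : F | x ^ (q + 1) = 1} := by
      intro x _ y _ hxy
      by_cases h1 : l * x + l * γ = 0 <;> by_cases h2 : l * y + l * γ = 0
      · have : l * x = l * y := by linear_combination h1 - h2
        exact mul_left_cancel₀ hl this
      · simp only [if_pos h1, if_neg h2] at hxy; exact (Option.some_ne_none _ hxy.symm).elim
      · simp only [if_neg h1, if_pos h2] at hxy; exact (Option.some_ne_none _ hxy).elim
      · simp only [if_neg h1, if_neg h2, Option.some.injEq] at hxy
        have h3 := (div_eq_div_iff h1 h2).mp hxy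
        have h4 : (l * δ * (l * γ) - l * (γ * δ ^ q) * l) * (x - y) = 0 := by
          linear_combination h3
        rcases mul_eq_zero.mp h4 with h5 | h5
        · exfalso
          apply hdet
          linear_combination h5
        · exact sub_eq_zero.mp h5
    have h1 : ((fun x : F => if l * x + l * γ = 0 then (none : Option F)
        else some ((l * δ * x + l * (γ * δ ^ q)) / (l * x + l * γ))) ''
        {x : F | x ^ (q + 1) = 1}).ncard = q + 1 := by
      rw [Set.ncard_image_of_injOn hinj, hμ]
    have h2 : (insert (none : Option F) (some '' {y : F | y ^ q = y})).ncard = q + 1 := by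
      rw [Set.ncard_insert_of_notMem (by simp) (Set.toFinite _),
        Set.ncard_image_of_injective _ (Option.some_injective F), hFq]
    exact Set.eq_of_subset_of_ncard_le hsub (by rw [h1, h2]) (Set.toFinite _)
end

section
/- Let q be a prime power, s any integer, t a positive integer with gcd(t, q+1) = 1, and α ∈ F_{q^2}^* with α^{q+1} ≠ 1. Then the rational function g(X) = X^s (α^q X^t - 1)/(X^t - α) permutes μ_{q+1} if and only if s ≡ 0 (mod q+1). -/
open Polynomial Finset

/-- Lemma 4.2: `g(X) = X^s(α^q X^t - 1)/(X^t - α)` permutes `μ_{q+1}` iff `(q+1) ∣ s`. -/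
theorem stmt_7 (p n : ℕ) (hp : p.Prime) (hn : 0 < n) (q : ℕ) (hq : q = p ^ n)
    (F : Type) [Field F] [Fintype F] (hF : Fintype.card F = q ^ 2)
    (s : ℤ) (t : ℕ) (ht : 0 < t) (hgcd : Nat.gcd t (q + 1) = 1)
    (α : F) (hα0 : α ≠ 0) (hα : α ^ (q + 1) ≠ 1) :
    Set.BijOn (fun x : F => x ^ s * (α ^ q * x ^ t - 1) / (x ^ t - α))
        {x : F | x ^ (q + 1) = 1} {x : F | x ^ (q + 1) = 1} ↔
      ((q : ℤ) + 1) ∣ s := by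
  haveI := Fact.mk hp
  classical
  set f : F → F := fun x : F => x ^ s * (α ^ q * x ^ t - 1) / (x ^ t - α) with hf
  -- numerics
  have hq2 : 2 ≤ q := by
    have h1 := Nat.le_self_pow hn.ne' p
    have h2 := hp.two_le
    omega
  have hq1 : 1 < q + 1 := by omega
  have hqpos : 0 < q + 1 := by omega
  -- characteristic
  have hcharp : CharP F p := by
    obtain ⟨k, hkp, hcard⟩ := FiniteField.card F (ringChar F)
    have hd : p ∣ ringChar F ^ (k : ℕ) := by
      rw [← hcard, hF, hq, ← pow_mul]
      exact dvd_pow_self p (by positivity)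
    have : p = ringChar F := (Nat.prime_dvd_prime_iff_eq hp hkp).mp (hp.dvd_of_dvd_pow hd)
    rw [this]; exact ringChar.charP F
  have hq0 : (q : F) = 0 := by
    have h2 : ((q : F)) ^ 2 = 0 := by
      rw [← Nat.cast_pow, ← hF]; exact Nat.cast_card_eq_zero F
    exact pow_eq_zero_iff (by norm_num) |>.mp h2
  have hn1 : ((q + 1 : ℕ) : F) = 1 := by push_cast [hq0]; ring
  have hαq2 : α ^ (q ^ 2) = α := by rw [← hF]; exact FiniteField.pow_card α
  have hcast : ((q : ℤ) + 1) = ((q + 1 : ℕ) : ℤ) := by push_cast; ring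
  -- the finset of (q+1)-th roots of unity
  set S : Finset F := Polynomial.nthRootsFinset (q + 1) (1 : F) with hS
  have hmem : ∀ {x : F}, x ∈ S ↔ x ^ (q + 1) = 1 := fun {x} =>
    Polynomial.mem_nthRootsFinset hqpos (1 : F)
  have hSset : {x : F | x ^ (q + 1) = 1} = (S : Set F) := by
    ext x; simp only [Set.mem_setOf_eq, Finset.mem_coe, hmem]
  have hx1 : ∀ x ∈ S, x ^ (q + 1) = 1 := fun x hx => hmem.mp hx
  have hx0 : ∀ x ∈ S, x ≠ 0 := by
    intro x hx h0
    have := hx1 x hx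
    rw [h0, zero_pow (by omega)] at this
    exact zero_ne_one this
  have hpowS : ∀ x ∈ S, ∀ k : ℕ, x ^ k ∈ S := by
    intro x hx k
    exact hmem.mpr (by rw [← pow_mul, mul_comm, pow_mul, hx1 x hx, one_pow])
  have hsubα : ∀ y ∈ S, y - α ≠ 0 := by
    intro y hy h
    apply hα
    rw [← sub_eq_zero.mp h]
    exact hx1 y hy
  have pow_mod : ∀ x ∈ S, ∀ j : ℕ, x ^ j = x ^ (j % (q + 1)) := by
    intro x hx j
    conv_lhs => rw [← Nat.div_add_mod j (q + 1)]
    rw [pow_add, pow_mul, hx1 x hx, one_pow, one_mul]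
  have zpow_qp1 : ∀ x ∈ S, x ^ ((q + 1 : ℕ) : ℤ) = 1 := fun x hx => by
    rw [zpow_natCast, hx1 x hx]
  have zpow_mod : ∀ x ∈ S, ∀ a : ℤ, x ^ a = x ^ (a % ((q + 1 : ℕ) : ℤ)) := by
    intro x hx a
    conv_lhs => rw [← Int.mul_ediv_add_emod a ((q + 1 : ℕ) : ℤ)]
    rw [zpow_add₀ (hx0 x hx), zpow_mul, zpow_qp1 x hx, one_zpow, one_mul]
  -- a primitive (q+1)-th root of unity
  obtain ⟨g, hg⟩ := IsCyclic.exists_generator (α := Fˣ)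
  have hcardu : Fintype.card Fˣ = q ^ 2 - 1 := by rw [Fintype.card_units, hF]
  have horder : orderOf g = q ^ 2 - 1 := by
    rw [orderOf_eq_card_of_forall_mem_zpowers hg, Nat.card_eq_fintype_card, hcardu]
  have hfac : q ^ 2 - 1 = (q - 1) * (q + 1) := by
    have h : 1 ≤ q := by omega
    have h' : 1 ≤ q ^ 2 := Nat.one_le_pow _ _ (by omega)
    zify [h, h']; ring
  have hordu : orderOf (g ^ (q - 1)) = q + 1 := by
    rw [orderOf_pow, horder, hfac]
    have hg1 : Nat.gcd ((q - 1) * (q + 1)) (q - 1) = q - 1 := by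
      rw [Nat.gcd_comm]; exact Nat.gcd_eq_left ⟨q + 1, rfl⟩
    rw [hg1]
    exact Nat.mul_div_cancel_left _ (by omega)
  set ξ : F := ((g ^ (q - 1) : Fˣ) : F) with hξ
  have hordξ : orderOf ξ = q + 1 := by rw [hξ, orderOf_units]; exact hordu
  have hprim : IsPrimitiveRoot ξ (q + 1) := hordξ ▸ IsPrimitiveRoot.orderOf ξ
  have hcardS : S.card = q + 1 := hprim.card_nthRootsFinset
  -- sums of powers over S
  have L1 : ∀ j : ℕ, ¬ (q + 1) ∣ j → ∑ x ∈ S, x ^ j = 0 := by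
    intro j hj
    have hξS : ξ ∈ S := hmem.mpr hprim.pow_eq_one
    have hξ0 : ξ ≠ 0 := hx0 _ hξS
    have key : ∑ x ∈ S, x ^ j = ξ ^ j * ∑ x ∈ S, x ^ j := by
      rw [Finset.mul_sum]
      refine Finset.sum_nbij' (fun x => ξ⁻¹ * x) (fun x => ξ * x) ?_ ?_ ?_ ?_ ?_
      · intro a ha
        refine hmem.mpr ?_
        rw [mul_pow, inv_pow, hprim.pow_eq_one, inv_one, one_mul, hx1 a ha]
      · intro a ha
        refine hmem.mpr ?_
        rw [mul_pow, hprim.pow_eq_one, one_mul, hx1 a ha]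
      · intro a _; field_simp
      · intro a _; field_simp
      · intro a _
        rw [mul_pow, inv_pow, ← mul_assoc, mul_inv_cancel₀ (pow_ne_zero _ hξ0), one_mul]
    have hne : ξ ^ j ≠ 1 := fun h => hj ((hprim.pow_eq_one_iff_dvd j).mp h)
    have h2 : (ξ ^ j - 1) * ∑ x ∈ S, x ^ j = 0 := by linear_combination -key
    rcases mul_eq_zero.mp h2 with h | h
    · exact absurd (sub_eq_zero.mp h) hne
    · exact h
  have L2 : ∀ j : ℕ, (q + 1) ∣ j → ∑ x ∈ S, x ^ j = 1 := by
    rintro j ⟨c, rfl⟩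
    have hone : ∀ x ∈ S, x ^ ((q + 1) * c) = 1 := fun x hx => by
      rw [pow_mul, hx1 x hx, one_pow]
    rw [Finset.sum_congr rfl hone, Finset.sum_const, hcardS, nsmul_eq_mul, hn1, mul_one]
  -- inverse of t mod q+1
  obtain ⟨t', ht'⟩ : ∃ t', t * t' % (q + 1) = 1 :=
    let ⟨m, _, h⟩ := Nat.exists_mul_mod_eq_one_of_coprime hgcd hq1; ⟨m, h⟩
  have hpow_tt' : ∀ x ∈ S, (x ^ t) ^ t' = x := by
    intro x hx
    rw [← pow_mul, pow_mod x hx, ht', pow_one]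
  have hpow_t't : ∀ x ∈ S, (x ^ t') ^ t = x := by
    intro x hx
    rw [← pow_mul, mul_comm, pow_mod x hx, ht', pow_one]
  -- the reduced exponent m
  set Mi : ℤ := ((t' : ℤ) * s) % ((q + 1 : ℕ) : ℤ) with hMi
  have hMi0 : 0 ≤ Mi := Int.emod_nonneg _ (by exact_mod_cast hqpos.ne')
  have hMilt : Mi < ((q + 1 : ℕ) : ℤ) := Int.emod_lt_of_pos _ (by exact_mod_cast hqpos)
  set m : ℕ := Mi.toNat with hm
  have hmlt : m < q + 1 := by omega
  have hym : ∀ y ∈ S, y ^ ((t' : ℤ) * s) = y ^ m := by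
    intro y hy
    rw [zpow_mod y hy, ← hMi, ← Int.toNat_of_nonneg hMi0, zpow_natCast]
  constructor
  · -- forward direction
    intro hbij
    rw [hSset] at hbij
    have hsum_eq : ∑ x ∈ S, f x = ∑ x ∈ S, x := by
      refine Finset.sum_bij (fun a _ => f a) ?_ ?_ ?_ ?_
      · intro a ha; exact Finset.mem_coe.mp (hbij.mapsTo (Finset.mem_coe.mpr ha))
      · intro a₁ h₁ a₂ h₂ h
        exact hbij.injOn (Finset.mem_coe.mpr h₁) (Finset.mem_coe.mpr h₂) h
      · intro b hb
        obtain ⟨a, ha, hab⟩ := hbij.surjOn (Finset.mem_coe.mpr hb)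
        exact ⟨a, Finset.mem_coe.mp ha, hab⟩
      · intro a _; rfl
    have hsum1 : ∑ x ∈ S, x = 0 := by
      have h1 := L1 1 (by intro h; have := Nat.le_of_dvd one_pos h; omega)
      simpa using h1
    have hxs_eq : ∀ x ∈ S, x ^ s = (x ^ t) ^ m := by
      intro x hx
      have hxtS : x ^ t ∈ S := hpowS x hx t
      calc x ^ s = ((x ^ t) ^ t') ^ s := by rw [hpow_tt' x hx]
        _ = (x ^ t) ^ ((t' : ℤ) * s) := by
            rw [← zpow_natCast (x ^ t) t', ← zpow_mul]
        _ = (x ^ t) ^ m := hym _ hxtS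
    have hre : ∑ x ∈ S, f x = ∑ y ∈ S, y ^ m * (α ^ q * y - 1) / (y - α) := by
      refine Finset.sum_nbij' (fun x => x ^ t) (fun y => y ^ t') ?_ ?_ ?_ ?_ ?_
      · intro a ha; exact hpowS a ha t
      · intro a ha; exact hpowS a ha t'
      · intro a ha; exact hpow_tt' a ha
      · intro a ha; exact hpow_t't a ha
      · intro a ha
        simp only [hf]
        rw [hxs_eq a ha]
    have hcomp : ∀ y ∈ S, y ^ m * (α ^ q * y - 1) / (y - α)
        = α ^ q * y ^ m - ∑ i ∈ Finset.range (q + 1), y ^ (m + i) * α ^ (q - i) := by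
      intro y hy
      have hd : y - α ≠ 0 := hsubα y hy
      have hgeo : (∑ i ∈ Finset.range (q + 1), y ^ i * α ^ (q - i)) * (y - α)
          = 1 - α ^ (q + 1) := by
        have h := geom_sum₂_mul y α (q + 1)
        simp only [Nat.add_sub_cancel] at h
        rw [hx1 y hy] at h
        exact h
      have hsum_fact : ∑ i ∈ Finset.range (q + 1), y ^ (m + i) * α ^ (q - i)
          = y ^ m * ∑ i ∈ Finset.range (q + 1), y ^ i * α ^ (q - i) := by
        rw [Finset.mul_sum]
        exact Finset.sum_congr rfl fun i _ => by rw [pow_add]; ring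
      rw [div_eq_iff hd, hsum_fact]
      linear_combination (y ^ m) * hgeo
    have hA : ∑ y ∈ S, y ^ m * (α ^ q * y - 1) / (y - α)
        = α ^ q * (∑ y ∈ S, y ^ m)
          - ∑ i ∈ Finset.range (q + 1), α ^ (q - i) * ∑ y ∈ S, y ^ (m + i) := by
      rw [Finset.sum_congr rfl hcomp, Finset.sum_sub_distrib, ← Finset.mul_sum]
      congr 1
      rw [Finset.sum_comm]
      refine Finset.sum_congr rfl fun i _ => ?_
      rw [← Finset.sum_mul, mul_comm]
    by_cases hm0 : m = 0
    · have hMi_eq : Mi = 0 := by omega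
      have hdvd : ((q + 1 : ℕ) : ℤ) ∣ (t' : ℤ) * s := Int.dvd_of_emod_eq_zero hMi_eq
      have hcop : IsCoprime ((q + 1 : ℕ) : ℤ) (t' : ℤ) := by
        refine ⟨-(((t * t') / (q + 1) : ℕ) : ℤ), (t : ℤ), ?_⟩
        have hdm := Nat.div_add_mod (t * t') (q + 1)
        rw [ht'] at hdm
        have hdm' : ((q + 1 : ℕ) : ℤ) * ((t * t' / (q + 1) : ℕ) : ℤ) + 1
            = (t : ℤ) * (t' : ℤ) := by exact_mod_cast hdm
        linear_combination -hdm'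
      have : ((q + 1 : ℕ) : ℤ) ∣ s := hcop.dvd_of_dvd_mul_left hdvd
      rwa [hcast]
    · exfalso
      have h1m : 1 ≤ m := Nat.one_le_iff_ne_zero.mpr hm0
      have hSm : ∑ y ∈ S, y ^ m = 0 :=
        L1 m (fun hd => by have := Nat.le_of_dvd (by omega) hd; omega)
      have hinner : ∑ i ∈ Finset.range (q + 1), α ^ (q - i) * ∑ y ∈ S, y ^ (m + i)
          = α ^ (m - 1) := by
        rw [Finset.sum_eq_single (q + 1 - m)]
        · rw [L2 (m + (q + 1 - m)) ⟨1, by omega⟩, mul_one]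
          congr 1
          omega
        · intro i hi hne
          rw [L1 (m + i) ?_, mul_zero]
          rintro ⟨k, hk⟩
          have hi' : i < q + 1 := Finset.mem_range.mp hi
          rcases k with _ | _ | k
          · omega
          · omega
          · have h2 : 2 * (q + 1) ≤ (q + 1) * (k + 2) :=
              by calc 2 * (q + 1) = (q + 1) * 2 := by ring
                _ ≤ (q + 1) * (k + 2) := Nat.mul_le_mul_left _ (by omega)
            rw [← hk] at h2
            omega
        · intro h
          exact absurd (Finset.mem_range.mpr (by omega)) h
      have hzero : (0 : F) = -α ^ (m - 1) := by
        calc (0 : F) = ∑ x ∈ S, f x := (hsum_eq.trans hsum1).symm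
          _ = α ^ q * 0 - α ^ (m - 1) := by rw [hre, hA, hSm, hinner]
          _ = -α ^ (m - 1) := by ring
      exact pow_ne_zero (m - 1) hα0 (by linear_combination hzero)
  · -- backward direction
    intro hdvd
    rw [hSset]
    obtain ⟨c, hc⟩ := hdvd
    have hxs : ∀ x ∈ S, x ^ s = 1 := by
      intro x hx
      rw [hc, hcast, zpow_mul, zpow_qp1 x hx, one_zpow]
    have hN0 : ∀ u ∈ S, α ^ q * u - 1 ≠ 0 := by
      intro u hu h
      have h1 : α ^ q * u = 1 := by rw [← sub_eq_zero]; exact h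
      have h2 : (α ^ q) ^ (q + 1) * u ^ (q + 1) = 1 := by
        rw [← mul_pow, h1, one_pow]
      rw [hx1 u hu, mul_one] at h2
      apply hα
      have h3 : α ^ (q * (q + 1)) = 1 := by rw [pow_mul]; exact h2
      rw [show q * (q + 1) = q ^ 2 + q by ring, pow_add, hαq2] at h3
      rw [← h3, ← pow_succ']
    have hfrob : ∀ a b : F, (a - b) ^ q = a ^ q - b ^ q := by
      intro a b; rw [hq]; exact sub_pow_char_pow a b n
    have hmaps : ∀ x ∈ S, f x ∈ S := by
      intro x hx
      have hu : x ^ t ∈ S := hpowS x hx t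
      have hu1 : (x ^ t) ^ (q + 1) = 1 := hx1 _ hu
      have hu0 : (x ^ t) ≠ 0 := hx0 _ hu
      have hNe := hN0 _ hu
      have hDe := hsubα _ hu
      refine hmem.mpr ?_
      simp only [hf]
      rw [hxs x hx, one_mul, div_pow]
      have hNq : (α ^ q * x ^ t - 1) ^ q = α * (x ^ t) ^ q - 1 := by
        rw [hfrob, mul_pow, ← pow_mul, show q * q = q ^ 2 by ring, hαq2, one_pow]
      have k1 : x ^ t * (α ^ q * x ^ t - 1) ^ q = α - x ^ t := by
        rw [hNq]
        have h5 : x ^ t * (α * (x ^ t) ^ q - 1) = α * (x ^ t) ^ (q + 1) - x ^ t := by ring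
        rw [h5, hu1, mul_one]
      have k2 : x ^ t * (x ^ t - α) ^ q = 1 - α ^ q * x ^ t := by
        rw [hfrob]
        have h5 : x ^ t * ((x ^ t) ^ q - α ^ q) = (x ^ t) ^ (q + 1) - α ^ q * x ^ t := by ring
        rw [h5, hu1]
      have key : (α ^ q * x ^ t - 1) ^ (q + 1) = (x ^ t - α) ^ (q + 1) := by
        refine mul_left_cancel₀ hu0 ?_
        calc x ^ t * (α ^ q * x ^ t - 1) ^ (q + 1)
            = (x ^ t * (α ^ q * x ^ t - 1) ^ q) * (α ^ q * x ^ t - 1) := by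
              rw [pow_succ]; ring
          _ = (α - x ^ t) * (α ^ q * x ^ t - 1) := by rw [k1]
          _ = (1 - α ^ q * x ^ t) * (x ^ t - α) := by ring
          _ = (x ^ t * (x ^ t - α) ^ q) * (x ^ t - α) := by rw [k2]
          _ = x ^ t * (x ^ t - α) ^ (q + 1) := by rw [pow_succ]; ring
      rw [key, div_self (pow_ne_zero _ hDe)]
    have hinj : ∀ x ∈ S, ∀ y ∈ S, f x = f y → x = y := by
      intro x hx y hy hxy
      have hxtS : x ^ t ∈ S := hpowS x hx t
      have hytS : y ^ t ∈ S := hpowS y hy t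
      simp only [hf] at hxy
      rw [hxs x hx, hxs y hy, one_mul, one_mul,
        div_eq_div_iff (hsubα _ hxtS) (hsubα _ hytS)] at hxy
      have h5 : (x ^ t - y ^ t) * (1 - α ^ (q + 1)) = 0 := by
        linear_combination hxy
      have hab : x ^ t = y ^ t := by
        rcases mul_eq_zero.mp h5 with h | h
        · exact sub_eq_zero.mp h
        · exact absurd (sub_eq_zero.mp h).symm hα
      calc x = (x ^ t) ^ t' := (hpow_tt' x hx).symm
        _ = (y ^ t) ^ t' := by rw [hab]
        _ = y := hpow_tt' y hy
    have himg : S.image f = S := by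
      apply Finset.eq_of_subset_of_card_le
      · intro b hb
        obtain ⟨a, ha, rfl⟩ := Finset.mem_image.mp hb
        exact hmaps a ha
      · rw [Finset.card_image_of_injOn]
        intro a ha b hb
        exact hinj a (Finset.mem_coe.mp ha) b (Finset.mem_coe.mp hb)
    refine ⟨?_, ?_, ?_⟩
    · intro x hx
      exact Finset.mem_coe.mpr (hmaps x (Finset.mem_coe.mp hx))
    · intro x hx y hy h
      exact hinj x (Finset.mem_coe.mp hx) y (Finset.mem_coe.mp hy) h
    · intro b hb
      have hb' : b ∈ S.image f := by rw [himg]; exact Finset.mem_coe.mp hb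
      obtain ⟨a, ha, hab⟩ := Finset.mem_image.mp hb'
      exact ⟨a, Finset.mem_coe.mpr ha, hab⟩
end

section
/- Let q be a prime power, r and t positive integers with gcd(t, q+1) = 1, and α ∈ F_{q^2}^*. Then the polynomial f(X) = X^r (X^{t(q-1)} - α) permutes F_{q^2} if and only if gcd(r, q-1) = 1, r ≡ t (mod q+1), and α^{q+1} ≠ 1. -/
open Finset in
lemma aux_sum_pow_field (K : Type) [Field K] [Fintype K] (k : ℕ) (hk : k ≠ 0) :
    ∑ x : K, x ^ k = if (Fintype.card K - 1) ∣ k then (-1 : K) else 0 := by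
  classical
  let φ : Kˣ ↪ K := ⟨fun x ↦ x, Units.val_injective⟩
  have huniv : Finset.univ.map φ = Finset.univ \ {0} := by
    ext x
    simpa only [Finset.mem_map, Finset.mem_univ, Function.Embedding.coeFn_mk, true_and,
      Finset.mem_sdiff, Finset.mem_singleton, φ] using (show (∃ a : Kˣ, (a : K) = x) ↔ ¬x = 0 from isUnit_iff_ne_zero)
  calc
    ∑ x : K, x ^ k = ∑ x ∈ Finset.univ \ {(0 : K)}, x ^ k := by
      rw [← Finset.sum_sdiff ({0} : Finset K).subset_univ, Finset.sum_singleton, zero_pow hk,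
        add_zero]
    _ = ∑ x : Kˣ, ((x : K)) ^ k := by rw [← huniv, Finset.sum_map]; rfl
    _ = _ := by simpa using FiniteField.sum_pow_units K k

set_option maxHeartbeats 1000000 in
lemma aux_pow_eq_pow_of_modEq {M : Type*} [Monoid M] {w : M} {d a b : ℕ}
    (hw : w ^ d = 1) (h : a ≡ b [MOD d]) : w ^ a = w ^ b := by
  conv_lhs => rw [← Nat.div_add_mod a d]
  conv_rhs => rw [← Nat.div_add_mod b d]
  rw [pow_add, pow_add, pow_mul, pow_mul, hw, one_pow, one_pow]
  rw [Nat.ModEq] at h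
  rw [h]

/-- Corollary 4.3: `f(X) = X^r (X^{t(q-1)} - α)` permutes `F_{q²}` iff `gcd(r, q-1) = 1`,
`r ≡ t (mod q+1)` and `α^{q+1} ≠ 1`. -/
theorem stmt_8 (p n : ℕ) (hp : p.Prime) (hn : 0 < n) (q : ℕ) (hq : q = p ^ n)
    (F : Type) [Field F] [Fintype F] (hF : Fintype.card F = q ^ 2)
    (r t : ℕ) (hr : 0 < r) (ht : 0 < t) (hgcd : Nat.gcd t (q + 1) = 1)
    (α : F) (hα0 : α ≠ 0) :
    Function.Bijective (fun x : F => x ^ r * (x ^ (t * (q - 1)) - α)) ↔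
      (Nat.gcd r (q - 1) = 1 ∧ r ≡ t [MOD q + 1] ∧ α ^ (q + 1) ≠ 1) := by
  classical
  set f : F → F := fun x : F => x ^ r * (x ^ (t * (q - 1)) - α) with hf
  have hq2 : 2 ≤ q := by
    rw [hq]
    have h1 : 2 ^ 1 ≤ p ^ 1 := Nat.pow_le_pow_left hp.two_le 1
    have h2 : p ^ 1 ≤ p ^ n := Nat.pow_le_pow_right hp.pos hn
    simpa using h1.trans h2
  have hq21 : q ^ 2 - 1 = (q - 1) * (q + 1) := by
    obtain ⟨m, rfl⟩ : ∃ m, q = m + 2 := ⟨q - 2, by omega⟩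
    have e1 : (m + 2) ^ 2 = (m + 2) * (m + 2) := sq (m + 2)
    have e2 : (m + 1) * (m + 3) + 1 = (m + 2) * (m + 2) := by ring
    simp only [show m + 2 - 1 = m + 1 from by omega, show m + 2 + 1 = m + 3 from by omega]
    omega
  -- characteristic
  haveI hfp : Fact p.Prime := ⟨hp⟩
  haveI hchar : CharP F p := by
    have h1 : ringChar F ∣ p ^ (2 * n) := by
      have := FiniteField.cast_card_eq_zero F
      rw [hF, hq, ← pow_mul, mul_comm n 2] at this
      exact ringChar.dvd this
    have h2 : (ringChar F).Prime := CharP.char_is_prime F (ringChar F)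
    have h3 : ringChar F = p := by
      have := h2.dvd_of_dvd_pow h1
      exact (Nat.prime_dvd_prime_iff_eq h2 hp).mp this
    rw [← h3]; exact ringChar.charP F
  have frob : ∀ a b : F, (a - b) ^ q = a ^ q - b ^ q := by
    intro a b; rw [hq]; exact sub_pow_char_pow a b n
  have hcard1 : ∀ x : F, x ≠ 0 → x ^ (q ^ 2 - 1) = 1 := by
    intro x hx
    have := FiniteField.pow_card_sub_one_eq_one x hx
    rwa [hF] at this
  have hf0 : f 0 = 0 := by
    simp [hf, zero_pow hr.ne']
  obtain ⟨t', -, htt'⟩ := Nat.exists_mul_mod_eq_one_of_coprime hgcd (by omega)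
  have htt : t * t' ≡ 1 [MOD q + 1] := by
    unfold Nat.ModEq; rw [htt', Nat.mod_eq_of_lt (by omega)]
  constructor
  · -- forward direction
    intro hbij
    obtain ⟨g, hg⟩ := IsCyclic.exists_generator (α := Fˣ)
    have hog : orderOf g = q ^ 2 - 1 := by
      rw [orderOf_eq_card_of_forall_mem_zpowers hg, Nat.card_eq_fintype_card,
        Fintype.card_units, hF]
    -- α^(q+1) ≠ 1
    have hα1 : α ^ (q + 1) ≠ 1 := by
      intro hα1
      set αu : Fˣ := Units.mk0 α hα0 with hαu
      obtain ⟨j, hj⟩ : ∃ j : ℕ, g ^ j = αu := by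
        have := (mem_powers_iff_mem_zpowers).mpr (hg αu)
        exact Submonoid.mem_powers_iff αu g |>.mp this
      have hαu1 : αu ^ (q + 1) = 1 := by
        apply Units.ext
        simpa [hαu] using hα1
      have hjq : (q - 1) * (q + 1) ∣ j * (q + 1) := by
        rw [← hq21, ← hog]
        apply orderOf_dvd_of_pow_eq_one
        rw [pow_mul, hj, hαu1]
      have hj' : (q - 1) ∣ j := (Nat.mul_dvd_mul_iff_right (show 0 < q + 1 by omega)).mp hjq
      obtain ⟨j', rfl⟩ := hj'
      set x : Fˣ := g ^ (t' * j') with hx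
      have hxα : (↑x : F) ^ (t * (q - 1)) = α := by
        have hxu : x ^ (t * (q - 1)) = αu := by
          rw [hx, ← pow_mul, ← hj]
          rw [pow_eq_pow_iff_modEq, hog, hq21]
          have m2 : (q - 1) * (t * t' * j') ≡ (q - 1) * (1 * j') [MOD (q - 1) * (q + 1)] :=
            (htt.mul_right j').mul_left' (q - 1)
          calc t' * j' * (t * (q - 1)) = (q - 1) * (t * t' * j') := by ring
          _ ≡ (q - 1) * (1 * j') [MOD (q - 1) * (q + 1)] := m2
          _ = (q - 1) * j' := by ring
        have := congrArg Units.val hxu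
        simpa [hαu] using this
      have : f ↑x = f 0 := by
        rw [hf0]; simp only [hf, hxα]; ring
      exact Units.ne_zero x (hbij.injective this)
    -- gcd(r, q-1) = 1
    have hgcdr : Nat.gcd r (q - 1) = 1 := by
      by_contra hne
      set e := Nat.gcd r (q - 1) with he
      have he1 : e ∣ q - 1 := Nat.gcd_dvd_right r (q - 1)
      have her : e ∣ r := Nat.gcd_dvd_left r (q - 1)
      have he0 : e ≠ 0 := by
        intro h
        rw [he] at h
        have := Nat.eq_zero_of_gcd_eq_zero_left h
        omega
      have he2 : 2 ≤ e := by omega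
      have heN : e ∣ q ^ 2 - 1 := he1.trans ⟨q + 1, hq21⟩
      have hN0 : 0 < q ^ 2 - 1 := by
        have : 4 ≤ q ^ 2 := by nlinarith
        omega
      set z : Fˣ := g ^ ((q ^ 2 - 1) / e) with hz
      have hze : z ^ e = 1 := by
        rw [hz, ← pow_mul, Nat.div_mul_cancel heN, ← hog, pow_orderOf_eq_one]
      have hz1 : z ≠ 1 := by
        intro h
        have hd : (q ^ 2 - 1) ∣ (q ^ 2 - 1) / e := by
          have h4 : g ^ ((q ^ 2 - 1) / e) = 1 := by rw [← hz, h]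
          have h5 := orderOf_dvd_of_pow_eq_one h4
          rwa [hog] at h5
        have hlt : (q ^ 2 - 1) / e < q ^ 2 - 1 := Nat.div_lt_self hN0 he2
        have hpos : 0 < (q ^ 2 - 1) / e := Nat.div_pos (Nat.le_of_dvd hN0 heN) (by omega)
        have := Nat.le_of_dvd hpos hd
        omega
      have hzr : (z : F) ^ r = 1 := by
        have h0 : z ^ r = 1 := by
          rw [← Nat.mul_div_cancel' her, pow_mul, hze, one_pow]
        simpa using congrArg Units.val h0
      have hzq : (z : F) ^ (t * (q - 1)) = 1 := by
        have h1 : z ^ (q - 1) = 1 := by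
          rw [← Nat.mul_div_cancel' he1, pow_mul, hze, one_pow]
        have h2 : (z : F) ^ (q - 1) = 1 := by simpa using congrArg Units.val h1
        rw [mul_comm, pow_mul, h2, one_pow]
      have : f ↑z = f 1 := by
        simp only [hf]; simp [hzr, hzq]
      have := hbij.injective this
      exact hz1 (Units.ext (by simpa using this))
    refine ⟨hgcdr, ?_, hα1⟩
    -- r ≡ t [MOD q+1]
    by_contra hrt
    haveI : NeZero (q + 1) := ⟨by omega⟩
    have htu : IsUnit ((t : ZMod (q + 1))) := (ZMod.isUnit_iff_coprime t (q + 1)).mpr hgcd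
    set c : ZMod (q + 1) := (-(r : ZMod (q + 1))) * (t : ZMod (q + 1))⁻¹ with hc
    set i0 := c.val with hi0
    have hci0 : ((i0 : ℕ) : ZMod (q + 1)) = c := by
      rw [hi0, ZMod.natCast_val, ZMod.cast_id]
    have hi0lt : i0 < q + 1 := ZMod.val_lt c
    have htc : (t : ZMod (q + 1)) * c = -(r : ZMod (q + 1)) := by
      rw [hc]
      calc (t : ZMod (q + 1)) * (-(r : ZMod (q + 1)) * (t : ZMod (q + 1))⁻¹)
          = -(r : ZMod (q + 1)) * ((t : ZMod (q + 1)) * (t : ZMod (q + 1))⁻¹) := by ring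
      _ = -(r : ZMod (q + 1)) := by rw [ZMod.mul_inv_of_unit _ htu, mul_one]
    have hdvd_iff : ∀ i : ℕ, ((q + 1) ∣ (r + t * i)) ↔ ((i : ℕ) : ZMod (q + 1)) = c := by
      intro i
      rw [← ZMod.natCast_eq_zero_iff]
      push_cast
      constructor
      · intro h
        have h2 : (t : ZMod (q + 1)) * i = -(r : ZMod (q + 1)) := by linear_combination h
        calc ((i : ℕ) : ZMod (q + 1))
            = (t : ZMod (q + 1))⁻¹ * ((t : ZMod (q + 1)) * i) := by
              rw [← mul_assoc, ZMod.inv_mul_of_unit _ htu, one_mul]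
        _ = (t : ZMod (q + 1))⁻¹ * (-(r : ZMod (q + 1))) := by rw [h2]
        _ = c := by rw [hc]; ring
      · intro h
        rw [h]
        linear_combination htc
    have hi0ne : i0 ≠ q := by
      intro h
      apply hrt
      rw [← ZMod.natCast_eq_natCast_iff]
      have hq1 : ((q : ℕ) : ZMod (q + 1)) = -1 := by
        have := ZMod.natCast_self (q + 1)
        push_cast at this
        linear_combination this
      have hcq : c = -1 := by rw [← hci0, h, hq1]
      have : (t : ZMod (q + 1)) * c = -(t : ZMod (q + 1)) := by rw [hcq]; ring
      have h3 : -(r : ZMod (q + 1)) = -(t : ZMod (q + 1)) := by rw [← htc, this]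
      linear_combination -h3
    have hfilter : Finset.filter (fun i => (q + 1) ∣ (r + t * i)) (Finset.range q) = {i0} := by
      ext i
      simp only [Finset.mem_filter, Finset.mem_range, Finset.mem_singleton]
      constructor
      · rintro ⟨hiq, hdvd⟩
        have h2 : ((i : ℕ) : ZMod (q + 1)) = ((i0 : ℕ) : ZMod (q + 1)) := by
          rw [(hdvd_iff i).mp hdvd, hci0]
        have := (ZMod.natCast_eq_natCast_iff _ _ _).mp h2
        unfold Nat.ModEq at this
        rw [Nat.mod_eq_of_lt (by omega), Nat.mod_eq_of_lt (by omega)] at this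
        exact this
      · rintro rfl
        exact ⟨by omega, (hdvd_iff i0).mpr hci0⟩
    have hsum0 : ∑ x : F, (f x) ^ (q - 1) = 0 := by
      have h1 : ∑ x : F, (f x) ^ (q - 1) = ∑ y : F, y ^ (q - 1) :=
        hbij.sum_comp (fun y => y ^ (q - 1))
      rw [h1]
      apply FiniteField.sum_pow_lt_card_sub_one
      rw [hF]
      have : q < q ^ 2 := by nlinarith
      omega
    have hexp : ∀ x : F, (f x) ^ (q - 1)
        = ∑ i ∈ Finset.range q, α ^ (q - 1 - i) * x ^ ((q - 1) * (r + t * i)) := by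
      intro x
      by_cases hx : x = 0
      · subst hx
        rw [hf0, zero_pow (by omega : q - 1 ≠ 0)]
        symm
        apply Finset.sum_eq_zero
        intro i _
        rw [zero_pow (Nat.mul_ne_zero (by omega) (by omega)), mul_zero]
      · set W := x ^ (t * (q - 1)) with hW
        have hWq1 : W ^ (q + 1) = 1 := by
          rw [hW, ← pow_mul]
          have : t * (q - 1) * (q + 1) = (q ^ 2 - 1) * t := by rw [hq21]; ring
          rw [this, pow_mul, hcard1 x hx, one_pow]
        have hW1 : W ^ q * W = 1 := by rw [← pow_succ, hWq1]
        have hWα : W ≠ α := by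
          intro h; apply hα1; rw [← h, hWq1]
        have hfrob : (W - α) ^ q = W ^ q - α ^ q := frob W α
        have hgeo : (∑ i ∈ Finset.range q, W ^ i * α ^ (q - 1 - i)) * (W - α)
            = W ^ q - α ^ q := geom_sum₂_mul W α q
        have hcancel : (W - α) ^ (q - 1) = ∑ i ∈ Finset.range q, W ^ i * α ^ (q - 1 - i) := by
          apply mul_right_cancel₀ (sub_ne_zero.mpr hWα)
          rw [hgeo, ← hfrob, ← pow_succ]
          congr 1
          omega
        calc (f x) ^ (q - 1) = x ^ (r * (q - 1)) * (W - α) ^ (q - 1) := by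
              simp only [hf, ← hW]; rw [mul_pow, ← pow_mul]
        _ = ∑ i ∈ Finset.range q, α ^ (q - 1 - i) * x ^ ((q - 1) * (r + t * i)) := by
            rw [hcancel, Finset.mul_sum]
            apply Finset.sum_congr rfl
            intro i _
            rw [hW, ← pow_mul, ← mul_assoc, ← pow_add]
            rw [show r * (q - 1) + t * (q - 1) * i = (q - 1) * (r + t * i) from by ring]
            ring
    have hval : ∑ x : F, (f x) ^ (q - 1) = -α ^ (q - 1 - i0) := by
      calc ∑ x : F, (f x) ^ (q - 1)
          = ∑ i ∈ Finset.range q, α ^ (q - 1 - i) * (∑ x : F, x ^ ((q - 1) * (r + t * i))) := by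
            simp_rw [hexp]
            rw [Finset.sum_comm]
            simp_rw [← Finset.mul_sum]
      _ = ∑ i ∈ Finset.range q,
            (if (q + 1) ∣ (r + t * i) then -α ^ (q - 1 - i) else 0) := by
            apply Finset.sum_congr rfl
            intro i _
            rw [aux_sum_pow_field F _ (Nat.mul_ne_zero (by omega) (by omega)), hF]
            have hiff : (q ^ 2 - 1) ∣ ((q - 1) * (r + t * i)) ↔ (q + 1) ∣ (r + t * i) := by
              rw [hq21]
              exact Nat.mul_dvd_mul_iff_left (show 0 < q - 1 by omega)
            rw [if_congr hiff rfl rfl]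
            split_ifs <;> ring
      _ = -α ^ (q - 1 - i0) := by
            rw [← Finset.sum_filter, hfilter, Finset.sum_singleton]
    rw [hsum0] at hval
    have : α ^ (q - 1 - i0) = 0 := neg_eq_zero.mp hval.symm
    exact pow_ne_zero _ hα0 this
  · -- backward direction
    rintro ⟨hgcdr, hmod, hα1⟩
    have hinj : Function.Injective f := by
      have hfz : ∀ z : F, f z = 0 → z = 0 := by
        intro z hz
        by_contra hz0
        rcases mul_eq_zero.mp hz with h | h
        · exact hz0 (pow_eq_zero_iff hr.ne' |>.mp h)
        · apply hα1
          have hzα : z ^ (t * (q - 1)) = α := by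
            have := sub_eq_zero.mp h; exact this
          rw [← hzα, ← pow_mul]
          have : t * (q - 1) * (q + 1) = (q ^ 2 - 1) * t := by rw [hq21]; ring
          rw [this, pow_mul, hcard1 z hz0, one_pow]
      intro x y hxy
      by_cases hx : x = 0
      · subst hx
        rw [hf0] at hxy
        exact (hfz y hxy.symm).symm
      by_cases hy : y = 0
      · subst hy
        rw [hf0] at hxy
        exact hfz x hxy
      -- main case
      set u := x ^ (q - 1) with hu
      set v := y ^ (q - 1) with hv
      set U := x ^ (t * (q - 1)) with hU
      set V := y ^ (t * (q - 1)) with hV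
      have hud : u ^ (q + 1) = 1 := by
        rw [hu, ← pow_mul, ← hq21, hcard1 x hx]
      have hvd : v ^ (q + 1) = 1 := by
        rw [hv, ← pow_mul, ← hq21, hcard1 y hy]
      have huU : u ^ t = U := by rw [hu, hU, ← pow_mul, mul_comm (q-1) t]
      have hvV : v ^ t = V := by rw [hv, hV, ← pow_mul, mul_comm (q-1) t]
      have hUq1 : U ^ (q + 1) = 1 := by rw [← huU, ← pow_mul, mul_comm, pow_mul, hud, one_pow]
      have hVq1 : V ^ (q + 1) = 1 := by rw [← hvV, ← pow_mul, mul_comm, pow_mul, hvd, one_pow]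
      have hU1 : U ^ q * U = 1 := by rw [← pow_succ, hUq1]
      have hV1 : V ^ q * V = 1 := by rw [← pow_succ, hVq1]
      have hUα : U ≠ α := fun h => hα1 (by rw [← h, hUq1])
      have hVα : V ≠ α := fun h => hα1 (by rw [← h, hVq1])
      have h1mα : (1 : F) - α ^ q * α ≠ 0 := by
        intro h
        apply hα1
        rw [pow_succ]
        exact (sub_eq_zero.mp h).symm
      -- powers r and t agree on q+1-th roots of unity
      have hpoweq : ∀ w : F, w ^ (q + 1) = 1 → w ^ r = w ^ t := by
        intro w hw
        exact aux_pow_eq_pow_of_modEq hw hmod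
      -- step A : U = V
      have hfx : (f x) ^ (q - 1) = U * (U - α) ^ (q - 1) := by
        have h2 : (x ^ r) ^ (q - 1) = U := by
          rw [← pow_mul, mul_comm, pow_mul, ← hu, hpoweq u hud, huU]
        simp only [hf, ← hU]
        rw [mul_pow, h2]
      have hfy : (f y) ^ (q - 1) = V * (V - α) ^ (q - 1) := by
        have h2 : (y ^ r) ^ (q - 1) = V := by
          rw [← pow_mul, mul_comm, pow_mul, ← hv, hpoweq v hvd, hvV]
        simp only [hf, ← hV]
        rw [mul_pow, h2]
      have hE : U * (U - α) ^ (q - 1) = V * (V - α) ^ (q - 1) := by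
        rw [← hfx, ← hfy, hxy]
      have hEmul : U * (U - α) ^ (q - 1) * ((U - α) * (V - α))
          = V * (V - α) ^ (q - 1) * ((U - α) * (V - α)) := by rw [hE]
      have hq1succ : q - 1 + 1 = q := by omega
      have hlhs : U * (U - α) ^ (q - 1) * ((U - α) * (V - α))
          = (1 - α ^ q * U) * (V - α) := by
        calc U * (U - α) ^ (q - 1) * ((U - α) * (V - α))
            = ((U - α) ^ (q - 1) * (U - α)) * (U * (V - α)) := by ring
        _ = (U ^ q - α ^ q) * (U * (V - α)) := by rw [← pow_succ, hq1succ, frob]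
        _ = (1 - α ^ q * U) * (V - α) := by linear_combination (V - α) * hU1
      have hrhs : V * (V - α) ^ (q - 1) * ((U - α) * (V - α))
          = (1 - α ^ q * V) * (U - α) := by
        calc V * (V - α) ^ (q - 1) * ((U - α) * (V - α))
            = ((V - α) ^ (q - 1) * (V - α)) * (V * (U - α)) := by ring
        _ = (V ^ q - α ^ q) * (V * (U - α)) := by rw [← pow_succ, hq1succ, frob]
        _ = (1 - α ^ q * V) * (U - α) := by linear_combination (U - α) * hV1
      have hE2 : (1 - α ^ q * U) * (V - α) = (1 - α ^ q * V) * (U - α) := by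
        rw [← hlhs, ← hrhs, hEmul]
      have hUV : U = V := by
        have hkey : (V - U) * (1 - α ^ q * α) = 0 := by linear_combination hE2
        rcases mul_eq_zero.mp hkey with h | h
        · have := sub_eq_zero.mp h; exact this.symm
        · exact absurd h h1mα
      -- step B : u = v
      have huv : u = v := by
        have h1 : u ^ (t * t') = v ^ (t * t') := by
          rw [pow_mul, pow_mul, huU, hvV, hUV]
        have h2 : ∀ w : F, w ^ (q + 1) = 1 → w ^ (t * t') = w ^ 1 := by
          intro w hw
          exact aux_pow_eq_pow_of_modEq hw htt
        have := h2 u hud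
        have h3 := h2 v hvd
        rw [pow_one] at this h3
        rw [← this, ← h3, h1]
      -- step C : x = y
      have hxr : x ^ r = y ^ r := by
        have hU0 : U - α ≠ 0 := sub_ne_zero.mpr hUα
        have h5 := hxy
        simp only [hf, ← hU, ← hV, ← hUV] at h5
        exact mul_right_cancel₀ hU0 h5
      have hz : (x / y) ^ r = 1 := by rw [div_pow, hxr, div_self (pow_ne_zero r hy)]
      have hzq : (x / y) ^ (q - 1) = 1 := by
        rw [div_pow, ← hu, ← hv, huv, div_self]
        rw [hv]; exact pow_ne_zero _ hy
      have hodvd : orderOf (x / y) ∣ Nat.gcd r (q - 1) :=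
        Nat.dvd_gcd (orderOf_dvd_of_pow_eq_one hz) (orderOf_dvd_of_pow_eq_one hzq)
      rw [hgcdr, Nat.dvd_one] at hodvd
      have : x / y = 1 := orderOf_eq_one_iff.mp hodvd
      field_simp at this
      exact this
    exact Finite.injective_iff_bijective.mp hinj
end

section
/- Let q be a prime power and n a positive integer. Let Δ be the set of all elements (w^q - w)^{q-1} with w ∈ F_{q^n} \ F_q. Then |Δ| = (q^{n-1} - 1)/(q - 1), and in F_{q^n}[Y] one has ∏_{z ∈ F_{q^n}^*} (1 + z - z^q Y) = - ((Y^{q^n} - Y)/(Y^{(q^n-1)/(q-1)} - 1)) · ∏_{u ∈ Δ} (Y - u)^q. -/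
open Polynomial Finset

section Aux
variable {F : Type} [Field F] [Fintype F] [DecidableEq F]

lemma aux_prim (d : ℕ) (hd : 0 < d) (hdvd : d ∣ Fintype.card F - 1) :
    ∃ ζ : F, IsPrimitiveRoot ζ d := by
  obtain ⟨g, hg⟩ := IsCyclic.exists_generator (α := Fˣ)
  have hord : orderOf g = Fintype.card F - 1 := by
    rw [orderOf_eq_card_of_forall_mem_zpowers hg, Nat.card_eq_fintype_card, Fintype.card_units]
  have hprim : IsPrimitiveRoot g (Fintype.card F - 1) := hord ▸ IsPrimitiveRoot.orderOf g
  have hcard : 0 < Fintype.card F - 1 := by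
    have := Fintype.one_lt_card (α := F)
    omega
  have h2 : IsPrimitiveRoot (g ^ ((Fintype.card F - 1) / d)) d :=
    hprim.pow hcard (Nat.div_mul_cancel hdvd).symm
  exact ⟨((g ^ ((Fintype.card F - 1) / d) : Fˣ) : F), IsPrimitiveRoot.coe_units_iff.mpr h2⟩

lemma aux_pow_surj (r e : ℕ) (hre : e * r = Fintype.card F - 1) (he : 0 < e) (a : F) (ha : a ≠ 0)
    (hae : a ^ e = 1) : ∃ s : F, s ≠ 0 ∧ s ^ r = a := by
  obtain ⟨g, hg⟩ := IsCyclic.exists_generator (α := Fˣ)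
  have hord : orderOf g = Fintype.card F - 1 := by
    rw [orderOf_eq_card_of_forall_mem_zpowers hg, Nat.card_eq_fintype_card, Fintype.card_units]
  obtain ⟨k, hk⟩ := mem_powers_iff_mem_zpowers.mpr (hg (Units.mk0 a ha))
  simp only [] at hk
  have h1 : g ^ (k * e) = 1 := by
    rw [pow_mul, hk]
    ext
    push_cast
    simpa using hae
  have hdvd : e * r ∣ k * e := by
    rw [hre, ← hord]
    exact orderOf_dvd_of_pow_eq_one h1
  obtain ⟨c, hc⟩ := hdvd
  have hk2 : k = r * c := by
    have : e * k = e * (r * c) := by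
      rw [← mul_assoc]
      rw [mul_comm k e] at hc
      omega
    exact Nat.eq_of_mul_eq_mul_left he this
  refine ⟨((g ^ c : Fˣ) : F), Units.ne_zero _, ?_⟩
  have : (g ^ c) ^ r = Units.mk0 a ha := by
    rw [← pow_mul, mul_comm c r, ← hk2]
    exact hk
  calc ((g ^ c : Fˣ) : F) ^ r = (((g ^ c) ^ r : Fˣ) : F) := by push_cast; ring
  _ = a := by rw [this]; rfl


lemma aux_R (r : ℕ) (hr : 0 < r) (hdvd : r ∣ Fintype.card F - 1) :
    (univ.filter (fun c : F => c ^ (r + 1) = c)) = insert (0 : F) (nthRootsFinset r (1 : F)) := by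
  ext c
  simp only [mem_filter, mem_univ, true_and, mem_insert, mem_nthRootsFinset hr]
  constructor
  · intro h
    rcases eq_or_ne c 0 with h0 | h0
    · exact Or.inl h0
    · refine Or.inr (mul_right_cancel₀ h0 ?_)
      rw [← pow_succ, one_mul]
      exact h
  · rintro (rfl | h)
    · simp
    · rw [pow_succ, h, one_mul]

lemma aux_R_card (r : ℕ) (hr : 0 < r) (hdvd : r ∣ Fintype.card F - 1) :
    (univ.filter (fun c : F => c ^ (r + 1) = c)).card = r + 1 := by
  obtain ⟨ζ, hζ⟩ := aux_prim r hr hdvd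
  rw [aux_R r hr hdvd, card_insert_of_notMem, hζ.card_nthRootsFinset]
  intro hmem
  have := (mem_nthRootsFinset hr (1 : F)).mp hmem
  rw [zero_pow hr.ne'] at this
  exact zero_ne_one this

lemma aux_prod_univ : ∏ a : F, (X - C a) = X ^ (Fintype.card F) - X := by
  have h2 : 1 < Fintype.card F := Fintype.one_lt_card
  have hmonic : (X ^ Fintype.card F - X : F[X]).Monic := by
    obtain ⟨k, hk⟩ : ∃ k, Fintype.card F = k + 1 + 1 := ⟨Fintype.card F - 2, by omega⟩
    rw [hk]
    apply Polynomial.monic_X_pow_sub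
    rw [Polynomial.degree_X]
    exact_mod_cast (by omega : 1 < k + 1 + 1)
  have hroots := FiniteField.roots_X_pow_card_sub_X F
  have hcard : Multiset.card (X ^ Fintype.card F - X : F[X]).roots
      = (X ^ Fintype.card F - X : F[X]).natDegree := by
    rw [hroots, FiniteField.X_pow_card_sub_X_natDegree_eq F h2]
    simpa using rfl
  have := prod_multiset_X_sub_C_of_monic_of_roots_card_eq hmonic hcard
  rw [hroots] at this
  rw [← this, Finset.prod_eq_multiset_prod]

lemma aux_sign (p m n q : ℕ) (hp : p.Prime) (hq : q = p ^ m) (hm : 0 < m) (hn : 0 < n)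
    (hF : Fintype.card F = q ^ n) : (-1 : F) ^ (Fintype.card F - 1) * (-1 : F) ^ q = -1 := by
  rcases hp.eq_two_or_odd' with h2 | hodd
  · have hz : ((Fintype.card F : ℕ) : F) = 0 := FiniteField.cast_card_eq_zero F
    have h20 : (2 : F) = 0 := by
      rw [hF, hq, h2] at hz
      push_cast at hz
      rw [← pow_mul] at hz
      exact pow_eq_zero_iff (Nat.mul_ne_zero hm.ne' hn.ne') |>.mp hz
    have hneg : (-1 : F) = 1 := by
      have h11 : (1 : F) + 1 = 0 := by rw [← h20]; norm_num
      linear_combination -h11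
    rw [hneg, one_pow, one_pow, mul_one]
  · have hoddq : Odd q := hq ▸ hodd.pow
    have hoddN : Odd (Fintype.card F) := hF ▸ hoddq.pow
    have heven : Even (Fintype.card F - 1) := Nat.Odd.sub_odd hoddN odd_one
    rw [heven.neg_one_pow, hoddq.neg_one_pow, one_mul]


lemma aux_wilson : ∏ z ∈ univ.filter (fun z : F => z ≠ 0), z = -1 := by
  have h2 : ∏ x : Fˣ, (x : F) = ∏ z ∈ univ.filter (fun z : F => z ≠ 0), z := by
    apply Finset.prod_bij (fun (x : Fˣ) _ => (x : F))
    · intro a _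
      simp [Units.ne_zero]
    · intro a _ b _ hab
      exact Units.ext hab
    · intro b hb
      rw [mem_filter] at hb
      exact ⟨Units.mk0 b hb.2, mem_univ _, rfl⟩
    · intro a _
      rfl
  rw [← h2]
  have : ∏ x : Fˣ, (x : F) = (((∏ x : Fˣ, x) : Fˣ) : F) := (map_prod (Units.coeHom F) _ _).symm
  rw [this, FiniteField.prod_univ_units_id_eq_neg_one]
  simp

end Aux

/-- Lemma 8.2: with `Δ = {(w^q - w)^{q-1} : w ∈ F_{q^n} \ F_q}` one has
`|Δ| = (q^{n-1}-1)/(q-1)` and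
`∏_{z ∈ F_{q^n}^*} (1 + z - z^q Y) = -((Y^{q^n} - Y)/(Y^{(q^n-1)/(q-1)} - 1)) ∏_{u ∈ Δ} (Y-u)^q`,
the quotient being exact polynomial division (`/ₘ`). -/
theorem stmt_9 (p m : ℕ) (hp : p.Prime) (hm : 0 < m) (q : ℕ) (hq : q = p ^ m)
    (n : ℕ) (hn : 0 < n) (F : Type) [Field F] [Fintype F] [DecidableEq F]
    (hF : Fintype.card F = q ^ n) :
    (Finset.image (fun w : F => (w ^ q - w) ^ (q - 1))
        (Finset.univ.filter fun w : F => w ^ q ≠ w)).card = (q ^ (n - 1) - 1) / (q - 1) ∧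
    ∏ z ∈ Finset.univ.filter (fun z : F => z ≠ 0), (C (1 + z) - C (z ^ q) * X) =
      -((X ^ q ^ n - X) /ₘ (X ^ ((q ^ n - 1) / (q - 1)) - 1)) *
        ∏ u ∈ Finset.image (fun w : F => (w ^ q - w) ^ (q - 1))
            (Finset.univ.filter fun w : F => w ^ q ≠ w), (X - C u) ^ q := by
  have hq2 : 2 ≤ q := by
    rw [hq]
    calc 2 ≤ p := hp.two_le
    _ = p ^ 1 := (pow_one p).symm
    _ ≤ p ^ m := Nat.pow_le_pow_right hp.pos hm
  have hqn2 : 2 ≤ q ^ n := by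
    calc 2 ≤ q := hq2
    _ = q ^ 1 := (pow_one q).symm
    _ ≤ q ^ n := Nat.pow_le_pow_right (by omega) hn
  have hq1 : q - 1 + 1 = q := by omega
  have hdvdq : q - 1 ∣ q ^ n - 1 := by simpa using Nat.sub_dvd_pow_sub_pow q 1 n
  have hFdvd : q - 1 ∣ Fintype.card F - 1 := by rw [hF]; exact hdvdq
  haveI hfact : Fact p.Prime := ⟨hp⟩
  haveI hchar : CharP F p := by
    have h0 : ((p : F)) ^ (m * n) = 0 := by
      have := FiniteField.cast_card_eq_zero F
      rw [hF, hq] at this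
      push_cast at this
      rwa [← pow_mul] at this
    have hp0 : (p : F) = 0 := pow_eq_zero_iff (Nat.mul_ne_zero hm.ne' hn.ne') |>.mp h0
    haveI hrc := ringChar.charP F
    have hrcp : (ringChar F).Prime := CharP.char_is_prime F (ringChar F)
    have hdvd : ringChar F ∣ p := (CharP.cast_eq_zero_iff F (ringChar F) p).mp hp0
    have heq : ringChar F = p := (Nat.prime_dvd_prime_iff_eq hrcp hp).mp hdvd
    exact heq ▸ hrc
  have hfrq_sub : ∀ x y : F, (x - y) ^ q = x ^ q - y ^ q := by
    intro x y; rw [hq]; exact sub_pow_char_pow x y m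
  have hfrq_add : ∀ x y : F, (x + y) ^ q = x ^ q + y ^ q := by
    intro x y; rw [hq]; exact add_pow_char_pow x y p m
  have hcmem : ∀ c : F, c ^ (q - 1) = 1 → c ^ q = c := fun c hc => by
    rw [← hq1, pow_succ, hc, one_mul]
  have hRcard : (univ.filter (fun c : F => c ^ q = c)).card = q := by
    have := aux_R_card (F := F) (q - 1) (by omega) hFdvd
    simp only [hq1] at this
    exact this
  have hScard : (univ.filter fun w : F => w ^ q ≠ w).card = q ^ n - q := by
    have hsplit : (univ.filter (fun w : F => w ^ q = w)).card
        + (univ.filter (fun w : F => w ^ q ≠ w)).card = Fintype.card F := by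
      have := Finset.card_filter_add_card_filter_not
        (s := (univ : Finset F)) (fun w : F => w ^ q = w)
      simpa using this
    rw [hF, hRcard] at hsplit
    omega
  have hfib1 : ∀ a ∈ (univ.filter fun w : F => w ^ q ≠ w).image
      (fun w : F => (w ^ q - w) ^ (q - 1)),
      ((univ.filter fun w : F => w ^ q ≠ w).filter
        (fun w => (w ^ q - w) ^ (q - 1) = a)).card = (q - 1) * q := by
    intro a ha
    obtain ⟨w0, hw0S, hw0a⟩ := Finset.mem_image.mp ha
    have hw0 : w0 ^ q ≠ w0 := (Finset.mem_filter.mp hw0S).2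
    have hs0 : w0 ^ q - w0 ≠ 0 := sub_ne_zero.mpr hw0
    have ha0 : a ≠ 0 := by rw [← hw0a]; exact pow_ne_zero _ hs0
    have hkey : ∀ c d : F, c ^ q = c → d ^ q = d →
        (c * w0 + d) ^ q - (c * w0 + d) = c * (w0 ^ q - w0) := by
      intro c d hc hd
      rw [hfrq_add, mul_pow, hc, hd]; ring
    obtain ⟨ζ, hζ⟩ := aux_prim (F := F) (q - 1) (by omega) hFdvd
    have hbij : ((nthRootsFinset (q - 1) (1 : F)) ×ˢ (univ.filter (fun c : F => c ^ q = c))).card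
        = ((univ.filter fun w : F => w ^ q ≠ w).filter
            (fun w => (w ^ q - w) ^ (q - 1) = a)).card := by
      apply Finset.card_bij (fun cd _ => cd.1 * w0 + cd.2)
      · rintro ⟨c, d⟩ hcd
        rw [Finset.mem_product] at hcd
        have hc : c ^ (q - 1) = 1 := (mem_nthRootsFinset (by omega) (1 : F)).mp hcd.1
        have hd : d ^ q = d := (Finset.mem_filter.mp hcd.2).2
        have hc0 : c ≠ 0 := by
          intro h
          rw [h, zero_pow (show q - 1 ≠ 0 by omega)] at hc
          exact zero_ne_one hc
        have hk := hkey c d (hcmem c hc) hd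
        rw [Finset.mem_filter, Finset.mem_filter]
        refine ⟨⟨Finset.mem_univ _, ?_⟩, ?_⟩
        · intro h
          rw [sub_eq_zero.mpr h] at hk
          exact mul_ne_zero hc0 hs0 hk.symm
        · rw [hk, mul_pow, hc, one_mul, hw0a]
      · rintro ⟨c, d⟩ hcd ⟨c', d'⟩ hcd' h
        rw [Finset.mem_product] at hcd hcd'
        have hc : c ^ (q - 1) = 1 := (mem_nthRootsFinset (by omega) (1 : F)).mp hcd.1
        have hd : d ^ q = d := (Finset.mem_filter.mp hcd.2).2
        have hc' : c' ^ (q - 1) = 1 := (mem_nthRootsFinset (by omega) (1 : F)).mp hcd'.1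
        have hd' : d' ^ q = d' := (Finset.mem_filter.mp hcd'.2).2
        have hk := hkey c d (hcmem c hc) hd
        have hk' := hkey c' d' (hcmem c' hc') hd'
        have hcc : c = c' := by
          have : c * (w0 ^ q - w0) = c' * (w0 ^ q - w0) := by rw [← hk, ← hk', h]
          exact mul_right_cancel₀ hs0 this
        have hdd : d = d' := by
          rw [hcc] at h
          exact add_left_cancel h
        simp [hcc, hdd]
      · intro w hw
        rw [Finset.mem_filter, Finset.mem_filter] at hw
        obtain ⟨⟨-, hwne⟩, hwa⟩ := hw
        have hws : w ^ q - w ≠ 0 := sub_ne_zero.mpr hwne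
        refine ⟨((w ^ q - w) / (w0 ^ q - w0), w - (w ^ q - w) / (w0 ^ q - w0) * w0), ?_, ?_⟩
        · have hc : ((w ^ q - w) / (w0 ^ q - w0)) ^ (q - 1) = 1 := by
            rw [div_pow, hwa, hw0a, div_self ha0]
          have hcq := hcmem _ hc
          rw [Finset.mem_product]
          constructor
          · exact (mem_nthRootsFinset (by omega) (1 : F)).mpr hc
          · rw [Finset.mem_filter]
            refine ⟨Finset.mem_univ _, ?_⟩
            have : (w - (w ^ q - w) / (w0 ^ q - w0) * w0) ^ q
                - (w - (w ^ q - w) / (w0 ^ q - w0) * w0)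
                = (w ^ q - w) - (w ^ q - w) / (w0 ^ q - w0) * (w0 ^ q - w0) := by
              rw [hfrq_sub, mul_pow, hcq]; ring
            rw [div_mul_cancel₀ _ hs0, sub_self] at this
            exact sub_eq_zero.mp this
        · ring
    rw [← hbij, Finset.card_product, hRcard, hζ.card_nthRootsFinset]
  have hsum := Finset.card_eq_sum_card_fiberwise
    (f := fun w : F => (w ^ q - w) ^ (q - 1))
    (s := univ.filter fun w : F => w ^ q ≠ w)
    (t := (univ.filter fun w : F => w ^ q ≠ w).image (fun w : F => (w ^ q - w) ^ (q - 1)))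
    (fun x hx => Finset.mem_image_of_mem _ hx)
  rw [Finset.sum_congr rfl hfib1, Finset.sum_const, smul_eq_mul, hScard] at hsum
  have hqpow : q ^ n = q * q ^ (n - 1) := by
    conv_lhs => rw [show n = 1 + (n - 1) by omega, pow_add, pow_one]
  have key : ((univ.filter fun w : F => w ^ q ≠ w).image
      (fun w : F => (w ^ q - w) ^ (q - 1))).card * (q - 1) = q ^ (n - 1) - 1 := by
    apply Nat.eq_of_mul_eq_mul_left (show 0 < q by omega)
    calc q * (((univ.filter fun w : F => w ^ q ≠ w).image
          (fun w : F => (w ^ q - w) ^ (q - 1))).card * (q - 1))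
        = ((univ.filter fun w : F => w ^ q ≠ w).image
          (fun w : F => (w ^ q - w) ^ (q - 1))).card * ((q - 1) * q) := by ring
    _ = q ^ n - q := hsum.symm
    _ = q * (q ^ (n - 1) - 1) := by rw [Nat.mul_sub, mul_one, ← hqpow]
  refine ⟨by rw [← key, Nat.mul_div_cancel _ (show 0 < q - 1 by omega)], ?_⟩
  clear hsum key hfib1 hScard
  set S0 := Finset.univ.filter (fun z : F => z ≠ 0) with hS0def
  set Δ := Finset.image (fun w : F => (w ^ q - w) ^ (q - 1))
      (Finset.univ.filter fun w : F => w ^ q ≠ w) with hΔdef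
  have hee : (q ^ n - 1) / (q - 1) * (q - 1) = q ^ n - 1 := Nat.div_mul_cancel hdvdq
  set e := (q ^ n - 1) / (q - 1) with hedef
  have he1 : 0 < e := by
    rcases Nat.eq_zero_or_pos e with h | h
    · rw [h, zero_mul] at hee; omega
    · exact h
  have hedvd : e ∣ Fintype.card F - 1 := by rw [hF]; exact ⟨q - 1, hee.symm⟩
  have heF : ∀ d : F, d ≠ 0 → d ^ (q ^ n - 1) = 1 := by
    intro d hd
    have := FiniteField.pow_card_sub_one_eq_one d hd
    rwa [hF] at this
  have hqe : q * e = e + (q ^ n - 1) := by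
    rw [mul_comm]
    calc e * q = e * (1 + (q - 1)) := by congr 1; omega
    _ = e + e * (q - 1) := by ring
    _ = e + (q ^ n - 1) := by rw [hee]
  have hfibchar : ∀ a : F,
      (S0.filter (fun z => (1 + z) / z ^ q = a))
        = univ.filter (fun z : F => a * z ^ q - z = 1) := by
    intro a
    ext z
    simp only [hS0def, Finset.mem_filter, Finset.mem_univ, true_and]
    constructor
    · rintro ⟨hz, hu⟩
      have hzq : z ^ q ≠ 0 := pow_ne_zero _ hz
      rw [div_eq_iff hzq] at hu
      linear_combination -hu
    · intro h
      have hz : z ≠ 0 := by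
        intro h0
        rw [h0, zero_pow (show q ≠ 0 by omega)] at h
        simp at h
      have hzq : z ^ q ≠ 0 := pow_ne_zero _ hz
      refine ⟨hz, ?_⟩
      rw [div_eq_iff hzq]
      linear_combination -h
  have hinj : ∀ a z1 z2 : F, a * z1 ^ q - z1 = a * z2 ^ q - z2 → z1 ≠ z2 → a ^ e = 1 := by
    intro a z1 z2 h12 hne
    have hd0 : z1 - z2 ≠ 0 := sub_ne_zero.mpr hne
    have hd : a * (z1 - z2) ^ q = z1 - z2 := by
      rw [hfrq_sub]
      linear_combination h12
    have hpow : a ^ e * ((z1 - z2) ^ q) ^ e = (z1 - z2) ^ e := by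
      rw [← mul_pow, hd]
    have h3 : ((z1 - z2) ^ q) ^ e = (z1 - z2) ^ e := by
      rw [← pow_mul, hqe, pow_add, heF _ hd0, mul_one]
    rw [h3] at hpow
    exact mul_right_cancel₀ (pow_ne_zero _ hd0) (hpow.trans (one_mul _).symm)
  have hΔsub : ∀ a ∈ Δ, a ≠ 0 ∧ a ^ e = 1 := by
    intro a ha
    obtain ⟨w, hwS, rfl⟩ := Finset.mem_image.mp ha
    have hw : w ^ q ≠ w := (Finset.mem_filter.mp hwS).2
    have hs : w ^ q - w ≠ 0 := sub_ne_zero.mpr hw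
    refine ⟨pow_ne_zero _ hs, ?_⟩
    rw [← pow_mul, mul_comm (q - 1) e, hee]
    exact heF _ hs
  -- fiber cardinalities
  have hfib0 : (S0.filter (fun z => (1 + z) / z ^ q = 0)).card = 1 := by
    rw [hfibchar]
    have : univ.filter (fun z : F => (0 : F) * z ^ q - z = 1) = {-1} := by
      ext z
      simp only [Finset.mem_filter, Finset.mem_univ, true_and, Finset.mem_singleton]
      constructor
      · intro h; linear_combination -h
      · intro h; rw [h]; ring
    rw [this, Finset.card_singleton]
  have hfibA : ∀ a : F, a ^ e ≠ 1 → (S0.filter (fun z => (1 + z) / z ^ q = a)).card = 1 := by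
    intro a hae
    rw [hfibchar]
    have hLinj : Function.Injective (fun z : F => a * z ^ q - z) := by
      intro z1 z2 h12
      by_contra hne
      exact hae (hinj a z1 z2 h12 hne)
    obtain ⟨z0, hz0⟩ := (Finite.injective_iff_surjective.mp hLinj) 1
    rw [Finset.card_eq_one]
    refine ⟨z0, ?_⟩
    ext z
    simp only [Finset.mem_filter, Finset.mem_univ, true_and, Finset.mem_singleton]
    constructor
    · intro h
      exact hLinj (h.trans hz0.symm)
    · intro h; rw [h]; exact hz0
  have hfibΔ : ∀ a ∈ Δ, (S0.filter (fun z => (1 + z) / z ^ q = a)).card = q := by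
    intro a ha
    obtain ⟨w0, hw0S, rfl⟩ := Finset.mem_image.mp ha
    have hw0 : w0 ^ q ≠ w0 := (Finset.mem_filter.mp hw0S).2
    have hs0 : w0 ^ q - w0 ≠ 0 := sub_ne_zero.mpr hw0
    have hs0q : (w0 ^ q - w0) ^ q = (w0 ^ q - w0) ^ (q - 1) * (w0 ^ q - w0) := by
      rw [← pow_succ, hq1]
    have hbij2 : (univ.filter (fun c : F => c ^ q = c)).card
        = (univ.filter (fun z : F => (w0 ^ q - w0) ^ (q - 1) * z ^ q - z = 1)).card := by
      apply Finset.card_bij (fun d _ => (w0 + d) / (w0 ^ q - w0)) ?_ ?_ ?_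
      · intro d hd
        have hdq : d ^ q = d := (Finset.mem_filter.mp hd).2
        simp only [Finset.mem_filter, Finset.mem_univ, true_and]
        rw [div_pow, hfrq_add, hdq, hs0q]
        field_simp
        ring
      · intro d1 h1 d2 h2 h
        have := congrArg (· * (w0 ^ q - w0)) h
        simp only [div_mul_cancel₀ _ hs0] at this
        exact add_left_cancel this
      · intro z hz
        simp only [Finset.mem_filter, Finset.mem_univ, true_and] at hz
        refine ⟨(w0 ^ q - w0) * z - w0, ?_, ?_⟩
        · simp only [Finset.mem_filter, Finset.mem_univ, true_and]
          have hcalc : ((w0 ^ q - w0) * z - w0) ^ q - ((w0 ^ q - w0) * z - w0)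
              = (w0 ^ q - w0) * ((w0 ^ q - w0) ^ (q - 1) * z ^ q - z) - (w0 ^ q - w0) := by
            rw [hfrq_sub, mul_pow, hs0q]
            ring
          rw [hz, mul_one, sub_self] at hcalc
          exact sub_eq_zero.mp hcalc
        · field_simp
          ring
    rw [hfibchar, ← hbij2, hRcard]
  have hfibB : ∀ a : F, a ≠ 0 → a ^ e = 1 → a ∉ Δ →
      (S0.filter (fun z => (1 + z) / z ^ q = a)).card = 0 := by
    intro a ha0 hae haΔ
    rw [hfibchar, Finset.card_eq_zero, Finset.eq_empty_iff_forall_notMem]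
    intro z hz
    simp only [Finset.mem_filter, Finset.mem_univ, true_and] at hz
    obtain ⟨s, hsne, hs⟩ := aux_pow_surj (q - 1) e (by rw [hF]; exact hee) he1 a ha0 hae
    have hz0 : z ≠ 0 := by
      intro h0
      rw [h0, zero_pow (show q ≠ 0 by omega)] at hz
      simp at hz
    have hw : (s * z) ^ q - s * z = s := by
      have : (s * z) ^ q - s * z = s * (a * z ^ q - z) := by
        rw [mul_pow, show s ^ q = s ^ (q - 1) * s by rw [← pow_succ, hq1], hs]
        ring
      rw [hz, mul_one] at this
      exact this
    apply haΔ
    rw [hΔdef]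
    apply Finset.mem_image.mpr
    refine ⟨s * z, Finset.mem_filter.mpr ⟨Finset.mem_univ _, ?_⟩, ?_⟩
    · intro hcon
      rw [sub_eq_zero.mpr hcon] at hw
      exact hsne hw.symm
    · rw [hw, hs]
  -- assembly
  have hstep1 : ∀ z ∈ S0, C (1 + z) - C (z ^ q) * X
      = (-C (z ^ q)) * (X - C ((1 + z) / z ^ q)) := by
    intro z hz
    rw [hS0def, Finset.mem_filter] at hz
    have hzq : (z ^ q) ≠ 0 := pow_ne_zero _ hz.2
    have hmul : (z ^ q) * ((1 + z) / z ^ q) = 1 + z := by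
      rw [mul_comm, div_mul_cancel₀ _ hzq]
    calc C (1 + z) - C (z ^ q) * X
        = C (z ^ q * ((1 + z) / z ^ q)) - C (z ^ q) * X := by rw [hmul]
    _ = C (z ^ q) * C ((1 + z) / z ^ q) - C (z ^ q) * X := by rw [map_mul]
    _ = (-C (z ^ q)) * (X - C ((1 + z) / z ^ q)) := by ring
  have hS0card : S0.card = q ^ n - 1 := by
    rw [hS0def, Finset.filter_ne', Finset.card_erase_of_mem (Finset.mem_univ 0),
      Finset.card_univ, hF]
  have hconst : (∏ z ∈ S0, (-C (z ^ q)) : F[X]) = -1 := by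
    have h1 : (∏ z ∈ S0, (-C (z ^ q)) : F[X]) = C (∏ z ∈ S0, (-(z ^ q))) := by
      rw [map_prod]
      exact Finset.prod_congr rfl (fun z _ => by rw [map_neg])
    have h2 : (∏ z ∈ S0, (-(z ^ q))) = (-1 : F) ^ S0.card * (∏ z ∈ S0, z) ^ q := by
      rw [← Finset.prod_pow, ← Finset.prod_const (-1 : F), ← Finset.prod_mul_distrib]
      exact Finset.prod_congr rfl (fun z _ => by ring)
    rw [h1, h2, hS0card, hS0def, aux_wilson]
    have hsg := aux_sign (F := F) p m n q hp hq hm hn hF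
    rw [hF] at hsg
    rw [hsg, map_neg, map_one]
  set g : F → F[X] := fun a => (X - C a) ^ ((S0.filter (fun z => (1 + z) / z ^ q = a)).card)
    with hgdef
  have hP : ∏ z ∈ S0, (X - C ((1 + z) / z ^ q)) = ∏ a : F, g a := by
    rw [← Finset.prod_fiberwise_of_maps_to (t := (univ : Finset F))
      (fun z _ => Finset.mem_univ ((1 + z) / z ^ q)) (fun z => X - C ((1 + z) / z ^ q))]
    apply Finset.prod_congr rfl
    intro a _
    simp only [hgdef]
    calc ∏ z ∈ S0.filter (fun z => (1 + z) / z ^ q = a), (X - C ((1 + z) / z ^ q))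
        = ∏ z ∈ S0.filter (fun z => (1 + z) / z ^ q = a), (X - C a) :=
          Finset.prod_congr rfl (fun z hz => by rw [(Finset.mem_filter.mp hz).2])
    _ = (X - C a) ^ (S0.filter (fun z => (1 + z) / z ^ q = a)).card := Finset.prod_const _
  have hfΔ : S0.filter (fun a => a ∈ Δ) = Δ := by
    ext a
    simp only [hS0def, Finset.mem_filter, Finset.mem_univ, true_and]
    exact ⟨fun h => h.2, fun h => ⟨(hΔsub a h).1, h⟩⟩
  have hg0 : g 0 = X := by
    simp only [hgdef]
    rw [hfib0, pow_one, map_zero, sub_zero]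
  have hprodΔ : ∏ a ∈ Δ, g a = ∏ u ∈ Δ, (X - C u) ^ q := by
    refine Finset.prod_congr rfl (fun a ha => ?_)
    simp only [hgdef]
    rw [hfibΔ a ha]
  have hprod1 : ∏ a ∈ (S0.filter (fun a => a ∉ Δ)).filter (fun a => a ^ e = 1), g a = 1 := by
    apply Finset.prod_eq_one
    intro a ha
    simp only [Finset.mem_filter, hS0def, Finset.mem_univ, true_and] at ha
    simp only [hgdef]
    rw [hfibB a ha.1.1 ha.2 ha.1.2, pow_zero]
  have hGeq : (S0.filter (fun a => a ∉ Δ)).filter (fun a => ¬ a ^ e = 1)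
      = S0.filter (fun a => ¬ a ^ e = 1) := by
    ext a
    simp only [Finset.mem_filter]
    constructor
    · rintro ⟨⟨h1, -⟩, h3⟩
      exact ⟨h1, h3⟩
    · rintro ⟨h1, h3⟩
      refine ⟨⟨h1, fun hΔ => h3 (hΔsub a hΔ).2⟩, h3⟩
  have hprodG : ∏ a ∈ S0.filter (fun a => ¬ a ^ e = 1), g a
      = ∏ a ∈ S0.filter (fun a => ¬ a ^ e = 1), (X - C a) := by
    refine Finset.prod_congr rfl (fun a ha => ?_)
    simp only [Finset.mem_filter] at ha
    simp only [hgdef]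
    rw [hfibA a ha.2, pow_one]
  have hsplitD : (∏ a ∈ S0.filter (fun a => a ∈ Δ), g a)
      * (∏ a ∈ S0.filter (fun a => a ∉ Δ), g a) = ∏ a ∈ S0, g a :=
    Finset.prod_filter_mul_prod_filter_not S0 (fun a => a ∈ Δ) g
  have hsplitE : (∏ a ∈ (S0.filter (fun a => a ∉ Δ)).filter (fun a => a ^ e = 1), g a)
      * (∏ a ∈ (S0.filter (fun a => a ∉ Δ)).filter (fun a => ¬ a ^ e = 1), g a)
      = ∏ a ∈ S0.filter (fun a => a ∉ Δ), g a :=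
    Finset.prod_filter_mul_prod_filter_not (S0.filter (fun a => a ∉ Δ)) (fun a => a ^ e = 1) g
  have hsplitX : (∏ a ∈ S0.filter (fun a => a ^ e = 1), (X - C a))
      * (∏ a ∈ S0.filter (fun a => ¬ a ^ e = 1), (X - C a)) = ∏ a ∈ S0, (X - C a) :=
    Finset.prod_filter_mul_prod_filter_not S0 (fun a => a ^ e = 1) (fun a => X - C a)
  have hPsplit : ∏ a : F, g a
      = X * (∏ a ∈ S0.filter (fun a => ¬ a ^ e = 1), (X - C a)) * ∏ u ∈ Δ, (X - C u) ^ q := by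
    calc ∏ a : F, g a
        = g 0 * ∏ a ∈ univ.erase 0, g a :=
          (Finset.mul_prod_erase univ g (Finset.mem_univ 0)).symm
    _ = g 0 * ∏ a ∈ S0, g a := by rw [hS0def, Finset.filter_ne']
    _ = g 0 * ((∏ a ∈ S0.filter (fun a => a ∈ Δ), g a)
          * ∏ a ∈ S0.filter (fun a => a ∉ Δ), g a) := by
        rw [← hsplitD]
    _ = g 0 * ((∏ a ∈ S0.filter (fun a => a ∈ Δ), g a)
          * ((∏ a ∈ (S0.filter (fun a => a ∉ Δ)).filter (fun a => a ^ e = 1), g a)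
            * ∏ a ∈ (S0.filter (fun a => a ∉ Δ)).filter (fun a => ¬ a ^ e = 1), g a)) := by
        rw [← hsplitE]
    _ = X * (∏ a ∈ S0.filter (fun a => ¬ a ^ e = 1), (X - C a)) * ∏ u ∈ Δ, (X - C u) ^ q := by
        rw [hg0, hfΔ, hprodΔ, hprod1, hGeq, hprodG]
        ring
  have hGfull : ∏ a : F, (X - C a)
      = (X ^ e - 1) * (X * ∏ a ∈ S0.filter (fun a => ¬ a ^ e = 1), (X - C a)) := by
    obtain ⟨ζ, hζ⟩ := aux_prim e he1 hedvd
    have hroots : S0.filter (fun a => a ^ e = 1) = nthRootsFinset e (1 : F) := by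
      ext a
      simp only [hS0def, Finset.mem_filter, Finset.mem_univ, true_and,
        mem_nthRootsFinset he1]
      constructor
      · exact fun h => h.2
      · intro h
        refine ⟨fun h0 => ?_, h⟩
        rw [h0, zero_pow he1.ne'] at h
        exact zero_ne_one h
    calc ∏ a : F, (X - C a)
        = (X - C 0) * ∏ a ∈ S0, (X - C a) := by
          rw [hS0def, Finset.filter_ne']
          exact (Finset.mul_prod_erase univ _ (Finset.mem_univ (0 : F))).symm
    _ = (X - C 0) * ((∏ a ∈ S0.filter (fun a => a ^ e = 1), (X - C a))
          * ∏ a ∈ S0.filter (fun a => ¬ a ^ e = 1), (X - C a)) := by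
        rw [← hsplitX]
    _ = (X ^ e - 1) * (X * ∏ a ∈ S0.filter (fun a => ¬ a ^ e = 1), (X - C a)) := by
        rw [hroots, ← Polynomial.X_pow_sub_one_eq_prod he1 hζ, map_zero, sub_zero]
        ring
  have hmono : (X ^ e - 1 : F[X]).Monic := by
    have := Polynomial.monic_X_pow_sub_C (1 : F) he1.ne'
    simpa using this
  have hquot : (X ^ q ^ n - X : F[X]) /ₘ (X ^ e - 1)
      = X * ∏ a ∈ S0.filter (fun a => ¬ a ^ e = 1), (X - C a) := by
    have hXX : (X ^ q ^ n - X : F[X])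
        = (X ^ e - 1) * (X * ∏ a ∈ S0.filter (fun a => ¬ a ^ e = 1), (X - C a)) := by
      rw [← hGfull, aux_prod_univ, hF]
    rw [hXX, Polynomial.mul_divByMonic_cancel_left _ hmono]
  rw [hquot, Finset.prod_congr rfl hstep1, Finset.prod_mul_distrib, hconst, hP, hPsplit]
  ring
end

section
/- Let q be a prime power and n a positive integer, and let Δ be the set of all elements (w^q - w)^{q-1} with w ∈ F_{q^n} \ F_q. Then in F_{q^n}[Y] one has ∏_{u ∈ Δ} (Y - u) = Σ_{i=1}^{n} Y^{(q^{i-1}-1)/(q-1)}. -/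
open Polynomial

lemma card_le_natDegree_aux {F : Type} [Field F] [DecidableEq F] {g : F[X]} (hg : g ≠ 0)
    {s : Finset F} (h : ∀ x ∈ s, g.IsRoot x) : s.card ≤ g.natDegree := by
  have h1 : s ⊆ g.roots.toFinset := fun x hx =>
    Multiset.mem_toFinset.mpr ((mem_roots hg).mpr (h x hx))
  calc s.card ≤ g.roots.toFinset.card := Finset.card_le_card h1
    _ ≤ Multiset.card g.roots := g.roots.toFinset_card_le
    _ ≤ g.natDegree := g.card_roots'

/-- Lemma 8.4: `∏_{u ∈ Δ} (Y - u) = Σ_{i=1}^n Y^{(q^{i-1}-1)/(q-1)}` where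
`Δ = {(w^q - w)^{q-1} : w ∈ F_{q^n} \ F_q}`. -/
theorem stmt_10 (p m : ℕ) (hp : p.Prime) (hm : 0 < m) (q : ℕ) (hq : q = p ^ m)
    (n : ℕ) (hn : 0 < n) (F : Type) [Field F] [Fintype F] [DecidableEq F]
    (hF : Fintype.card F = q ^ n) :
    ∏ u ∈ Finset.image (fun w : F => (w ^ q - w) ^ (q - 1))
        (Finset.univ.filter fun w : F => w ^ q ≠ w), (X - C u) =
      ∑ i ∈ Finset.range n, (X : F[X]) ^ ((q ^ i - 1) / (q - 1)) := by
  classical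
  have hq2 : 2 ≤ q := by
    subst hq
    calc 2 ≤ p := hp.two_le
      _ ≤ p ^ m := Nat.le_self_pow hm.ne' p
  -- the geometric sum
  set N : ℕ → ℕ := fun i => ∑ j ∈ Finset.range i, q ^ j with hN
  have hgeom : ∀ i, (q - 1) * N i = q ^ i - 1 := by
    intro i
    induction i with
    | zero => simp [hN]
    | succ i ih =>
      have h1 : (1:ℕ) ≤ q ^ i := Nat.one_le_pow _ _ (by omega)
      have h2 : q ^ i ≤ q ^ (i+1) := Nat.pow_le_pow_right (by omega) (by omega)
      have h3 : (q - 1) * q ^ i = q ^ (i+1) - q ^ i := by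
        rw [Nat.sub_mul, one_mul, ← pow_succ']
      simp only [hN, Finset.sum_range_succ, Nat.mul_add] at *
      omega
  have hdivN : ∀ i, (q ^ i - 1) / (q - 1) = N i := fun i => by
    rw [← hgeom i, Nat.mul_div_cancel_left _ (by omega)]
  have hNmono : StrictMono N := strictMono_nat_of_lt_succ fun i => by
    have h1 : (1:ℕ) ≤ q ^ i := Nat.one_le_pow _ _ (by omega)
    simp only [hN, Finset.sum_range_succ]
    omega
  -- characteristic
  haveI : CharP F (ringChar F) := ringChar.charP F
  obtain ⟨k, hkp, hcard⟩ := FiniteField.card F (ringChar F)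
  have hpr : p = ringChar F := by
    have hdvd : p ∣ ringChar F ^ (k:ℕ) := by
      rw [← hcard, hF, hq, ← pow_mul]
      exact dvd_pow_self p (by positivity)
    exact (Nat.prime_dvd_prime_iff_eq hp hkp).mp (hp.dvd_of_dvd_pow hdvd)
  haveI hcharp : CharP F p := hpr ▸ ringChar.charP F
  haveI : Fact p.Prime := ⟨hp⟩
  have key : ∀ (w : F) (i : ℕ), (w ^ q - w) ^ q ^ i = w ^ q ^ (i+1) - w ^ q ^ i := by
    intro w i
    have hqi : q ^ i = p ^ (m * i) := by rw [hq, ← pow_mul]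
    rw [hqi, sub_pow_char_pow, ← hqi, ← pow_mul, ← pow_succ']
  -- every element of Δ is a root of the RHS
  have hroot : ∀ w : F, w ^ q ≠ w →
      ∑ i ∈ Finset.range n, ((w ^ q - w) ^ (q-1)) ^ N i = 0 := by
    intro w hw
    have hv : w ^ q - w ≠ 0 := sub_ne_zero.mpr hw
    have hmul : (w ^ q - w) * ∑ i ∈ Finset.range n, ((w ^ q - w) ^ (q-1)) ^ N i = 0 := by
      rw [Finset.mul_sum]
      have hterm : ∀ i ∈ Finset.range n,
          (w ^ q - w) * ((w ^ q - w) ^ (q-1)) ^ N i = w ^ q ^ (i+1) - w ^ q ^ i := by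
        intro i _
        rw [← pow_mul, hgeom i, ← pow_succ',
          Nat.sub_add_cancel (Nat.one_le_pow _ _ (by omega)), key]
      rw [Finset.sum_congr rfl hterm, Finset.sum_range_sub (fun i => w ^ q ^ i)]
      have : w ^ q ^ n = w := by rw [← hF, FiniteField.pow_card]
      simp [this]
    exact (mul_eq_zero.mp hmul).resolve_left hv
  -- cardinality of Δ
  set S : Finset F := Finset.univ.filter fun w : F => w ^ q ≠ w with hS
  set Δ : Finset F := S.image (fun w : F => (w ^ q - w) ^ (q - 1)) with hΔ
  have hScard : q ^ n - q ≤ S.card := by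
    have hT : (Finset.univ.filter fun w : F => w ^ q = w).card ≤ q := by
      have hc : (X ^ q - X : F[X]).coeff q = 1 := by
        rw [coeff_sub, coeff_X_pow, if_pos rfl, coeff_X, if_neg (by omega : ¬(1:ℕ) = q), sub_zero]
      have hg : (X ^ q - X : F[X]) ≠ 0 := by
        intro h
        rw [h, coeff_zero] at hc
        simp at hc
      refine le_trans (card_le_natDegree_aux hg ?_) ?_
      · intro x hx
        simp only [Finset.mem_filter] at hx
        simp [IsRoot, sub_eq_zero, hx.2]
      · calc (X ^ q - X : F[X]).natDegree ≤ max (X ^ q : F[X]).natDegree (X : F[X]).natDegree :=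
            natDegree_sub_le _ _
          _ ≤ q := by simp; omega
    have hpart := Finset.card_filter_add_card_filter_not
      (s := (Finset.univ : Finset F)) (p := fun w : F => w ^ q = w)
    simp only [Finset.card_univ, hF] at hpart
    have : S.card = (Finset.univ.filter fun w : F => ¬ (w ^ q = w)).card := rfl
    omega
  have hfiber : ∀ u ∈ Δ, (S.filter fun w => (w ^ q - w) ^ (q-1) = u).card ≤ q * (q - 1) := by
    intro u _
    have hdX : (X : F[X]).degree < (X ^ q : F[X]).degree := by
      rw [degree_X, degree_X_pow]
      exact_mod_cast (by omega : 1 < q)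
    have hbdeg : (X ^ q - X : F[X]).degree = (q : WithBot ℕ) := by
      rw [degree_sub_eq_left_of_degree_lt hdX, degree_X_pow]
    have hbnat : (X ^ q - X : F[X]).natDegree = q := natDegree_eq_of_degree_eq_some hbdeg
    have h1 : (X ^ q - X : F[X]).Monic := by
      show (X ^ q - X : F[X]).leadingCoeff = 1
      rw [leadingCoeff, hbnat, coeff_sub, coeff_X_pow, if_pos rfl, coeff_X,
        if_neg (by omega : ¬(1:ℕ) = q), sub_zero]
    have hmonic : ((X ^ q - X : F[X]) ^ (q - 1)).Monic := h1.pow _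
    have hdeg1 : ((X ^ q - X : F[X]) ^ (q - 1)).natDegree = q * (q - 1) := by
      rw [natDegree_pow, hbnat, mul_comm]
    set g : F[X] := (X ^ q - X) ^ (q - 1) - C u with hgdef
    have hdlt : (C u : F[X]).degree < ((X ^ q - X : F[X]) ^ (q - 1)).degree := by
      rw [degree_eq_natDegree hmonic.ne_zero, hdeg1]
      exact lt_of_le_of_lt degree_C_le
        (by exact_mod_cast (Nat.mul_pos (by omega) (by omega) : 0 < q * (q-1)))
    have hgdeg : g.degree = ((q * (q - 1) : ℕ) : WithBot ℕ) := by
      rw [hgdef, degree_sub_eq_left_of_degree_lt hdlt, degree_eq_natDegree hmonic.ne_zero, hdeg1]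
    have hg0 : g ≠ 0 :=
      ne_zero_of_degree_gt (n := ⊥) (by rw [hgdeg]; exact WithBot.bot_lt_coe _)
    refine le_trans (card_le_natDegree_aux hg0 ?_) ?_
    · intro x hx
      simp only [Finset.mem_filter] at hx
      simp [hgdef, IsRoot, sub_eq_zero, hx.2]
    · rw [natDegree_eq_of_degree_eq_some hgdeg]
  have hΔcard : N (n-1) ≤ Δ.card := by
    have h1 : S.card ≤ q * (q - 1) * Δ.card := Finset.card_le_mul_card_image S _ hfiber
    have h2 : q * ((q - 1) * N (n-1)) = q ^ n - q := by
      rw [hgeom]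
      have h3 : q * q ^ (n - 1) = q ^ n := by
        rw [← pow_succ']
        congr 1
        omega
      have h4 : (1:ℕ) ≤ q ^ (n-1) := Nat.one_le_pow _ _ (by omega)
      rw [Nat.mul_sub, mul_one, h3]
    have hpos : 0 < q * (q - 1) := Nat.mul_pos (by omega) (by omega)
    have : q * (q - 1) * N (n-1) ≤ q * (q - 1) * Δ.card := by
      rw [mul_assoc, h2]
      omega
    exact Nat.le_of_mul_le_mul_left this hpos
  -- rewrite RHS exponents
  have hrw : ∀ i, ((X : F[X]) ^ ((q ^ i - 1) / (q - 1))) = X ^ N i := fun i => by rw [hdivN]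
  rw [Finset.sum_congr rfl (fun i _ => hrw i)]
  -- structure of RHS
  obtain ⟨n', rfl⟩ : ∃ n', n = n' + 1 := ⟨n - 1, by omega⟩
  simp only [Nat.add_sub_cancel] at hΔcard
  rw [Finset.sum_range_succ, add_comm]
  set T : F[X] := ∑ i ∈ Finset.range n', (X : F[X]) ^ N i with hT
  have hTdeg : T.degree < ((N n' : ℕ) : WithBot ℕ) := by
    refine lt_of_le_of_lt (degree_sum_le _ _) ?_
    rw [Finset.sup_lt_iff (WithBot.bot_lt_coe _)]
    intro i hi
    rw [degree_X_pow]
    exact_mod_cast hNmono (Finset.mem_range.mp hi)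
  have hRHSmonic : ((X : F[X]) ^ N n' + T).Monic := monic_X_pow_add hTdeg
  have hRHSdeg : ((X : F[X]) ^ N n' + T).natDegree = N n' := by
    apply natDegree_eq_of_degree_eq_some
    rw [degree_add_eq_left_of_degree_lt (by rwa [degree_X_pow]), degree_X_pow]
  -- LHS is monic with degree card Δ
  have hLHSmonic : (∏ u ∈ Δ, (X - C u) : F[X]).Monic :=
    monic_prod_of_monic _ _ fun u _ => monic_X_sub_C u
  have hLHSdeg : (∏ u ∈ Δ, (X - C u) : F[X]).natDegree = Δ.card := by
    rw [natDegree_prod _ _ fun u _ => X_sub_C_ne_zero u]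
    simp
  -- divisibility
  have hdvd : (∏ u ∈ Δ, (X - C u) : F[X]) ∣ (X : F[X]) ^ N n' + T := by
    rw [Finset.prod_eq_multiset_prod]
    refine (Multiset.prod_X_sub_C_dvd_iff_le_roots hRHSmonic.ne_zero Δ.val).mpr ?_
    refine (Multiset.le_iff_subset Δ.nodup).mpr ?_
    intro u hu
    rw [mem_roots hRHSmonic.ne_zero]
    obtain ⟨w, hw, rfl⟩ := Finset.mem_image.mp hu
    simp only [hS, Finset.mem_filter] at hw
    have h0 := hroot w hw.2
    rw [Finset.sum_range_succ] at h0
    simp only [IsRoot, hT, eval_add, eval_pow, eval_X, eval_finset_sum]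
    rw [add_comm]
    exact h0
  exact (eq_of_monic_of_dvd_of_natDegree_le hLHSmonic hRHSmonic hdvd
    (by rw [hRHSdeg, hLHSdeg]; omega)).symm
end

section
/- Let q be a prime power and n a positive integer, and let Δ be the set of all elements (w^q - w)^{q-1} with w ∈ F_{q^n} \ F_q. Then in F_{q^n}[Y] one has ∏_{z ∈ F_{q^n}} (Y - (z+1)z^{q-1}) = Y^2 · ((Y^{q^n-1} - 1)/(Y^{(q^n-1)/(q-1)} - 1)) · ∏_{u ∈ Δ} (Y - u)^q. -/
open Polynomial
open Finset


lemma aux_roots_pow_sub_one (F : Type) [Field F] [Fintype F] [DecidableEq F] {d : ℕ} (hd : 0 < d)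
    (hdvd : d ∣ Fintype.card F - 1) :
    (X ^ d - 1 : F[X]) = ∏ c ∈ Finset.univ.filter (fun c : F => c ^ d = 1), (X - C c) ∧
      (Finset.univ.filter (fun c : F => c ^ d = 1)).card = d := by
  classical
  set N := Fintype.card F with hN
  have hN1 : 1 < N := Fintype.one_lt_card
  have hPne : (X ^ N - X : F[X]) ≠ 0 := FiniteField.X_pow_card_sub_X_ne_zero F hN1
  have hProots : (X ^ N - X : F[X]).roots = Finset.univ.val :=
    FiniteField.roots_X_pow_card_sub_X F
  -- Q := X^d - 1 divides X^N - X
  obtain ⟨k, hk⟩ := hdvd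
  have hQdvd : (X ^ d - 1 : F[X]) ∣ X ^ N - X := by
    have h1 : (X ^ d - 1 : F[X]) ∣ X ^ (N - 1) - 1 := by
      have := sub_dvd_pow_sub_pow (X ^ d : F[X]) 1 k
      simpa [← pow_mul, ← hk] using this
    have h2 : (X ^ (N - 1) - 1 : F[X]) ∣ X ^ N - X := by
      refine ⟨X, ?_⟩
      rw [sub_mul, one_mul, ← pow_succ]
      have hN' : N - 1 + 1 = N := by omega
      rw [hN']
    exact h1.trans h2
  have hPsplits : Splits (X ^ N - X : F[X]) := by
    rw [splits_iff_card_roots, hProots,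
      FiniteField.X_pow_card_sub_X_natDegree_eq F hN1]
    simp [Finset.card_univ, hN]
  have hQsplits : Splits (X ^ d - 1 : F[X]) :=
    hPsplits.of_dvd hPne hQdvd
  have hQmonic : (X ^ d - 1 : F[X]).Monic := by
    simpa using monic_X_pow_sub_C (1 : F) hd.ne'
  have hQne : (X ^ d - 1 : F[X]) ≠ 0 := hQmonic.ne_zero
  have hle : (X ^ d - 1 : F[X]).roots ≤ Finset.univ.val := by
    rw [← hProots]; exact roots.le_of_dvd hPne hQdvd
  have hnodup : (X ^ d - 1 : F[X]).roots.Nodup :=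
    Multiset.nodup_of_le hle Finset.univ.nodup
  have hdeg : (X ^ d - 1 : F[X]).natDegree = d := by
    simpa using natDegree_X_pow_sub_C (n := d) (r := (1 : F))
  have hcardroots : (X ^ d - 1 : F[X]).roots.card = d := by
    rw [splits_iff_card_roots.mp hQsplits, hdeg]
  have htf : (X ^ d - 1 : F[X]).roots.toFinset =
      Finset.univ.filter (fun c : F => c ^ d = 1) := by
    ext c
    simp only [Multiset.mem_toFinset, mem_roots hQne, IsRoot.def, eval_sub, eval_pow, eval_X,
      eval_one, sub_eq_zero, Finset.mem_filter, Finset.mem_univ, true_and]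
  have hval : (Finset.univ.filter (fun c : F => c ^ d = 1)).val = (X ^ d - 1 : F[X]).roots := by
    rw [← htf, Multiset.toFinset_val, Multiset.dedup_eq_self.mpr hnodup]
  constructor
  · rw [Finset.prod_eq_multiset_prod, hval]
    exact hQsplits.eq_prod_roots_of_monic hQmonic
  · rw [Finset.card_def, hval, hcardroots]

lemma aux_pow_surj_s11 (F : Type) [Field F] [Fintype F] [DecidableEq F] {a b : ℕ} (hb : 0 < b)
    (hab : a * b = Fintype.card F - 1) {c : F} (hc : c ^ b = 1) :
    ∃ t : F, t ≠ 0 ∧ t ^ a = c := by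
  have hc0 : c ≠ 0 := by
    intro h; rw [h, zero_pow hb.ne'] at hc; exact zero_ne_one hc
  obtain ⟨g, hg⟩ := IsCyclic.exists_generator (α := Fˣ)
  set c' : Fˣ := Units.mk0 c hc0 with hc'
  obtain ⟨k, hk⟩ : ∃ k : ℕ, g ^ k = c' := by
    have := hg c'
    rwa [← mem_powers_iff_mem_zpowers, Submonoid.mem_powers_iff] at this
  have horder : orderOf g = Fintype.card F - 1 := by
    rw [orderOf_eq_card_of_forall_mem_zpowers hg, Nat.card_eq_fintype_card, Fintype.card_units]
  have hcb : c' ^ b = 1 := by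
    ext
    push_cast [hc']
    exact hc
  have hdvd : (a * b) ∣ k * b := by
    rw [hab, ← horder]
    apply orderOf_dvd_of_pow_eq_one
    rw [pow_mul, hk, hcb]
  rcases Nat.eq_zero_or_pos a with ha | ha
  · -- a = 0 : then card - 1 = 0, impossible since 1 < card
    exfalso
    have h1 : 1 < Fintype.card F := Fintype.one_lt_card
    rw [ha, zero_mul] at hab
    omega
  have hak : a ∣ k := (mul_dvd_mul_iff_right (by omega : b ≠ 0)).mp hdvd
  obtain ⟨j, hj⟩ := hak
  refine ⟨(g ^ j : Fˣ), Units.ne_zero _, ?_⟩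
  have : (g ^ j) ^ a = c' := by rw [← pow_mul, mul_comm j a, ← hj, hk]
  calc ((g ^ j : Fˣ) : F) ^ a = (((g ^ j) ^ a : Fˣ) : F) := by push_cast; ring
    _ = c := by rw [this]; rfl

lemma aux_prod_nonzero (F : Type) [Field F] [Fintype F] [DecidableEq F] :
    (X ^ (Fintype.card F - 1) - 1 : F[X]) =
      ∏ c ∈ Finset.univ.filter (fun c : F => c ≠ 0), (X - C c) := by
  classical
  set N := Fintype.card F with hN
  have hN1 : 1 < N := Fintype.one_lt_card
  have hPne : (X ^ N - X : F[X]) ≠ 0 := FiniteField.X_pow_card_sub_X_ne_zero F hN1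
  have hProots : (X ^ N - X : F[X]).roots = Finset.univ.val :=
    FiniteField.roots_X_pow_card_sub_X F
  have hPsplits : Splits (X ^ N - X : F[X]) := by
    rw [splits_iff_card_roots, hProots,
      FiniteField.X_pow_card_sub_X_natDegree_eq F hN1]
    simp [Finset.card_univ, hN]
  have hPmonic : (X ^ N - X : F[X]).Monic := by
    apply monic_X_pow_sub
    rw [degree_X]
    exact_mod_cast hN1
  have hPeq : (X ^ N - X : F[X]) = ∏ c ∈ (Finset.univ : Finset F), (X - C c) := by
    rw [Finset.prod_eq_multiset_prod, ← hProots]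
    exact hPsplits.eq_prod_roots_of_monic hPmonic
  have hsplit : ∏ c ∈ (Finset.univ : Finset F), (X - C c)
      = (X - C 0) * ∏ c ∈ Finset.univ.filter (fun c : F => c ≠ 0), (X - C c) := by
    rw [Finset.filter_ne', ← Finset.mul_prod_erase Finset.univ _ (Finset.mem_univ (0:F))]
  have hX : (X ^ N - X : F[X]) = X * (X ^ (N - 1) - 1) := by
    rw [mul_sub, mul_one, ← pow_succ']
    have : N - 1 + 1 = N := by omega
    rw [this]
  apply mul_left_cancel₀ (X_ne_zero (R := F))
  rw [← hX, hPeq, hsplit, map_zero, sub_zero]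
/-- Corollary 8.3 (Cusick–Müller): `∏_{z ∈ F_{q^n}} (Y - (z+1)z^{q-1}) =
Y² ((Y^{q^n-1}-1)/(Y^{(q^n-1)/(q-1)}-1)) ∏_{u ∈ Δ} (Y - u)^q`, where
`Δ = {(w^q - w)^{q-1} : w ∈ F_{q^n} \ F_q}` and the quotient is exact (`/ₘ`). -/

theorem stmt_11 (p m : ℕ) (hp : p.Prime) (hm : 0 < m) (q : ℕ) (hq : q = p ^ m)
    (n : ℕ) (hn : 0 < n) (F : Type) [Field F] [Fintype F] [DecidableEq F]
    (hF : Fintype.card F = q ^ n) :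
    ∏ z ∈ (Finset.univ : Finset F), (X - C ((z + 1) * z ^ (q - 1))) =
      X ^ 2 * ((X ^ (q ^ n - 1) - 1) /ₘ (X ^ ((q ^ n - 1) / (q - 1)) - 1)) *
        ∏ u ∈ Finset.image (fun w : F => (w ^ q - w) ^ (q - 1))
            (Finset.univ.filter fun w : F => w ^ q ≠ w), (X - C u) ^ q := by
  classical
  haveI fp : Fact p.Prime := ⟨hp⟩
  have hq2 : 2 ≤ q := by
    rw [hq]
    calc 2 ≤ p := hp.two_le
      _ ≤ p ^ m := Nat.le_self_pow hm.ne' p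
  have hq1 : q - 1 ≠ 0 := by omega
  have hq0 : q ≠ 0 := by omega
  set N := q ^ n with hNdef
  have hcard : Fintype.card F = N := hF
  have hN1 : 1 < N := Nat.one_lt_pow hn.ne' (by omega)
  -- characteristic of F is p
  haveI hcp : CharP F p := by
    obtain ⟨k, hpr, hk⟩ := FiniteField.card F (ringChar F)
    have hpd : p ∣ (ringChar F) ^ (k : ℕ) := by
      rw [← hk, hcard, hNdef, hq, ← pow_mul]
      exact dvd_pow_self p (by positivity)
    have hrp : ringChar F = p :=
      ((Nat.prime_dvd_prime_iff_eq hp hpr).mp (hp.dvd_of_dvd_pow hpd)).symm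
    exact hrp ▸ ringChar.charP F
  have hfrob : ∀ a b : F, (a + b) ^ q = a ^ q + b ^ q := fun a b => by
    rw [hq]; exact add_pow_char_pow ..
  have hsub : ∀ a b : F, (a - b) ^ q = a ^ q - b ^ q := fun a b => by
    rw [hq]; exact sub_pow_char_pow ..
  have hzq : ∀ z : F, z ^ q = z ^ (q - 1) * z := fun z => by
    rw [← pow_succ]; congr 1; omega
  have hdvdqe : (q - 1) ∣ N - 1 := by
    simpa using Nat.sub_dvd_pow_sub_pow q 1 n
  set e := (N - 1) / (q - 1) with hedef
  have he : (q - 1) * e = N - 1 := Nat.mul_div_cancel' hdvdqe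
  have he0 : 0 < e := by
    rcases Nat.eq_zero_or_pos e with h | h
    · rw [h, mul_zero] at he; omega
    · exact h
  have hedvd : e ∣ N - 1 := Dvd.intro_left _ he
  have hpow_units : ∀ x : F, x ≠ 0 → x ^ (N - 1) = 1 := fun x hx => by
    rw [← hcard]; exact FiniteField.pow_card_sub_one_eq_one x hx
  set f : F → F := fun z => (z + 1) * z ^ (q - 1) with hfdef
  set Δ : Finset F := Finset.image (fun w : F => (w ^ q - w) ^ (q - 1))
      (Finset.univ.filter fun w : F => w ^ q ≠ w) with hΔdef
  -- basic facts about f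
  have hf0 : ∀ z : F, f z = 0 ↔ z = 0 ∨ z = -1 := by
    intro z
    rw [hfdef]
    simp only [mul_eq_zero, pow_eq_zero_iff hq1, add_eq_zero_iff_eq_neg, or_comm]
  have hz_ne : ∀ {z c : F}, c ≠ 0 → f z = c → z ≠ 0 := by
    intro z c hc hfz h0
    rw [h0] at hfz
    rw [hfdef] at hfz
    simp only [zero_pow hq1, mul_zero] at hfz
    exact hc hfz.symm
  have hz_to_v : ∀ {z c : F}, z ≠ 0 → f z = c → c * (z⁻¹) ^ q = z⁻¹ + 1 := by
    intro z c hz hfz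
    rw [← hfz, hfdef]
    simp only []
    rw [inv_pow, hzq z]
    have hzp : z ^ (q - 1) ≠ 0 := pow_ne_zero _ hz
    field_simp
    ring
  have hv_ne : ∀ {v c : F}, c * v ^ q = v + 1 → v ≠ 0 := by
    intro v c h h0
    rw [h0] at h
    simp only [zero_pow hq0, mul_zero, zero_add] at h
    exact zero_ne_one h
  have hv_to_z : ∀ {v c : F}, v ≠ 0 → c * v ^ q = v + 1 → f v⁻¹ = c := by
    intro v c hv h
    rw [hzq] at h
    rw [hfdef]
    simp only []
    rw [inv_pow]
    have hvp : v ^ (q - 1) ≠ 0 := pow_ne_zero _ hv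
    field_simp
    linear_combination -h
  -- uniqueness of fibers over non-(q-1)-powers
  have hLinj : ∀ c : F, c ^ e ≠ 1 → Function.Injective (fun v : F => c * v ^ q - v) := by
    intro c hce a b hab
    by_contra hne
    simp only [] at hab
    have hx : a - b ≠ 0 := sub_ne_zero.mpr hne
    have h1 : c * (a - b) ^ q = a - b := by
      rw [hsub]; linear_combination hab
    rw [hzq] at h1
    have h2 : c * (a - b) ^ (q - 1) = 1 := by
      apply mul_right_cancel₀ hx
      rw [one_mul]; linear_combination h1
    have h3 : c ^ e * (a - b) ^ ((q - 1) * e) = 1 := by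
      rw [pow_mul, ← mul_pow, h2, one_pow]
    rw [he, hpow_units _ hx, mul_one] at h3
    exact hce h3
  have hexu : ∀ c : F, c ≠ 0 → c ^ e ≠ 1 → ∃! z : F, f z = c := by
    intro c hc hce
    have hinj := hLinj c hce
    obtain ⟨v, hv⟩ := Finite.injective_iff_surjective.mp hinj 1
    simp only [] at hv
    have hveq : c * v ^ q = v + 1 := by linear_combination hv
    have hv0 : v ≠ 0 := hv_ne hveq
    refine ⟨v⁻¹, hv_to_z hv0 hveq, ?_⟩
    intro z hz
    have hz0 : z ≠ 0 := hz_ne hc hz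
    have h2 := hz_to_v hz0 hz
    have hziv : z⁻¹ = v := by
      apply hinj
      simp only []
      linear_combination h2 - hveq
    rw [← hziv, inv_inv]
  -- the number of solutions of x^q = x is exactly q
  have hS0 : (Finset.univ.filter fun x : F => x ^ q = x).card = q := by
    have hins : (Finset.univ.filter fun x : F => x ^ q = x) =
        insert (0 : F) (Finset.univ.filter fun x : F => x ^ (q - 1) = 1) := by
      ext x
      simp only [Finset.mem_filter, Finset.mem_univ, true_and, Finset.mem_insert]
      constructor
      · intro hx
        rcases eq_or_ne x 0 with h0 | h0
        · exact Or.inl h0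
        · refine Or.inr ?_
          apply mul_right_cancel₀ h0
          rw [one_mul, ← hzq, hx]
      · rintro (rfl | hx)
        · exact zero_pow hq0
        · rw [hzq, hx, one_mul]
    rw [hins, Finset.card_insert_of_notMem (by
      simp only [Finset.mem_filter, Finset.mem_univ, true_and]
      rw [zero_pow hq1]
      exact zero_ne_one)]
    have := (aux_roots_pow_sub_one F (d := q - 1) (by omega) (by rw [hcard]; exact hdvdqe)).2
    rw [this]
    omega
  -- fiber cardinality over Δ elements
  have hcount : ∀ w : F, w ^ q ≠ w →
      (Finset.univ.filter fun z : F => f z = (w ^ q - w) ^ (q - 1)).card = q := by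
    intro w hw
    set t : F := w ^ q - w with ht
    have ht0 : t ≠ 0 := sub_ne_zero.mpr hw
    set c : F := t ^ (q - 1) with hc
    have hc0 : c ≠ 0 := pow_ne_zero _ ht0
    have hwq : w ^ q = t + w := by rw [ht]; ring
    have step1 : (Finset.univ.filter fun z : F => f z = c).card =
        (Finset.univ.filter fun v : F => c * v ^ q = v + 1).card := by
      refine Finset.card_bij' (fun z _ => z⁻¹) (fun v _ => v⁻¹) ?_ ?_ ?_ ?_
      · intro z hz
        simp only [Finset.mem_filter, Finset.mem_univ, true_and] at hz ⊢
        exact hz_to_v (hz_ne hc0 hz) hz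
      · intro v hv
        simp only [Finset.mem_filter, Finset.mem_univ, true_and] at hv ⊢
        exact hv_to_z (hv_ne hv) hv
      · intro z hz
        simp
      · intro v hv
        simp
    have step2 : (Finset.univ.filter fun v : F => c * v ^ q = v + 1).card =
        (Finset.univ.filter fun x : F => x ^ q = x).card := by
      refine Finset.card_bij' (fun v _ => t * v - w) (fun x _ => (w + x) * t⁻¹) ?_ ?_ ?_ ?_
      · intro v hv
        simp only [Finset.mem_filter, Finset.mem_univ, true_and] at hv ⊢
        rw [hsub, mul_pow, hzq t]
        linear_combination t * hv + hwq
      · intro x hx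
        simp only [Finset.mem_filter, Finset.mem_univ, true_and] at hx ⊢
        rw [mul_pow, hfrob w x, hx, inv_pow, hzq t, hwq, hc]
        field_simp
        ring
      · intro v hv
        field_simp
        ring
      · intro x hx
        field_simp
        ring
    rw [step1, step2, hS0]
  -- Δ membership facts
  have hΔprop : ∀ u : F, u ∈ Δ → u ≠ 0 ∧ u ^ e = 1 := by
    intro u hu
    rw [hΔdef, Finset.mem_image] at hu
    obtain ⟨w, hw, rfl⟩ := hu
    simp only [Finset.mem_filter, Finset.mem_univ, true_and] at hw
    have ht0 : w ^ q - w ≠ 0 := sub_ne_zero.mpr hw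
    refine ⟨pow_ne_zero _ ht0, ?_⟩
    rw [← pow_mul, he]
    exact hpow_units _ ht0
  have hC_to_Δ : ∀ z : F, f z ≠ 0 → (f z) ^ e = 1 → f z ∈ Δ := by
    intro z hfz0 hfze
    have hz0 : z ≠ 0 := hz_ne hfz0 rfl
    have hsol : f z * (z⁻¹) ^ q = z⁻¹ + 1 := hz_to_v hz0 rfl
    obtain ⟨t, ht0, htc⟩ := aux_pow_surj_s11 F he0 (by rw [hcard]; exact he) hfze
    set w : F := t * z⁻¹ with hwdef
    have hwq : w ^ q = w + t := by
      rw [hwdef, mul_pow, hzq t]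
      linear_combination t * hsol + t * (z⁻¹) ^ q * htc
    have hwne : w ^ q ≠ w := by
      rw [hwq]
      intro h
      exact ht0 (by linear_combination h)
    rw [hΔdef, Finset.mem_image]
    refine ⟨w, Finset.mem_filter.mpr ⟨Finset.mem_univ _, hwne⟩, ?_⟩
    rw [hwq]
    simp only [add_sub_cancel_left]
    exact htc
  -- now assemble the products
  have hgoalL : ∏ z ∈ (univ : Finset F), (X - C ((z + 1) * z ^ (q - 1))) =
      ∏ z ∈ (univ : Finset F), (X - C (f z)) := rfl
  rw [hgoalL, ← Finset.prod_filter_mul_prod_filter_not (univ : Finset F) (fun z => f z = 0)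
      (fun z => X - C (f z)),
    ← Finset.prod_filter_mul_prod_filter_not (univ.filter fun z : F => ¬ f z = 0)
      (fun z => (f z) ^ e ≠ 1) (fun z => X - C (f z))]
  set B : Finset F := univ.filter fun c : F => c ≠ 0 ∧ c ^ e ≠ 1 with hBdef
  -- the zero part
  have hzero_set : (univ.filter fun z : F => f z = 0) = ({0, -1} : Finset F) := by
    ext z
    simp [hf0 z]
  have hzero_prod : (∏ z ∈ univ.filter (fun z : F => f z = 0), (X - C (f z))) = X ^ 2 := by
    have hcongr : ∀ z ∈ univ.filter (fun z : F => f z = 0), X - C (f z) = X := by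
      intro z hz
      rw [Finset.mem_filter] at hz
      rw [hz.2, map_zero, sub_zero]
    rw [Finset.prod_congr rfl hcongr, Finset.prod_const, hzero_set]
    congr 1
    rw [Finset.card_insert_of_notMem (by
      simp only [Finset.mem_singleton]
      intro h
      exact (neg_ne_zero.mpr (one_ne_zero)) h.symm), Finset.card_singleton]
  -- the B part
  have hB_prod : (∏ z ∈ (univ.filter fun z : F => ¬ f z = 0).filter
      (fun z => (f z) ^ e ≠ 1), (X - C (f z))) = ∏ c ∈ B, (X - C c) := by
    refine Finset.prod_bij (fun z _ => f z) ?_ ?_ ?_ ?_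
    · intro z hz
      simp only [Finset.mem_filter, Finset.mem_univ, true_and] at hz
      simp only [hBdef, Finset.mem_filter, Finset.mem_univ, true_and]
      exact ⟨hz.1, hz.2⟩
    · intro a ha b hb hab
      simp only [Finset.mem_filter, Finset.mem_univ, true_and] at ha hb
      obtain ⟨z0, _, huniq⟩ := hexu (f a) ha.1 ha.2
      exact (huniq a rfl).trans (huniq b hab.symm).symm
    · intro c hc
      simp only [hBdef, Finset.mem_filter, Finset.mem_univ, true_and] at hc
      obtain ⟨z, hz, _⟩ := hexu c hc.1 hc.2
      refine ⟨z, ?_, hz⟩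
      simp only [Finset.mem_filter, Finset.mem_univ, true_and, hz]
      exact ⟨hc.1, hc.2⟩
    · intro z hz
      rfl
  -- the middle factor equals the B product
  have hmonic : (X ^ e - 1 : F[X]).Monic := by
    simpa using monic_X_pow_sub_C (1 : F) he0.ne'
  have hM : (X ^ (N - 1) - 1 : F[X]) /ₘ (X ^ e - 1) = ∏ c ∈ B, (X - C c) := by
    have h1 := aux_prod_nonzero F
    rw [hcard] at h1
    have h2 := (aux_roots_pow_sub_one F (d := e) he0 (by rw [hcard]; exact hedvd)).1
    have hsplit : (∏ c ∈ univ.filter (fun c : F => c ≠ 0), (X - C c)) =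
        (∏ c ∈ (univ.filter fun c : F => c ≠ 0).filter (fun c => c ^ e = 1), (X - C c)) *
        ∏ c ∈ (univ.filter fun c : F => c ≠ 0).filter (fun c => ¬ c ^ e = 1), (X - C c) :=
      (Finset.prod_filter_mul_prod_filter_not _ _ _).symm
    have hEeq : (univ.filter fun c : F => c ≠ 0).filter (fun c => c ^ e = 1) =
        univ.filter (fun c : F => c ^ e = 1) := by
      ext c
      simp only [Finset.mem_filter, Finset.mem_univ, true_and]
      constructor
      · exact fun h => h.2
      · intro h
        refine ⟨fun h0 => ?_, h⟩
        rw [h0, zero_pow he0.ne'] at h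
        exact zero_ne_one h
    have hBeq : (univ.filter fun c : F => c ≠ 0).filter (fun c => ¬ c ^ e = 1) = B := by
      ext c
      simp only [hBdef, Finset.mem_filter, Finset.mem_univ, true_and, ne_eq]
      try tauto
    have hfact : (X ^ (N - 1) - 1 : F[X]) = (X ^ e - 1) * ∏ c ∈ B, (X - C c) := by
      rw [h1, hsplit, hEeq, hBeq, ← h2]
    rw [hfact, mul_divByMonic_cancel_left _ hmonic]
  -- the Δ part
  have hD : (∏ z ∈ (univ.filter fun z : F => ¬ f z = 0).filter
      (fun z => ¬ (f z) ^ e ≠ 1), (X - C (f z))) = ∏ u ∈ Δ, (X - C u) ^ q := by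
    set s₂ := (univ.filter fun z : F => ¬ f z = 0).filter (fun z => ¬ (f z) ^ e ≠ 1) with hs₂
    have hmaps : ∀ z ∈ s₂, f z ∈ Δ := by
      intro z hz
      simp only [hs₂, Finset.mem_filter, Finset.mem_univ, true_and, not_not] at hz
      exact hC_to_Δ z hz.1 hz.2
    rw [← Finset.prod_fiberwise_of_maps_to hmaps (fun z => X - C (f z))]
    refine Finset.prod_congr rfl ?_
    intro u hu
    have hcongr : ∀ z ∈ s₂.filter (fun z => f z = u), X - C (f z) = X - C u := by
      intro z hz
      rw [(Finset.mem_filter.mp hz).2]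
    rw [Finset.prod_congr rfl hcongr, Finset.prod_const]
    congr 1
    have hfil : s₂.filter (fun z => f z = u) = univ.filter (fun z : F => f z = u) := by
      ext z
      simp only [hs₂, Finset.mem_filter, Finset.mem_univ, true_and, not_not]
      constructor
      · exact fun h => h.2
      · intro h
        obtain ⟨hu0, hue⟩ := hΔprop u hu
        refine ⟨⟨?_, ?_⟩, h⟩
        · rw [h]; exact hu0
        · rw [h]; exact hue
    rw [hfil]
    rw [hΔdef] at hu
    obtain ⟨w, hw, rfl⟩ := Finset.mem_image.mp hu
    exact hcount w (by simpa using (Finset.mem_filter.mp hw).2)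
  rw [hzero_prod, hB_prod, hD, hM, mul_assoc]
end

section
/- Let q = 2^k and Q = 2^ℓ with k, ℓ positive integers, and let m = 2^{min(ord_2(k), ord_2(ℓ))}. For α ∈ F_q, let β = Tr_{F_q/F_{2^m}}(Tr_{F_Q/F_2}(α)), where Tr_{F_Q/F_2}(X) denotes the polynomial X + X^2 + X^4 + ... + X^{Q/2} evaluated at α. Then: (1) if ord_2(k) < ord_2(ℓ) then β = 0; (2) if ord_2(k) ≥ ord_2(ℓ) then β = Tr_{F_q/F_2}(α). -/
section aux

variable {F : Type*} [AddCommMonoid F]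

/-- Decompose a sum over `range (m*c)` into blocks of size `m`. -/
lemma aux_sum_blocks (f : ℕ → F) (m c : ℕ) :
    ∑ j ∈ Finset.range (m * c), f j =
      ∑ t ∈ Finset.range c, ∑ u ∈ Finset.range m, f (m * t + u) := by
  induction c with
  | zero => simp
  | succ c ih =>
      rw [Nat.mul_succ, Finset.sum_range_add, ih, Finset.sum_range_succ]

end aux

/-- A sum over a full period of a periodic function is shift-invariant. -/
lemma aux_sum_shift {F : Type*} [AddCommGroup F] (g : ℕ → F) (N : ℕ)
    (hper : ∀ n, g (n + N) = g n) (t : ℕ) :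
    ∑ i ∈ Finset.range N, g (i + t) = ∑ i ∈ Finset.range N, g i := by
  induction t with
  | zero => simp
  | succ t ih =>
      have h1 : ∑ i ∈ Finset.range N, g (i + (t + 1)) =
          ∑ i ∈ Finset.range N, g ((i + 1) + t) := by
        apply Finset.sum_congr rfl; intro i _; ring_nf
      have key : ∀ h : ℕ → F, h N = h 0 →
          ∑ i ∈ Finset.range N, h (i + 1) = ∑ i ∈ Finset.range N, h i := by
        intro h hh
        have e1 := Finset.sum_range_succ' h N
        have e2 := Finset.sum_range_succ h N
        rw [e1, hh] at e2
        exact add_right_cancel e2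
      rw [h1, key (fun i => g (i + t)) (by simpa [Nat.add_comm] using hper t), ih]

/-- Lemma 6.3: with `q = 2^k`, `Q = 2^ℓ`, `m = 2^{min(ord₂ k, ord₂ ℓ)}` and
`β = Tr_{F_q/F_{2^m}}(Tr_{F_Q/F_2}(α))` (traces written as polynomial expressions),
if `ord₂ k < ord₂ ℓ` then `β = 0`, and if `ord₂ k ≥ ord₂ ℓ` then `β = Tr_{F_q/F_2}(α)`. -/
theorem stmt_13 (k ℓ : ℕ) (hk : 0 < k) (hl : 0 < ℓ) (q Q m : ℕ)
    (hq : q = 2 ^ k) (hQ : Q = 2 ^ ℓ)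
    (hm : m = 2 ^ min (padicValNat 2 k) (padicValNat 2 ℓ))
    (F : Type) [Field F] [Fintype F] (hF : Fintype.card F = q) (α : F) :
    (padicValNat 2 k < padicValNat 2 ℓ →
      ∑ i ∈ Finset.range (k / m), (∑ j ∈ Finset.range ℓ, α ^ 2 ^ j) ^ (2 ^ m) ^ i = 0) ∧
    (padicValNat 2 ℓ ≤ padicValNat 2 k →
      ∑ i ∈ Finset.range (k / m), (∑ j ∈ Finset.range ℓ, α ^ 2 ^ j) ^ (2 ^ m) ^ i =
        ∑ j ∈ Finset.range k, α ^ 2 ^ j) := by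
  haveI : Fact (Nat.Prime 2) := ⟨Nat.prime_two⟩
  -- characteristic 2
  have h2 : (2 : F) = 0 := by
    have hcard : ((Fintype.card F : ℕ) : F) = 0 := Nat.cast_card_eq_zero F
    rw [hF, hq] at hcard
    push_cast at hcard
    exact pow_eq_zero_iff hk.ne' |>.mp hcard
  haveI hchar : CharP F 2 := (CharP.charP_iff_prime_eq_zero Nat.prime_two).2 h2
  haveI : ExpChar F 2 := ExpChar.prime Nat.prime_two
  set a := padicValNat 2 k with ha
  set b := padicValNat 2 ℓ with hb
  -- divisibilities
  have hmk : m ∣ k := by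
    rw [hm]
    exact dvd_trans (pow_dvd_pow 2 (min_le_left a b)) pow_padicValNat_dvd
  have hml : m ∣ ℓ := by
    rw [hm]
    exact dvd_trans (pow_dvd_pow 2 (min_le_right a b)) pow_padicValNat_dvd
  set N := k / m with hN
  set c := ℓ / m with hc
  have hkN : k = m * N := (Nat.mul_div_cancel' hmk).symm
  have hlc : ℓ = m * c := (Nat.mul_div_cancel' hml).symm
  -- iterated Frobenius manipulation
  have hp2 : ∀ (x : F) (e e' : ℕ), (x ^ 2 ^ e) ^ 2 ^ e' = x ^ 2 ^ (e + e') := by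
    intro x e e'
    rw [← pow_mul, ← pow_add]
  have hpowexp : ∀ i : ℕ, ((2 : ℕ) ^ m) ^ i = 2 ^ (m * i) := fun i => (pow_mul 2 m i).symm
  -- the partial trace S and its iterates g
  set S : F := ∑ u ∈ Finset.range m, α ^ 2 ^ u with hS
  set g : ℕ → F := fun n => S ^ 2 ^ (m * n) with hg
  -- α ^ 2 ^ k = α
  have hα : α ^ 2 ^ k = α := by
    have := FiniteField.pow_card α
    rwa [hF, hq] at this
  have hSN : S ^ 2 ^ (m * N) = S := by
    rw [hS, sum_pow_char_pow]
    apply Finset.sum_congr rfl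
    intro u _
    rw [hp2, ← hkN, pow_add, mul_comm ((2:ℕ) ^ u) _, pow_mul, hα]
  -- periodicity of g with period N
  have hgN : ∀ n, g (n + N) = g n := by
    intro n
    simp only [hg]
    calc S ^ 2 ^ (m * (n + N)) = (S ^ 2 ^ (m * N)) ^ 2 ^ (m * n) := by
          rw [hp2]; congr 1; congr 1; ring
      _ = S ^ 2 ^ (m * n) := by rw [hSN]
  -- inner trace as sum of g's
  have hT : (∑ j ∈ Finset.range ℓ, α ^ 2 ^ j) = ∑ t ∈ Finset.range c, g t := by
    rw [hlc, aux_sum_blocks (fun j => α ^ 2 ^ j) m c]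
    apply Finset.sum_congr rfl
    intro t _
    simp only [hg, hS]
    rw [sum_pow_char_pow]
    apply Finset.sum_congr rfl
    intro u _
    rw [hp2, Nat.add_comm u (m * t)]
  -- full trace as sum of g's
  have hTr : (∑ j ∈ Finset.range k, α ^ 2 ^ j) = ∑ i ∈ Finset.range N, g i := by
    rw [hkN, aux_sum_blocks (fun j => α ^ 2 ^ j) m N]
    apply Finset.sum_congr rfl
    intro i _
    simp only [hg, hS]
    rw [sum_pow_char_pow]
    apply Finset.sum_congr rfl
    intro u _
    rw [hp2, Nat.add_comm u (m * i)]
  -- β = c • Tr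
  have hbeta : ∑ i ∈ Finset.range N, (∑ j ∈ Finset.range ℓ, α ^ 2 ^ j) ^ (2 ^ m) ^ i =
      c • ∑ j ∈ Finset.range k, α ^ 2 ^ j := by
    calc ∑ i ∈ Finset.range N, (∑ j ∈ Finset.range ℓ, α ^ 2 ^ j) ^ (2 ^ m) ^ i
        = ∑ i ∈ Finset.range N, ∑ t ∈ Finset.range c, g (t + i) := by
          apply Finset.sum_congr rfl
          intro i _
          rw [hpowexp, hT, sum_pow_char_pow]
          apply Finset.sum_congr rfl
          intro t _
          simp only [hg]
          rw [hp2]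
          congr 1; congr 1; ring
      _ = ∑ t ∈ Finset.range c, ∑ i ∈ Finset.range N, g (i + t) := by
          rw [Finset.sum_comm]
          apply Finset.sum_congr rfl; intro t _
          apply Finset.sum_congr rfl; intro i _
          rw [Nat.add_comm]
      _ = ∑ t ∈ Finset.range c, ∑ i ∈ Finset.range N, g i := by
          apply Finset.sum_congr rfl
          intro t _
          exact aux_sum_shift g N hgN t
      _ = c • ∑ i ∈ Finset.range N, g i := by
          rw [Finset.sum_const, Finset.card_range]
      _ = c • ∑ j ∈ Finset.range k, α ^ 2 ^ j := by rw [hTr]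
  have h2smul : (2 : ℕ) • (∑ j ∈ Finset.range k, α ^ 2 ^ j) = 0 := by
    rw [two_smul]
    exact CharTwo.add_self_eq_zero _
  constructor
  · -- a < b : c is even, so β = 0
    intro hab
    have hmin : min a b = a := min_eq_left hab.le
    have h2a : (2:ℕ) ^ a ∣ ℓ := by
      have := hml; rwa [hm, hmin] at this
    have hceven : 2 ∣ c := by
      rw [hc, hm, hmin]
      rw [Nat.dvd_div_iff_mul_dvd h2a]
      calc (2:ℕ) ^ a * 2 = 2 ^ (a + 1) := (pow_succ 2 a).symm
        _ ∣ 2 ^ b := pow_dvd_pow 2 hab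
        _ ∣ ℓ := pow_padicValNat_dvd
    obtain ⟨d, hd⟩ := hceven
    rw [hbeta, hd, mul_comm 2 d, mul_smul, h2smul, smul_zero]
  · -- b ≤ a : c is odd, so β = Tr
    intro hba
    have hmin : min a b = b := min_eq_right hba
    have h2b : (2:ℕ) ^ b ∣ ℓ := by
      have := hml; rwa [hm, hmin] at this
    have hcodd : ¬ 2 ∣ c := by
      rw [hc, hm, hmin]
      intro hdvd
      rw [Nat.dvd_div_iff_mul_dvd h2b] at hdvd
      rw [← pow_succ] at hdvd
      exact pow_succ_padicValNat_not_dvd hl.ne' hdvd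
    obtain ⟨d, hd⟩ := Nat.odd_iff.mpr (Nat.two_dvd_ne_zero.mp hcodd)
    rw [hbeta, hd, add_smul, one_smul, mul_comm 2 d, mul_smul, h2smul, smul_zero, zero_add]
end

section
/- Let q be a prime power and let w ∈ F_{q^n} \ F_q, and set u = (w^q - w)^{q-1}. Then Σ_{i=1}^{n} u^{(q^{i-1}-1)/(q-1)} = 0. -/
/-- From the proof of Lemma 8.4: for `w ∈ F_{q^n} \ F_q` and `u = (w^q - w)^{q-1}`,
one has `Σ_{i=1}^n u^{(q^{i-1}-1)/(q-1)} = 0`. -/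
theorem stmt_14 (p m : ℕ) (hp : p.Prime) (hm : 0 < m) (q : ℕ) (hq : q = p ^ m)
    (n : ℕ) (hn : 0 < n) (F : Type) [Field F] [Fintype F]
    (hF : Fintype.card F = q ^ n) (w : F) (hw : w ^ q ≠ w) :
    ∑ i ∈ Finset.range n, ((w ^ q - w) ^ (q - 1)) ^ ((q ^ i - 1) / (q - 1)) = 0 := by
  have hv : w ^ q - w ≠ 0 := sub_ne_zero.mpr hw
  have hq2 : 2 ≤ q := by
    subst hq
    calc 2 ≤ p := hp.two_le
    _ ≤ p ^ m := Nat.le_self_pow hm.ne' p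
  -- characteristic
  obtain ⟨p', hp'⟩ := CharP.exists F
  haveI := hp'
  obtain ⟨k, hpk, hcard⟩ := FiniteField.card F p'
  have hpp : p' = p := by
    have h1 : p' ∣ q ^ n := by
      rw [← hF, hcard]
      exact dvd_pow_self p' k.2.ne'
    have h2 : p' ∣ p := by
      rw [hq] at h1
      exact hpk.dvd_of_dvd_pow (hpk.dvd_of_dvd_pow h1)
    exact (Nat.prime_dvd_prime_iff_eq hpk hp).mp h2
  subst hpp
  haveI := Fact.mk hp
  -- main pointwise identity
  have key : ∀ i, ((w ^ q - w) ^ (q - 1)) ^ ((q ^ i - 1) / (q - 1))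
      = (w ^ q ^ (i + 1) - w ^ q ^ i) * (w ^ q - w)⁻¹ := by
    intro i
    have hdvd : (q - 1) ∣ q ^ i - 1 := by
      simpa using Nat.sub_dvd_pow_sub_pow q 1 i
    rw [← pow_mul, Nat.mul_div_cancel' hdvd]
    have h1 : 1 ≤ q ^ i := Nat.one_le_pow _ _ (by omega)
    rw [pow_sub₀ _ hv h1, pow_one]
    congr 1
    have : (w ^ q - w) ^ q ^ i = (w ^ q) ^ q ^ i - w ^ q ^ i := by
      have hqi : q ^ i = p' ^ (m * i) := by rw [hq, ← pow_mul]
      rw [hqi]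
      exact sub_pow_char_pow (w ^ q) w (m * i)
    rw [this, ← pow_mul, ← pow_succ']
  simp_rw [key]
  rw [← Finset.sum_mul, Finset.sum_range_sub (fun i => w ^ q ^ i)]
  have : w ^ q ^ n = w := by rw [← hF]; exact FiniteField.pow_card w
  simp [this]
end

section
/- Let q be a prime power and f(X) ∈ F_{q^2}[X]. Suppose γ ∈ μ_{q+1} and that s is an integer with s ≡ 0 (mod q+1). If g(X) = X^s (α^q X^t - 1)/(X^t - α) with gcd(t, q+1) = 1 and α ∈ F_{q^2}^* \ μ_{q+1}, then for every β ∈ μ_{q+1}, g(β) lies in μ_{q+1}. -/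
/-- Direction of Lemma 4.2: when `s ≡ 0 (mod q+1)`, the map
`g(X) = X^s(α^q X^t - 1)/(X^t - α)` sends every `(q+1)`-th root of unity to a
`(q+1)`-th root of unity. -/
theorem stmt_15 (p n : ℕ) (hp : p.Prime) (hn : 0 < n) (q : ℕ) (hq : q = p ^ n)
    (F : Type) [Field F] [Fintype F] (hF : Fintype.card F = q ^ 2)
    (f : Polynomial F) (γ : F) (hγ : γ ^ (q + 1) = 1)
    (s : ℤ) (hs : ((q : ℤ) + 1) ∣ s) (t : ℕ) (ht : 0 < t)
    (hgcd : Nat.gcd t (q + 1) = 1) (α : F) (hα0 : α ≠ 0) (hα : α ^ (q + 1) ≠ 1) :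
    ∀ β : F, β ^ (q + 1) = 1 →
      (β ^ s * (α ^ q * β ^ t - 1) / (β ^ t - α)) ^ (q + 1) = 1 := by
  haveI : Fact p.Prime := ⟨hp⟩
  -- characteristic
  obtain ⟨p', hp'⟩ := CharP.exists F
  have hp'prime : p'.Prime := CharP.char_is_prime F p'
  have hdvd : p' ∣ q ^ 2 := by
    rw [← hF]
    exact (CharP.cast_eq_zero_iff F p' _).mp (by exact_mod_cast Nat.cast_card_eq_zero F)
  have hpp : p' = p := by
    have h1 : p' ∣ q := hp'prime.dvd_of_dvd_pow hdvd
    rw [hq] at h1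
    exact (Nat.prime_dvd_prime_iff_eq hp'prime hp).mp (hp'prime.dvd_of_dvd_pow h1)
  subst hpp
  -- frobenius ring hom x ↦ x^q is additive
  have frob : ∀ a b : F, (a - b) ^ q = a ^ q - b ^ q := by
    intro a b
    have := map_sub (iterateFrobenius F p' n) a b
    simpa [iterateFrobenius_def, hq] using this
  have hc : ∀ a : F, a ^ q ^ 2 = a := by
    intro a; rw [← hF]; exact FiniteField.pow_card a
  intro β hβ
  have hβ0 : β ≠ 0 := by
    intro h; rw [h, zero_pow (Nat.succ_ne_zero q)] at hβ; exact zero_ne_one hβ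
  -- β ^ s = 1
  obtain ⟨k, hk⟩ := hs
  have hβs : β ^ s = 1 := by
    rw [hk, zpow_mul]
    have : (β : F) ^ ((q : ℤ) + 1) = 1 := by
      rw [show ((q : ℤ) + 1) = ((q + 1 : ℕ) : ℤ) by push_cast; ring, zpow_natCast, hβ]
    rw [this, one_zpow]
  rw [hβs, one_mul]
  set y : F := β ^ t with hy
  have hy1 : y ^ (q + 1) = 1 := by rw [hy, ← pow_mul, mul_comm, pow_mul, hβ, one_pow]
  have hy0 : y ≠ 0 := pow_ne_zero t hβ0
  have hyq : y ^ q * y = 1 := by rw [← pow_succ]; exact hy1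
  -- denominator and numerator nonzero
  have hD : β ^ t - α ≠ 0 := by
    intro h
    have : y = α := by rw [hy]; linear_combination h
    rw [← this] at hα; exact hα hy1
  have hN : α ^ q * β ^ t - 1 ≠ 0 := by
    intro h
    have hya : α ^ q * y = 1 := by rw [hy]; linear_combination h
    have : α ^ (q + 1) = 1 := by
      have h2 : (α ^ q * y) ^ (q + 1) = 1 := by rw [hya, one_pow]
      have h3 : (α ^ q) ^ (q + 1) * y ^ (q + 1) = 1 := by rw [← mul_pow]; exact h2
      rw [hy1, mul_one, ← pow_mul] at h3
      have h4 : α ^ (q * (q + 1)) = α ^ (q ^ 2) * α ^ q := by ring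
      rw [h4, hc] at h3
      rw [pow_succ]
      -- h3 : α * α ^ q = 1
      calc α ^ q * α = α * α ^ q := by ring
        _ = 1 := h3
    exact hα this
  -- frobenius computations
  have hNq : (α ^ q * y - 1) ^ q = α * y ^ q - 1 := by
    rw [frob, one_pow, mul_pow, ← pow_mul, ← pow_two, hc]
  have hDq : (y - α) ^ q = y ^ q - α ^ q := frob y α
  -- main computation
  rw [div_pow]
  rw [div_eq_one_iff_eq (pow_ne_zero _ hD)]
  have hy' : (y : F) - α = β ^ t - α := rfl
  rw [show (β ^ t : F) = y from rfl] at *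
  rw [pow_succ, pow_succ, hNq, hDq]
  -- substitute y ^ q = y⁻¹ essentially; use hyq : y^q * y = 1
  have hyqe : y ^ q = y⁻¹ := by
    field_simp
    linear_combination hyq
  rw [hyqe]
  field_simp
  ring
end
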